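/- arXiv:1306.3788 — 12 statements merged into one kernel-verified Lean document; each statement's English description precedes it below -/
import Mathlib

section
/- If a divisibility | on a commutative ring A admits cancellation (i.e., 0∤c and ac|bc imply a|b), then the support I(|) = {a : 0|a} is a prime ideal of A. -/
def IsDivisibility {A : Type*} [CommRing A] (D : A → A → Prop) : Prop :=
  (∀ a, D a a) ∧ (∀ a b c : A, D a b → D b c → D a c) ∧
  (∀ a b c : A, D a b → D a c → D a (b - c)) ∧
  (∀ a b c : A, D a b → D (a * c) (b * c)) ∧ ¬ D 0 1

theorem stmt_2 {A : Type*} [CommRing A] (D : A → A → Prop) (hD : IsDivisibility D)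
    (hcanc : ∀ a b c : A, ¬ D 0 c → D (a * c) (b * c) → D a b)
    (I : Ideal A) (hI : ∀ a, a ∈ I ↔ D 0 a) :
    I.IsPrime := by
  obtain ⟨_, _, _, _, h01⟩ := hD
  constructor
  · intro h
    exact h01 ((hI 1).mp (h ▸ Submodule.mem_top))
  · intro a b hab
    by_contra h
    push_neg at h
    obtain ⟨ha, hb⟩ := h
    exact ha ((hI a).mpr (hcanc 0 a b (fun h0 => hb ((hI b).mpr h0))
      (by simpa using (hI (a * b)).mp hab)))
end

section
/- Let A be an integral domain with fraction field F, and let | be a divisibility on A with cancellation and support I(|) = {0}. Then B := {b/a : a, b ∈ A, a ≠ 0, a|b} ∪ {0} is a subring of F. -/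
theorem stmt_3 {A F : Type*} [CommRing A] [IsDomain A] [Field F] [Algebra A F]
    [IsFractionRing A F] (D : A → A → Prop) (hD : IsDivisibility D)
    (hcanc : ∀ a b c : A, ¬ D 0 c → D (a * c) (b * c) → D a b)
    (hsupp : ∀ a : A, D 0 a → a = 0) :
    ∃ S : Subring F, (S : Set F) =
      {x : F | x = 0 ∨ ∃ a b : A, a ≠ 0 ∧ D a b ∧
        x = algebraMap A F b / algebraMap A F a} := by
  obtain ⟨hrefl, htrans, hsub, hmul, h01⟩ := hD
  have hD0 : ∀ a : A, D a 0 := fun a => by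
    simpa using hsub a a a (hrefl a) (hrefl a)
  have hinj : Function.Injective (algebraMap A F) := IsFractionRing.injective A F
  have hne : ∀ a : A, a ≠ 0 → (algebraMap A F) a ≠ 0 := fun a ha => by
    simpa using (map_ne_zero_iff _ hinj).mpr ha
  set T : Set F := {x : F | x = 0 ∨ ∃ a b : A, a ≠ 0 ∧ D a b ∧
      x = algebraMap A F b / algebraMap A F a} with hT
  have hone : (1 : F) ∈ T := Or.inr ⟨1, 1, one_ne_zero, hrefl 1, by simp⟩
  have hzero : (0 : F) ∈ T := Or.inl rfl
  have hmulm : ∀ {x y : F}, x ∈ T → y ∈ T → x * y ∈ T := by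
    rintro x y (rfl | ⟨a, b, ha, hab, rfl⟩) hy
    · exact Or.inl (by simp)
    rcases hy with rfl | ⟨c, d, hc, hcd, rfl⟩
    · exact Or.inl (by simp)
    refine Or.inr ⟨a * c, b * d, mul_ne_zero ha hc, ?_, ?_⟩
    · exact htrans _ _ _ (hmul a b c hab)
        (by simpa [mul_comm] using hmul c d b hcd)
    · rw [map_mul, map_mul, div_mul_div_comm]
  have haddm : ∀ {x y : F}, x ∈ T → y ∈ T → x + y ∈ T := by
    rintro x y (rfl | ⟨a, b, ha, hab, rfl⟩) hy
    · simpa using hy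
    rcases hy with rfl | ⟨c, d, hc, hcd, rfl⟩
    · exact Or.inr ⟨a, b, ha, hab, by simp⟩
    refine Or.inr ⟨a * c, b * c + a * d, mul_ne_zero ha hc, ?_, ?_⟩
    · have h1 : D (a * c) (b * c) := hmul a b c hab
      have h2 : D (a * c) (a * d) := by simpa [mul_comm] using hmul c d a hcd
      have h3 : D (a * c) (-(a * d)) := by
        simpa using hsub _ _ _ (hD0 (a * c)) h2
      simpa [sub_neg_eq_add] using hsub _ _ _ h1 h3
    · have ha' := hne a ha
      have hc' := hne c hc
      field_simp
      simp only [map_mul, map_add]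
      ring
  have hnegm : ∀ {x : F}, x ∈ T → -x ∈ T := by
    rintro x (rfl | ⟨a, b, ha, hab, rfl⟩)
    · exact Or.inl (by simp)
    refine Or.inr ⟨a, -b, ha, ?_, by rw [map_neg, neg_div]⟩
    simpa using hsub a 0 b (hD0 a) hab
  exact ⟨{ carrier := T, one_mem' := hone, zero_mem' := hzero,
           mul_mem' := hmulm, add_mem' := haddm, neg_mem' := hnegm }, rfl⟩
end

section
/- Let F be a field of characteristic 0 and B a subring of F containing the ring ℤ[γ(F)] generated by all values γ(x) = (1/p)·(x^p − x)/((x^p − x)² − 1) for x ∈ F. If p⁻¹ ∉ B, then B is contained in the valuation ring O_v of some p-valuation v on F. -/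
/-- `x` lies in the maximal ideal of the valuation subring `O`. -/
def MemMaxIdeal {F : Type*} [Field F] (O : ValuationSubring F) (x : F) : Prop :=
  x ∈ O ∧ (x = 0 ∨ x⁻¹ ∉ O)

/-- `O` is the valuation ring of a `p`-valuation on `F`: `p` lies in the maximal
ideal, `v p` is the minimal positive value, and the residue field is `𝔽_p`. -/
def IsPValuationRing (p : ℕ) {F : Type*} [Field F] (O : ValuationSubring F) : Prop :=
  MemMaxIdeal O (p : F) ∧
  (∀ x : F, MemMaxIdeal O x → x / (p : F) ∈ O) ∧
  (∀ x : F, x ∈ O → ∃ n : Fin p, MemMaxIdeal O (x - (n : ℕ)))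

section Aux

variable {F : Type*} [Field F] {p : ℕ}

lemma memMaxIdeal_iff (O : ValuationSubring F) (z : F) :
    MemMaxIdeal O z ↔ O.valuation z < 1 := by
  constructor
  · rintro ⟨hz, h0 | hinv⟩
    · subst h0; simpa using zero_lt_one
    · rcases ((O.valuation_le_one_iff z).2 hz).lt_or_eq with h | h
      · exact h
      · exact absurd ((O.valuation_le_one_iff _).1
          (by rw [map_inv₀, h, inv_one])) hinv
  · intro h
    have hz : z ∈ O := O.mem_of_valuation_le_one z h.le
    refine ⟨hz, ?_⟩
    rcases eq_or_ne z 0 with rfl | h0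
    · exact Or.inl rfl
    · refine Or.inr fun hmem => ?_
      have h1 : O.valuation z⁻¹ ≤ 1 := (O.valuation_le_one_iff _).2 hmem
      rw [map_inv₀] at h1
      have h2 : (1 : O.ValueGroup) ≤ O.valuation z := by
        have := mul_le_mul_right h1 (O.valuation z)
        rwa [mul_inv_cancel₀ ((Valuation.ne_zero_iff _).mpr h0), mul_one] at this
      exact absurd h (not_lt.mpr h2)

lemma aux_int_val (hp : p.Prime) (O : ValuationSubring F) (hvp : O.valuation p < 1)
    {N : ℤ} (hN : ¬ (p : ℤ) ∣ N) : O.valuation (N : F) = 1 := by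
  have hNle : O.valuation (N : F) ≤ 1 := (O.valuation_le_one_iff _).2 (intCast_mem O N)
  obtain ⟨a, b, hab⟩ := ((Nat.prime_iff_prime_int.mp hp).coprime_iff_not_dvd).mpr hN
  have hcast : (a : F) * (p : F) + (b : F) * (N : F) = 1 := by
    have := congrArg (Int.cast : ℤ → F) hab
    push_cast at this
    exact this
  have key : (1 : O.ValueGroup) ≤ max (O.valuation ((a : F) * (p : F)))
      (O.valuation ((b : F) * (N : F))) := by
    rw [show (1 : O.ValueGroup) = O.valuation 1 from (map_one _).symm, ← hcast]
    exact O.valuation.map_add _ _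
  have hap : O.valuation ((a : F) * (p : F)) < 1 := by
    rw [map_mul]
    calc O.valuation (a : F) * O.valuation (p : F)
        ≤ 1 * O.valuation (p : F) :=
          mul_le_mul_left ((O.valuation_le_one_iff _).2 (intCast_mem O a)) _
      _ < 1 := by rwa [one_mul]
  rcases le_max_iff.mp key with h | h
  · exact absurd h (not_le.mpr hap)
  · refine le_antisymm hNle ?_
    calc (1 : O.ValueGroup) ≤ O.valuation ((b : F) * (N : F)) := h
      _ = O.valuation (b : F) * O.valuation (N : F) := map_mul _ _ _
      _ ≤ 1 * O.valuation (N : F) :=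
          mul_le_mul_left ((O.valuation_le_one_iff _).2 (intCast_mem O b)) _
      _ = O.valuation (N : F) := one_mul _

lemma aux_gamma (hp : p.Prime) (O : ValuationSubring F) (hp0 : (p : F) ≠ 0)
    (hK : ∀ x : F, (1 / (p : F)) * (x ^ p - x) / ((x ^ p - x) ^ 2 - 1) ∈ O)
    {x : F} (hx : x ∈ O) (hd : (x ^ p - x) ^ 2 - 1 ≠ 0) :
    O.valuation (x ^ p - x) ≤ O.valuation p := by
  set y := x ^ p - x with hy
  have hyO : y ∈ O := sub_mem (pow_mem hx p) hx
  have hdO : y ^ 2 - 1 ∈ O := sub_mem (pow_mem hyO 2) (one_mem O)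
  have hγ : O.valuation ((1 / (p : F)) * y / (y ^ 2 - 1)) ≤ 1 :=
    (O.valuation_le_one_iff _).2 (hK x)
  have hid : y = (p : F) * ((1 / (p : F)) * y / (y ^ 2 - 1)) * (y ^ 2 - 1) := by
    field_simp
  calc O.valuation y
      = O.valuation (p : F) * O.valuation ((1 / (p : F)) * y / (y ^ 2 - 1))
          * O.valuation (y ^ 2 - 1) := by rw [← map_mul, ← map_mul, ← hid]
    _ ≤ O.valuation (p : F) * 1 * 1 :=
        mul_le_mul' (mul_le_mul' le_rfl hγ) ((O.valuation_le_one_iff _).2 hdO)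
    _ = O.valuation (p : F) := by rw [mul_one, mul_one]

lemma aux_key (hp : p.Prime) [CharZero F] (O : ValuationSubring F)
    (hvp : O.valuation p < 1)
    (hK : ∀ x : F, (1 / (p : F)) * (x ^ p - x) / ((x ^ p - x) ^ 2 - 1) ∈ O)
    {x : F} (hx : x ∈ O) : O.valuation (x ^ p - x) < 1 := by
  have hp0 : (p : F) ≠ 0 := Nat.cast_ne_zero.mpr hp.ne_zero
  by_cases hd : (x ^ p - x) ^ 2 - 1 = 0
  swap
  · exact lt_of_le_of_lt (aux_gamma hp O hp0 hK hx hd) hvp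
  -- degenerate case: ε := x^p - x, ε² = 1
  exfalso
  set ε := x ^ p - x with hε
  have hε2 : ε ^ 2 = 1 := by linear_combination hd
  have hεpm : ε = 1 ∨ ε = -1 := by
    rcases mul_eq_zero.mp (show (ε - 1) * (ε + 1) = 0 by linear_combination hd) with h | h
    · exact Or.inl (by linear_combination h)
    · exact Or.inr (by linear_combination h)
  have hx0 : x ≠ 0 := by
    rintro rfl
    rw [zero_pow hp.ne_zero, sub_zero] at hε
    rw [hε, zero_pow two_ne_zero] at hε2
    exact zero_ne_one hε2
  have hε0 : ε ≠ 0 := by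
    intro h; rw [h, zero_pow two_ne_zero] at hε2; exact zero_ne_one hε2
  have hxp : x ^ p = x + ε := by rw [hε]; ring
  have hxε : x + ε ≠ 0 := by
    intro h
    have hxe : x = -ε := by linear_combination h
    have h1 : (-ε) ^ p = 0 := by
      have := hε
      rw [hxe] at this
      linear_combination -this
    exact hε0 (neg_eq_zero.mp (pow_eq_zero_iff hp.ne_zero |>.mp h1))
  have hεO : ε ∈ O := sub_mem (pow_mem hx p) hx
  have hεv : O.valuation ε = 1 := by
    rcases hεpm with h | h <;> rw [h]
    · exact map_one _
    · rw [Valuation.map_neg, map_one]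
  -- apply gamma bound to z = x²
  have hz : (x ^ 2) ^ p - x ^ 2 = 2 * ε * x + 1 := by
    have h1 : (x ^ 2) ^ p = (x ^ p) ^ 2 := by rw [← pow_mul, ← pow_mul, Nat.mul_comm]
    rw [h1, hxp]; linear_combination hε2
  have hzd : ((x ^ 2) ^ p - x ^ 2) ^ 2 - 1 ≠ 0 := by
    rw [hz, show (2 * ε * x + 1) ^ 2 - 1 = 4 * x * (x + ε) + 4 * x ^ 2 * (ε ^ 2 - 1) by ring,
      hε2, sub_self, mul_zero, add_zero]
    exact mul_ne_zero (mul_ne_zero (by norm_num) hx0) hxε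
  have hw0 : O.valuation (2 * ε * x + 1) ≤ O.valuation p := by
    have := aux_gamma hp O hp0 hK (pow_mem hx 2) hzd
    rwa [hz] at this
  set w := 2 * x + ε with hwdef
  have hwv : O.valuation w ≤ O.valuation p := by
    have hwe : w = ε * (2 * ε * x + 1) := by rw [hwdef]; linear_combination (-2*x) * hε2
    rw [hwe, map_mul, hεv, one_mul]; exact hw0
  have hwO : w ∈ O := by
    rw [show w = x + x + ε by rw [hwdef]; ring]
    exact add_mem (add_mem hx hx) hεO
  have h2O : (2 : F) ∈ O := by
    rw [← one_add_one_eq_two]; exact add_mem (one_mem _) (one_mem _)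
  -- divisibility in O
  obtain ⟨S, hS⟩ := sub_dvd_pow_sub_pow ((⟨w, hwO⟩ : O) - ⟨ε, hεO⟩) (-⟨ε, hεO⟩) p
  have hSF : (w - ε) ^ p - (-ε) ^ p = (w - ε - -ε) * (S : F) := by
    have := congrArg (fun t : O => (t : F)) hS
    push_cast at this
    exact this
  have hkey : (w - ε) ^ p = 2 ^ (p - 1) * w + 2 ^ (p - 1) * ε := by
    have h2x : w - ε = 2 * x := by rw [hwdef]; ring
    rw [h2x, mul_pow, hxp]
    nth_rewrite 1 [show p = (p - 1) + 1 from (Nat.succ_pred_eq_of_pos hp.pos).symm]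
    rw [pow_succ, hwdef]; ring
  have hM : w * ((S : F) - 2 ^ (p - 1)) = 2 ^ (p - 1) * ε - (-ε) ^ p := by
    linear_combination hkey - hSF
  have hv1 : O.valuation (2 ^ (p - 1) * ε - (-ε) ^ p) < 1 := by
    rw [← hM, map_mul]
    have h1 : O.valuation ((S : F) - 2 ^ (p - 1)) ≤ 1 :=
      (O.valuation_le_one_iff _).2 (sub_mem S.2 (pow_mem h2O _))
    calc O.valuation w * O.valuation ((S : F) - 2 ^ (p - 1))
        ≤ O.valuation p * 1 := mul_le_mul' hwv h1
      _ = O.valuation p := mul_one _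
      _ < 1 := hvp
  -- identify with an integer not divisible by p
  have hfin : ∀ M : ℤ, ((M : ℤ) : F) = 2 ^ (p - 1) * ε - (-ε) ^ p → ¬ (p : ℤ) ∣ M → False := by
    intro M hMF hnd
    have := aux_int_val hp O hvp hnd
    rw [hMF] at this
    exact absurd hv1 (by rw [this]; exact lt_irrefl 1)
  have h2ne : Odd p → (2 : ZMod p) ≠ 0 := by
    intro hodd hc
    have h1 : (p : ℤ) ∣ 2 := (ZMod.intCast_zmod_eq_zero_iff_dvd 2 p).mp (by exact_mod_cast hc)
    have hple : p ∣ 2 := by exact_mod_cast h1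
    have h2 := (Nat.prime_dvd_prime_iff_eq hp Nat.prime_two).mp hple
    subst h2; exact absurd hodd (by decide)
  rcases hεpm with h1 | h1
  · refine hfin (2 ^ (p - 1) - (-1) ^ p) (by rw [h1]; push_cast; ring) ?_
    rcases hp.eq_two_or_odd' with h2 | hodd
    · subst h2; norm_num
    · haveI : Fact p.Prime := ⟨hp⟩
      intro hdvd
      have hz0 := (ZMod.intCast_zmod_eq_zero_iff_dvd _ p).mpr hdvd
      push_cast at hz0
      rw [ZMod.pow_card_sub_one_eq_one (h2ne hodd), hodd.neg_one_pow] at hz0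
      exact (h2ne hodd) (by linear_combination hz0)
  · refine hfin (-(2 ^ (p - 1)) - 1) (by rw [h1]; push_cast; ring) ?_
    rcases hp.eq_two_or_odd' with h2 | hodd
    · subst h2; norm_num
    · haveI : Fact p.Prime := ⟨hp⟩
      intro hdvd
      have hz0 := (ZMod.intCast_zmod_eq_zero_iff_dvd _ p).mpr hdvd
      push_cast at hz0
      rw [ZMod.pow_card_sub_one_eq_one (h2ne hodd)] at hz0
      exact (h2ne hodd) (by linear_combination -hz0)

-- step 2 : minimality of v p
lemma aux_div (hp : p.Prime) [CharZero F] (O : ValuationSubring F)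
    (hvp : O.valuation p < 1)
    (hK : ∀ x : F, (1 / (p : F)) * (x ^ p - x) / ((x ^ p - x) ^ 2 - 1) ∈ O)
    {x : F} (hx : x ∈ O) (hlt : O.valuation x < 1) : x / (p : F) ∈ O := by
  have hp0 : (p : F) ≠ 0 := Nat.cast_ne_zero.mpr hp.ne_zero
  rcases eq_or_ne x 0 with rfl | hx0
  · rw [zero_div]; exact zero_mem O
  -- v (x^(p-1)) < 1
  have hxm : O.valuation (x ^ (p - 1)) < 1 := by
    have h1 : p - 1 = (p - 2) + 1 := by have := hp.two_le; omega
    rw [h1, pow_succ, map_mul]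
    calc O.valuation (x ^ (p - 2)) * O.valuation x
        ≤ 1 * O.valuation x := mul_le_mul_left ((O.valuation_le_one_iff _).2 (pow_mem hx _)) _
      _ = O.valuation x := one_mul _
      _ < 1 := hlt
  -- v (x^(p-1) - 1) = 1
  have hu : O.valuation (x ^ (p - 1) - 1) = 1 := by
    have hle : O.valuation (x ^ (p - 1) - 1) ≤ 1 := by
      refine le_trans (O.valuation.map_sub _ _) ?_
      rw [map_one]
      exact max_le hxm.le le_rfl
    rcases hle.lt_or_eq with h | h
    · exfalso
      have h1 : (1 : O.ValueGroup) = O.valuation (x ^ (p - 1) - (x ^ (p - 1) - 1)) := by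
        rw [show x ^ (p - 1) - (x ^ (p - 1) - 1) = 1 by ring, map_one]
      have := le_trans h1.le (O.valuation.map_sub _ _)
      rcases le_max_iff.mp this with h2 | h2
      · exact absurd h2 (not_le.mpr hxm)
      · exact absurd h2 (not_le.mpr h)
    · exact h
  -- y = x^p - x = x * (x^(p-1) - 1)
  have hyfac : x ^ p - x = x * (x ^ (p - 1) - 1) := by
    rw [mul_sub, mul_one, ← pow_succ']
    congr 2
    have := hp.two_le
    omega
  have hvy : O.valuation (x ^ p - x) = O.valuation x := by
    rw [hyfac, map_mul, hu, mul_one]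
  -- d = y² - 1 ≠ 0
  have hvy2 : O.valuation ((x ^ p - x) ^ 2) < 1 := by
    rw [map_pow, hvy]
    calc O.valuation x ^ 2 = O.valuation x * O.valuation x := sq _
      _ ≤ 1 * O.valuation x := mul_le_mul_left hlt.le _
      _ = O.valuation x := one_mul _
      _ < 1 := hlt
  have hd : (x ^ p - x) ^ 2 - 1 ≠ 0 := by
    intro h
    have : O.valuation ((x ^ p - x) ^ 2) = O.valuation 1 := by
      rw [show (x ^ p - x) ^ 2 = 1 by linear_combination h]
    rw [map_one] at this
    exact absurd this (ne_of_lt hvy2)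
  have hbound : O.valuation x ≤ O.valuation p := by
    rw [← hvy]; exact aux_gamma hp O hp0 hK hx hd
  -- conclude
  rw [← O.valuation_le_one_iff, div_eq_mul_inv, map_mul, map_inv₀]
  have hpne : O.valuation (p : F) ≠ 0 := (Valuation.ne_zero_iff _).mpr hp0
  calc O.valuation x * (O.valuation (p : F))⁻¹
      ≤ O.valuation (p : F) * (O.valuation (p : F))⁻¹ := mul_le_mul_left hbound _
    _ = 1 := mul_inv_cancel₀ hpne

-- step 3 : residue field is 𝔽_p
lemma aux_res (hp : p.Prime) [CharZero F] (O : ValuationSubring F)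
    (hvp : O.valuation p < 1)
    (hK : ∀ x : F, (1 / (p : F)) * (x ^ p - x) / ((x ^ p - x) ^ 2 - 1) ∈ O)
    {x : F} (hx : x ∈ O) : ∃ n : Fin p, O.valuation (x - (n : ℕ)) < 1 := by
  haveI : Fact p.Prime := ⟨hp⟩
  haveI : DecidableEq (IsLocalRing.ResidueField ↥O) := Classical.decEq _
  set k := IsLocalRing.ResidueField ↥O with hk
  let π : ↥O →+* k := IsLocalRing.residue ↥O
  have hres : ∀ z : ↥O, π z = 0 ↔ O.valuation (z : F) < 1 := by
    intro z
    rw [show π z = 0 ↔ z ∈ IsLocalRing.maximalIdeal ↥O from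
      IsLocalRing.residue_eq_zero_iff z]
    exact ValuationSubring.valuation_lt_one_iff O z
  have hpk : ((p : ℕ) : k) = 0 := by
    rw [← map_natCast π p, hres]
    push_cast
    exact hvp
  haveI hchark : CharP k p := by
    have h1 : ringChar k ∣ p := ringChar.dvd hpk
    rcases (Nat.Prime.eq_one_or_self_of_dvd hp _ h1) with h | h
    · exact absurd h (CharP.ringChar_ne_one)
    · rw [← h]; exact ringChar.charP k
  let φ : ZMod p →+* k := ZMod.castHom dvd_rfl k
  set X : ↥O := (⟨x, hx⟩ : ↥O) with hX
  have ha : (π X) ^ p = π X := by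
    have h0 : π (X ^ p - X) = 0 := by
      rw [hres]
      push_cast
      exact aux_key hp O hvp hK hx
    rw [map_sub, map_pow, sub_eq_zero] at h0
    exact h0
  -- root counting
  set q : Polynomial k := Polynomial.X ^ p - Polynomial.X with hq
  have hq0 : q ≠ 0 := FiniteField.X_pow_card_sub_X_ne_zero k hp.one_lt
  have hqdeg : q.natDegree = p := by
    rw [hq, Polynomial.natDegree_sub_eq_left_of_natDegree_lt, Polynomial.natDegree_X_pow]
    rw [Polynomial.natDegree_X, Polynomial.natDegree_X_pow]
    exact hp.one_lt
  have hmem : π X ∈ Finset.univ.image φ := by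
    by_contra hnot
    have hsub : insert (π X) (Finset.univ.image φ) ⊆ q.roots.toFinset := by
      intro b hb
      rw [Multiset.mem_toFinset, Polynomial.mem_roots hq0]
      rcases Finset.mem_insert.mp hb with rfl | hb
      · simp [hq, Polynomial.IsRoot, sub_eq_zero, ha]
      · obtain ⟨i, -, rfl⟩ := Finset.mem_image.mp hb
        simp [hq, Polynomial.IsRoot, sub_eq_zero, ← map_pow, ZMod.pow_card]
    have hcard : p + 1 ≤ p := by
      calc p + 1 = (insert (π X) (Finset.univ.image φ)).card := by
            rw [Finset.card_insert_of_notMem hnot,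
              Finset.card_image_of_injective _ φ.injective, Finset.card_univ, ZMod.card]
        _ ≤ q.roots.toFinset.card := Finset.card_le_card hsub
        _ ≤ Multiset.card q.roots := q.roots.toFinset_card_le
        _ ≤ q.natDegree := q.card_roots'
        _ = p := hqdeg
    omega
  obtain ⟨i, -, hi⟩ := Finset.mem_image.mp hmem
  refine ⟨⟨i.val, i.val_lt⟩, ?_⟩
  have hzero : π (X - ((i.val : ℕ) : ↥O)) = 0 := by
    rw [map_sub, map_natCast π, sub_eq_zero, ← hi, ← map_natCast φ i.val,
      ZMod.natCast_rightInverse i]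
  rw [hres] at hzero
  push_cast at hzero
  exact hzero

lemma aux_exists (hp : p.Prime) [CharZero F] (B : Subring F)
    (hpB : (p : F)⁻¹ ∉ B) :
    ∃ O : ValuationSubring F, B ≤ O.toSubring ∧ (p : F)⁻¹ ∉ O := by
  have hp0 : (p : F) ≠ 0 := Nat.cast_ne_zero.mpr hp.ne_zero
  have hpBmem : (p : F) ∈ B := natCast_mem B p
  set pB : B := (⟨(p : F), hpBmem⟩ : B) with hpBdef
  have hnon : Ideal.span {pB} ≠ ⊤ := by
    rw [Ne, Ideal.span_singleton_eq_top, isUnit_iff_exists_inv]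
    rintro ⟨b, hb⟩
    apply hpB
    have h1 : (p : F) * (b : F) = 1 := congrArg Subtype.val hb
    have h2 : (b : F) = (p : F)⁻¹ := by
      field_simp
      linear_combination h1
    rw [← h2]
    exact b.2
  obtain ⟨m, hm, hpm⟩ := Ideal.exists_le_maximal _ hnon
  haveI := hm.isPrime
  obtain ⟨O, hle, hloc⟩ := (LocalSubring.ofPrime B m).exists_le_valuationSubring
  refine ⟨O, le_trans (LocalSubring.le_ofPrime B m) hle, ?_⟩
  intro hinv
  have hpO : (p : F) ∈ O.toSubring := hle (LocalSubring.le_ofPrime B m hpBmem)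
  have hu : IsUnit (⟨(p : F), hpO⟩ : O.toSubring) :=
    isUnit_iff_exists_inv.mpr ⟨⟨(p : F)⁻¹, hinv⟩, Subtype.ext (mul_inv_cancel₀ hp0)⟩
  have hpA : (p : F) ∈ (LocalSubring.ofPrime B m).toSubring :=
    LocalSubring.le_ofPrime B m hpBmem
  have hu2 : IsUnit (⟨(p : F), hpA⟩ : (LocalSubring.ofPrime B m).toSubring) := by
    have := hloc.1 (a := ⟨(p : F), hpA⟩)
    exact this hu
  have hu3 : IsUnit (algebraMap B (LocalSubring.ofPrime B m).toSubring pB) := hu2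
  have := (IsLocalization.AtPrime.isUnit_to_map_iff
    ((LocalSubring.ofPrime B m).toSubring) m pB).mp hu3
  exact this (hpm (Ideal.subset_span (Set.mem_singleton _)))

end Aux

theorem stmt_7 (p : ℕ) (hp : p.Prime) {F : Type*} [Field F] [CharZero F]
    (B : Subring F)
    (hKochen : ∀ x : F, (1 / (p : F)) * (x ^ p - x) / ((x ^ p - x) ^ 2 - 1) ∈ B)
    (hpB : (p : F)⁻¹ ∉ B) :
    ∃ O : ValuationSubring F, IsPValuationRing p O ∧ B ≤ O.toSubring := by
  obtain ⟨O, hBO, hpOinv⟩ := aux_exists hp B hpB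
  have hK : ∀ x : F, (1 / (p : F)) * (x ^ p - x) / ((x ^ p - x) ^ 2 - 1) ∈ O := by
    intro x
    exact (ValuationSubring.mem_toSubring O _).mp (hBO (hKochen x))
  have hvp : O.valuation p < 1 := by
    have hle : O.valuation p ≤ 1 := (O.valuation_le_one_iff _).2 (natCast_mem O p)
    rcases hle.lt_or_eq with h | h
    · exact h
    · exact absurd ((O.valuation_le_one_iff _).1 (by rw [map_inv₀, h, inv_one])) hpOinv
  refine ⟨O, ⟨?_, ?_, ?_⟩, hBO⟩
  · rw [memMaxIdeal_iff]
    exact hvp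
  · intro x hx
    exact aux_div hp O hvp hK hx.1 ((memMaxIdeal_iff O x).mp hx)
  · intro x hx
    obtain ⟨n, hn⟩ := aux_res hp O hvp hK hx
    exact ⟨n, (memMaxIdeal_iff O _).mpr hn⟩
end

section
/- Let A be an integral domain with ℚ ⊆ A and F = Quot(A). Then there is a 1-1 correspondence between p-valuation rings B ⊆ F (valuation rings of p-valuations of F) and total p-divisibilities | of A having cancellation and support I(|) = {0}, given by a|b ⟺ a = 0 or b/a ∈ B. -/
def IsPDivisibility (p : ℕ) {A : Type*} [CommRing A] (D : A → A → Prop) : Prop :=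
  IsDivisibility D ∧
  (∀ a : A, ¬ D 0 a → ¬ D ((p : A) * a) a) ∧
  (∀ a b : A, D ((p : A) * ((a ^ p * b - b ^ p * a) ^ 2 - (b ^ (p + 1)) ^ 2))
      ((a ^ p * b - b ^ p * a) * b ^ (p + 1)))

/-- The divisibility on `A` induced by a subring of the fraction field `F`. -/
def ringDiv {A F : Type*} [CommRing A] [Field F] [Algebra A F]
    (O : ValuationSubring F) (a b : A) : Prop :=
  (a = 0 ∧ b = 0) ∨ (a ≠ 0 ∧ algebraMap A F b / algebraMap A F a ∈ O)

section valhelpers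

variable {F : Type*} [Field F] {p : ℕ}

lemma memMax_iff (O : ValuationSubring F) (x : F) :
    MemMaxIdeal O x ↔ O.valuation x < 1 := by
  constructor
  · rintro ⟨hO, h0⟩
    rcases h0 with rfl | h
    · simpa using (zero_lt_one (α := O.ValueGroup))
    · rw [← O.valuation_le_one_iff] at hO
      refine lt_of_le_of_ne hO fun he => h ?_
      rw [← O.valuation_le_one_iff, map_inv₀, he, inv_one]
  · intro h
    refine ⟨O.mem_of_valuation_le_one x h.le, ?_⟩
    rcases eq_or_ne x 0 with rfl | hx
    · exact Or.inl rfl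
    · refine Or.inr fun hinv => ?_
      rw [← O.valuation_le_one_iff, map_inv₀] at hinv
      have hx0 : O.valuation x ≠ 0 := (Valuation.ne_zero_iff _).2 hx
      have : (1 : O.ValueGroup) ≤ O.valuation x := by
        rwa [inv_le_one₀ (a := O.valuation x)
          (lt_of_le_of_ne zero_le' (Ne.symm hx0))] at hinv
      exact absurd h (not_lt.2 this)

lemma val_t_le_vp (O : ValuationSubring F) (hpF : ((p : ℕ) : F) ≠ 0)
    {z : F} (hz : z ∈ O)
    (hk : (z ^ p - z) ^ 2 ≠ 1 ∧
      (z ^ p - z) / ((p : F) * ((z ^ p - z) ^ 2 - 1)) ∈ O) :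
    O.valuation (z ^ p - z) ≤ O.valuation (p : F) := by
  obtain ⟨h1, h2⟩ := hk
  set t := z ^ p - z with ht
  have htO : t ∈ O := sub_mem (pow_mem hz p) hz
  have ht2O : t ^ 2 - 1 ∈ O := sub_mem (pow_mem htO 2) (one_mem O)
  have ht2ne : t ^ 2 - 1 ≠ 0 := sub_ne_zero.2 h1
  have hdne : (p : F) * (t ^ 2 - 1) ≠ 0 := mul_ne_zero hpF ht2ne
  rw [← O.valuation_le_one_iff, map_div₀] at h2
  have hd0 : O.valuation ((p : F) * (t ^ 2 - 1)) ≠ 0 :=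
    (Valuation.ne_zero_iff _).2 hdne
  have hle : O.valuation t ≤ O.valuation ((p : F) * (t ^ 2 - 1)) := by
    rwa [div_le_one₀ (lt_of_le_of_ne zero_le' (Ne.symm hd0))] at h2
  calc O.valuation t ≤ O.valuation ((p : F) * (t ^ 2 - 1)) := hle
    _ = O.valuation (p : F) * O.valuation (t ^ 2 - 1) := map_mul _ _ _
    _ ≤ O.valuation (p : F) * 1 :=
        mul_le_mul_right ((O.valuation_le_one_iff _).2 ht2O) _
    _ = O.valuation (p : F) := mul_one _

open Polynomial in
lemma fin_of_frob (hp : p.Prime) (k : Type*) [Field k] [CharP k p]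
    (hfrob : ∀ ζ : k, ζ ^ p = ζ) (ζ : k) : ∃ n : Fin p, ζ = ((n : ℕ) : k) := by
  haveI : Fact p.Prime := ⟨hp⟩
  classical
  let χ : ZMod p →+* k := ZMod.castHom dvd_rfl k
  have hinj : Function.Injective χ := χ.injective
  set f : k[X] := X ^ p - X with hf
  have hco : f.coeff p = 1 := by
    have h2 : (2:ℕ) ≤ p := hp.two_le
    simp [hf, coeff_X]
    omega
  have hfne : f ≠ 0 := fun h => by simp [h] at hco
  have hdeg : f.natDegree ≤ p := by
    refine le_trans (natDegree_sub_le _ _) ?_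
    have h2 : (2:ℕ) ≤ p := hp.two_le
    simp [natDegree_X_pow, natDegree_X]
    omega
  have hroot : ∀ y : k, y ^ p = y → y ∈ f.roots.toFinset := by
    intro y hy
    rw [Multiset.mem_toFinset, mem_roots hfne]
    simp [hf, IsRoot, hy]
  let S : Finset k := Finset.image χ Finset.univ
  have hSsub : S ⊆ f.roots.toFinset := by
    intro y hy
    obtain ⟨m, _, rfl⟩ := Finset.mem_image.mp hy
    exact hroot _ (hfrob _)
  have hcardS : S.card = p := by
    rw [Finset.card_image_of_injective _ hinj, Finset.card_univ, ZMod.card]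
  have hcardT : f.roots.toFinset.card ≤ p :=
    le_trans (Multiset.toFinset_card_le _) (le_trans (f.card_roots') hdeg)
  have heq : f.roots.toFinset = S :=
    (Finset.eq_of_subset_of_card_le hSsub (by omega)).symm
  have hζ : ζ ∈ S := by rw [← heq]; exact hroot ζ (hfrob ζ)
  obtain ⟨m, _, hm⟩ := Finset.mem_image.mp hζ
  refine ⟨⟨m.val, m.val_lt⟩, ?_⟩
  rw [← hm]
  have : χ ((m.val : ℕ) : ZMod p) = ((m.val : ℕ) : k) := map_natCast χ m.val
  rw [ZMod.natCast_rightInverse m] at this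
  simp [← this]

lemma residue_exists (O : ValuationSubring F) (hp : p.Prime)
    (hmp : O.valuation ((p : ℕ) : F) < 1)
    (ht : ∀ z : O, z ^ p - z ∈ IsLocalRing.maximalIdeal O) :
    ∀ x : F, x ∈ O → ∃ n : Fin p, MemMaxIdeal O (x - (n : ℕ)) := by
  haveI : Fact p.Prime := ⟨hp⟩
  have hpO : ((p : ℕ) : O) ∈ IsLocalRing.maximalIdeal O := by
    rw [ValuationSubring.valuation_lt_one_iff]
    convert hmp using 2
    simp
  set k := IsLocalRing.ResidueField O with hk
  have hchark : ((p : ℕ) : k) = 0 := by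
    have := (IsLocalRing.residue_eq_zero_iff ((p : ℕ) : O)).2 hpO
    rwa [map_natCast] at this
  haveI : CharP k p := ringChar.of_eq (CharP.ringChar_of_prime_eq_zero hp hchark)
  have hfrob : ∀ ζ : k, ζ ^ p = ζ := by
    intro ζ
    obtain ⟨Z, rfl⟩ := Ideal.Quotient.mk_surjective ζ
    have := (IsLocalRing.residue_eq_zero_iff (Z ^ p - Z)).2 (ht Z)
    rw [map_sub, map_pow] at this
    exact sub_eq_zero.mp this
  intro x hx
  obtain ⟨n, hn⟩ := fin_of_frob hp k hfrob (IsLocalRing.residue O ⟨x, hx⟩)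
  refine ⟨n, ?_⟩
  rw [memMax_iff]
  have hmem : (⟨x, hx⟩ - ((n : ℕ) : O) : O) ∈ IsLocalRing.maximalIdeal O := by
    rw [← IsLocalRing.residue_eq_zero_iff, map_sub, map_natCast, ← hn, sub_self]
  rw [ValuationSubring.valuation_lt_one_iff] at hmem
  convert hmem using 2
  simp

lemma pval_of_kochen (O : ValuationSubring F) (hp : p.Prime) (hpF : ((p : ℕ) : F) ≠ 0)
    (hmp : MemMaxIdeal O ((p : ℕ) : F))
    (hk : ∀ z : F, (z ^ p - z) ^ 2 ≠ 1 ∧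
      (z ^ p - z) / ((p : F) * ((z ^ p - z) ^ 2 - 1)) ∈ O) :
    IsPValuationRing p O := by
  have hvp := (memMax_iff O _).1 hmp
  have hvp0 : O.valuation ((p : ℕ) : F) ≠ 0 := (Valuation.ne_zero_iff _).2 hpF
  refine ⟨hmp, ?_, ?_⟩
  · intro x hx
    rcases eq_or_ne x 0 with rfl | hx0
    · simp [zero_mem O]
    have hvx := (memMax_iff O _).1 hx
    rw [← O.valuation_le_one_iff, map_div₀, div_le_one₀
      (lt_of_le_of_ne zero_le' (Ne.symm hvp0))]
    by_contra hcon
    push_neg at hcon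
    set z : F := (p : F) / x with hz
    have hz0 : z ≠ 0 := div_ne_zero hpF hx0
    have hvx0 : O.valuation x ≠ 0 := (Valuation.ne_zero_iff _).2 hx0
    have hvz : O.valuation z < 1 := by
      rw [hz, map_div₀]
      rw [div_lt_iff₀ (lt_of_le_of_ne zero_le' (Ne.symm hvx0)), one_mul]
      exact hcon
    have hzO : z ∈ O := O.mem_of_valuation_le_one z hvz.le
    have hkey := val_t_le_vp O hpF hzO (hk z)
    have h2 := hp.two_le
    have hps : z ^ p - z = z * (z ^ (p - 1) - 1) := by
      rw [mul_sub, mul_one, ← pow_succ']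
      congr 2
      omega
    have hvzp : O.valuation (z ^ (p - 1)) < 1 := by
      rw [map_pow]
      exact pow_lt_one₀ zero_le' hvz (by omega)
    have hvu : O.valuation (z ^ (p - 1) - 1) = 1 := by
      rw [← Valuation.map_neg, neg_sub]
      exact Valuation.map_one_sub_of_lt _ hvzp
    rw [hps, map_mul, hvu, mul_one] at hkey
    rw [hz, map_div₀] at hkey
    have : O.valuation ((p : ℕ) : F) * 1 ≤ O.valuation ((p : ℕ) : F) * O.valuation x := by
      calc O.valuation ((p : ℕ) : F) * 1 = O.valuation ((p : ℕ) : F) := mul_one _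
        _ = O.valuation ((p : ℕ) : F) / O.valuation x * O.valuation x := by
            rw [div_mul_cancel₀ _ hvx0]
        _ ≤ O.valuation ((p : ℕ) : F) * O.valuation x :=
            mul_le_mul_left hkey _
    have h1x : (1 : O.ValueGroup) ≤ O.valuation x :=
      le_of_mul_le_mul_left this (lt_of_le_of_ne zero_le' (Ne.symm hvp0))
    exact absurd hvx (not_lt.2 h1x)
  · refine residue_exists O hp hvp ?_
    intro Z
    rw [ValuationSubring.valuation_lt_one_iff]
    have hcoe : ((Z ^ p - Z : O) : F) = (Z : F) ^ p - (Z : F) := by push_cast; ring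
    rw [hcoe]
    exact lt_of_le_of_lt (val_t_le_vp O hpF Z.2 (hk _)) hvp

lemma kochen_of_pval (O : ValuationSubring F) (hp : p.Prime) (hpF : ((p : ℕ) : F) ≠ 0)
    (hpv : IsPValuationRing p O) :
    ∀ z : F, (z ^ p - z) ^ 2 ≠ 1 ∧
      (z ^ p - z) / ((p : F) * ((z ^ p - z) ^ 2 - 1)) ∈ O := by
  haveI : Fact p.Prime := ⟨hp⟩
  have h2p := hp.two_le
  obtain ⟨hmp, hmin, hres⟩ := hpv
  have hvp := (memMax_iff O _).1 hmp
  have hvp0 : O.valuation ((p : ℕ) : F) ≠ 0 := (Valuation.ne_zero_iff _).2 hpF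
  intro z
  by_cases hzO : z ∈ O
  · obtain ⟨n, hn⟩ := hres z hzO
    have hmem : ((⟨z, hzO⟩ : O) ^ p - ⟨z, hzO⟩) ∈ IsLocalRing.maximalIdeal O := by
      set Z : O := ⟨z, hzO⟩ with hZ
      set N : O := ((n : ℕ) : O) with hN
      have hE : Z - N ∈ IsLocalRing.maximalIdeal O := by
        rw [ValuationSubring.valuation_lt_one_iff]
        have : ((Z - N : O) : F) = z - ((n : ℕ) : F) := by push_cast; rfl
        rw [this]
        exact (memMax_iff O _).1 hn
      have hpOm : ((p : ℕ) : O) ∈ IsLocalRing.maximalIdeal O := by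
        rw [ValuationSubring.valuation_lt_one_iff]
        convert hvp using 2
        simp
      have h1 : Z ^ p - N ^ p ∈ IsLocalRing.maximalIdeal O := by
        obtain ⟨c, hc⟩ := sub_dvd_pow_sub_pow Z N p
        rw [hc]
        exact Ideal.mul_mem_right _ _ hE
      have h2 : N ^ p - N ∈ IsLocalRing.maximalIdeal O := by
        have hz : (((n : ℕ) ^ p - (n : ℕ) : ℤ) : ZMod p) = 0 := by
          push_cast
          rw [ZMod.pow_card]
          ring
        obtain ⟨c, hc⟩ := (ZMod.intCast_zmod_eq_zero_iff_dvd _ _).1 hz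
        have : N ^ p - N = ((p : ℕ) : O) * ((c : ℤ) : O) := by
          have := congrArg (fun m : ℤ => ((m : ℤ) : O)) hc
          push_cast at this ⊢
          rw [hN]
          push_cast
          linear_combination this
        rw [this]
        exact Ideal.mul_mem_right _ _ hpOm
      have : Z ^ p - Z = (Z ^ p - N ^ p) + (N ^ p - N) - (Z - N) := by ring
      rw [this]
      exact Ideal.sub_mem _ (Ideal.add_mem _ h1 h2) hE
    rw [ValuationSubring.valuation_lt_one_iff] at hmem
    have hcoe : (((⟨z, hzO⟩ : O) ^ p - ⟨z, hzO⟩ : O) : F) = z ^ p - z := by push_cast; rfl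
    rw [hcoe] at hmem
    set t := z ^ p - z with ht
    have hvt2 : O.valuation (t ^ 2) < 1 := by
      rw [map_pow]
      exact pow_lt_one₀ zero_le' hmem (by omega)
    have ht2ne : t ^ 2 ≠ 1 := by
      intro h
      rw [h, map_one] at hvt2
      exact lt_irrefl _ hvt2
    have hvt21 : O.valuation (t ^ 2 - 1) = 1 := by
      rw [← Valuation.map_neg, neg_sub]
      exact Valuation.map_one_sub_of_lt _ hvt2
    refine ⟨ht2ne, ?_⟩
    have hdiv : t / ((p : F) * (t ^ 2 - 1)) = t / (p : F) * (t ^ 2 - 1)⁻¹ := by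
      rw [← div_div, div_eq_mul_inv]
    rw [hdiv]
    refine mul_mem (hmin t ((memMax_iff O t).2 hmem)) ?_
    rw [← O.valuation_le_one_iff, map_inv₀, hvt21, inv_one]
  · have h1z : ¬ O.valuation z ≤ 1 := fun h => hzO (O.mem_of_valuation_le_one z h)
    push_neg at h1z
    have hz0 : z ≠ 0 := by
      rintro rfl
      rw [map_zero] at h1z
      exact absurd h1z (by simp)
    set w : F := z⁻¹ with hw
    have hw0 : w ≠ 0 := inv_ne_zero hz0
    have hvw : O.valuation w < 1 := by
      rw [hw, map_inv₀, inv_lt_one₀ (lt_of_le_of_ne zero_le'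
        (Ne.symm ((Valuation.ne_zero_iff _).2 hz0)))]
      exact h1z
    have hwO : w ∈ O := O.mem_of_valuation_le_one w hvw.le
    set s : F := w ^ (p - 1) with hs
    have hvs : O.valuation s < 1 := by
      rw [hs, map_pow]
      exact pow_lt_one₀ zero_le' hvw (by omega)
    set u : F := 1 - s with hu
    have hvu : O.valuation u = 1 := Valuation.map_one_sub_of_lt _ hvs
    have hu0 : u ≠ 0 := by
      intro h
      rw [h, map_zero] at hvu
      exact zero_ne_one hvu
    have hv2s : O.valuation (2 * s) < 1 := by
      have h2O : (2 : F) ∈ O := by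
        have : (2 : F) = 1 + 1 := by norm_num
        rw [this]; exact add_mem (one_mem O) (one_mem O)
      calc O.valuation (2 * s) = O.valuation 2 * O.valuation s := map_mul _ _ _
        _ ≤ 1 * O.valuation s := mul_le_mul_left ((O.valuation_le_one_iff _).2 h2O) _
        _ = O.valuation s := one_mul _
        _ < 1 := hvs
    have hvs2 : O.valuation (s ^ 2) < 1 := by
      rw [map_pow]; exact pow_lt_one₀ zero_le' hvs (by omega)
    have hvw2p : O.valuation (w ^ (2 * p)) < 1 := by
      rw [map_pow]; exact pow_lt_one₀ zero_le' hvw (by omega)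
    have hvm : O.valuation (2 * s - s ^ 2 + w ^ (2 * p)) < 1 := by
      refine Valuation.map_add_lt _ ?_ hvw2p
      have : 2 * s - s ^ 2 = 2 * s + (-(s ^ 2)) := by ring
      rw [this]
      refine Valuation.map_add_lt _ hv2s ?_
      rwa [Valuation.map_neg]
    have hkey : O.valuation (u ^ 2 - w ^ (2 * p)) = 1 := by
      have : u ^ 2 - w ^ (2 * p) = 1 - (2 * s - s ^ 2 + w ^ (2 * p)) := by
        rw [hu]; ring
      rw [this]
      exact Valuation.map_one_sub_of_lt _ hvm
    have hkne : u ^ 2 - w ^ (2 * p) ≠ 0 := by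
      intro h
      rw [h, map_zero] at hkey
      exact zero_ne_one hkey
    have hzs : z ^ p * s = z := by
      rw [hs, hw, inv_pow, ← pow_sub_one_mul (by omega : p ≠ 0) z]
      field_simp
    have hid : z ^ p - z = z ^ p * u := by
      rw [hu, mul_sub, mul_one, hzs]
    have hzw : z * w = 1 := mul_inv_cancel₀ hz0
    have hid2 : (z ^ p - z) ^ 2 - 1 = z ^ (2 * p) * (u ^ 2 - w ^ (2 * p)) := by
      rw [hid]
      have h1 : z ^ (2 * p) * w ^ (2 * p) = 1 := by
        rw [← mul_pow, hzw, one_pow]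
      calc (z ^ p * u) ^ 2 - 1 = z ^ (2 * p) * u ^ 2 - z ^ (2 * p) * w ^ (2 * p) := by
            rw [h1]
            rw [two_mul, pow_add]
            ring
        _ = z ^ (2 * p) * (u ^ 2 - w ^ (2 * p)) := by ring
    have ht2ne : (z ^ p - z) ^ 2 ≠ 1 := by
      intro h
      have : z ^ (2 * p) * (u ^ 2 - w ^ (2 * p)) = 0 := by rw [← hid2, h, sub_self]
      rcases mul_eq_zero.mp this with h' | h'
      · exact pow_ne_zero _ hz0 h'
      · exact hkne h'
    refine ⟨ht2ne, ?_⟩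
    have hwp : w ^ (p - 1) * w = w ^ p := by
      rw [← pow_succ]
      congr 1
      omega
    have hzwp : z ^ p * w ^ p = 1 := by rw [← mul_pow, hzw, one_pow]
    have hd1 : (p : F) * (z ^ (2 * p) * (u ^ 2 - w ^ (2 * p))) ≠ 0 :=
      mul_ne_zero hpF (mul_ne_zero (pow_ne_zero _ hz0) hkne)
    have hd2 : (p : F) * (u ^ 2 - w ^ (2 * p)) ≠ 0 := mul_ne_zero hpF hkne
    have hrhs : u * w ^ (p - 1) * (w / (p : F)) * (u ^ 2 - w ^ (2 * p))⁻¹ =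
        (u * w ^ p) / ((p : F) * (u ^ 2 - w ^ (2 * p))) := by
      rw [← hwp]
      field_simp
    have hγ : (z ^ p - z) / ((p : F) * ((z ^ p - z) ^ 2 - 1)) =
        u * w ^ (p - 1) * (w / (p : F)) * (u ^ 2 - w ^ (2 * p))⁻¹ := by
      clear_value w s u
      rw [hid2, hid, hrhs, div_eq_div_iff hd1 hd2, two_mul, pow_add]
      linear_combination (-(u * (p : F) * (u ^ 2 - w ^ p * w ^ p) * z ^ p)) * hzwp
    rw [hγ]
    refine mul_mem (mul_mem (mul_mem ?_ (pow_mem hwO _)) (hmin w ((memMax_iff O w).2 hvw))) ?_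
    · exact (O.valuation_le_one_iff _).1 hvu.le
    · rw [← O.valuation_le_one_iff, map_inv₀, hkey, inv_one]

end valhelpers

section frachelpers
variable {A F : Type*} [CommRing A] [IsDomain A] [Field F] [Algebra A F] [IsFractionRing A F]

lemma kochen_frac (p : ℕ) (a b : A) (hb : b ≠ 0) :
    ((((algebraMap A F) a / (algebraMap A F) b) ^ p - (algebraMap A F) a / (algebraMap A F) b) ^ 2 = 1
      ↔ (a ^ p * b - b ^ p * a) ^ 2 - (b ^ (p + 1)) ^ 2 = 0) ∧
    ((a ^ p * b - b ^ p * a) ^ 2 - (b ^ (p + 1)) ^ 2 ≠ 0 → (p : F) ≠ 0 →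
      (algebraMap A F) ((a ^ p * b - b ^ p * a) * b ^ (p + 1)) /
        (algebraMap A F) ((p : A) * ((a ^ p * b - b ^ p * a) ^ 2 - (b ^ (p + 1)) ^ 2)) =
      (((algebraMap A F) a / (algebraMap A F) b) ^ p - (algebraMap A F) a / (algebraMap A F) b) /
        ((p : F) * ((((algebraMap A F) a / (algebraMap A F) b) ^ p
          - (algebraMap A F) a / (algebraMap A F) b) ^ 2 - 1))) := by
  set f := algebraMap A F with hf
  have finj : Function.Injective f := IsFractionRing.injective A F
  have hf0 : ∀ {c : A}, c ≠ 0 → f c ≠ 0 := by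
    intro c hc h
    exact hc (finj (by rw [h, map_zero]))
  have hfb : f b ≠ 0 := hf0 hb
  set z : F := f a / f b with hz
  set u : A := a ^ p * b - b ^ p * a with hu
  set w : A := b ^ (p + 1) with hw
  have hfw : f w ≠ 0 := hf0 (pow_ne_zero _ hb)
  have hidt : z ^ p - z = f u / f w := by
    rw [hz, hu, hw]
    simp only [map_sub, map_mul, map_pow]
    rw [div_pow, div_sub_div _ _ (pow_ne_zero _ hfb) hfb, div_eq_div_iff
      (mul_ne_zero (pow_ne_zero _ hfb) hfb) (pow_ne_zero _ hfb)]
    ring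
  clear_value z u w
  have hsq : (z ^ p - z) ^ 2 - 1 = f (u ^ 2 - w ^ 2) / (f w) ^ 2 := by
    rw [hidt, div_pow, map_sub, map_pow, map_pow, sub_div, div_self (pow_ne_zero _ hfw)]
  have h1 : (z ^ p - z) ^ 2 = 1 ↔ u ^ 2 - w ^ 2 = 0 := by
    rw [← sub_eq_zero, hsq, div_eq_zero_iff]
    simp only [pow_ne_zero 2 hfw, or_false]
    exact map_eq_zero_iff f finj
  refine ⟨h1, ?_⟩
  intro hne hpF
  have hfne : f (u ^ 2 - w ^ 2) ≠ 0 := fun h => hne ((map_eq_zero_iff f finj).1 h)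
  rw [hsq, hidt, map_mul, map_mul, map_natCast]
  rw [div_eq_div_iff (mul_ne_zero hpF hfne)
    (mul_ne_zero hpF (div_ne_zero hfne (pow_ne_zero _ hfw)))]
  field_simp

end frachelpers

section divsub
variable {A F : Type*} [CommRing A] [IsDomain A] [Field F] [Algebra A F] [IsFractionRing A F]

/-- The valuation subring of `F` associated to a divisibility `D` on `A`. -/
def divValSubring (D : A → A → Prop)
    (hrefl : ∀ a, D a a) (htrans : ∀ a b c : A, D a b → D b c → D a c)
    (hsub : ∀ a b c : A, D a b → D a c → D a (b - c))
    (hmulD : ∀ a b c : A, D a b → D (a * c) (b * c))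
    (htot : ∀ a b : A, D a b ∨ D b a) : ValuationSubring F :=
  have hD0 : ∀ a : A, D a 0 := fun a => by
    have := hsub a a a (hrefl a) (hrefl a)
    rwa [sub_self] at this
  have hf0 : ∀ {c : A}, c ≠ 0 → algebraMap A F c ≠ 0 :=
    fun {c} hc h => hc (IsFractionRing.injective A F (by rw [h, map_zero]))
  { carrier := {x | ∃ a b : A, b ≠ 0 ∧ x = algebraMap A F a / algebraMap A F b ∧ D b a}
    one_mem' := ⟨1, 1, one_ne_zero, by simp, hrefl 1⟩
    zero_mem' := ⟨0, 1, one_ne_zero, by simp, hD0 1⟩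
    mul_mem' := by
      rintro x y ⟨a, b, hb, rfl, hba⟩ ⟨c, d, hd, rfl, hdc⟩
      refine ⟨a * c, b * d, mul_ne_zero hb hd, ?_, ?_⟩
      · rw [map_mul, map_mul, div_mul_div_comm]
      · have h1 := hmulD b a d hba
        have h2 := hmulD d c a hdc
        rw [mul_comm d a, mul_comm c a] at h2
        exact htrans _ _ _ h1 h2
    add_mem' := by
      rintro x y ⟨a, b, hb, rfl, hba⟩ ⟨c, d, hd, rfl, hdc⟩
      refine ⟨a * d + c * b, b * d, mul_ne_zero hb hd, ?_, ?_⟩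
      · rw [div_add_div _ _ (hf0 hb) (hf0 hd), map_add, map_mul, map_mul, map_mul]
        ring_nf
      · have h1 := hmulD b a d hba
        have h2 := hmulD d c b hdc
        rw [mul_comm d b] at h2
        have h3 : D (b * d) (0 - c * b) := hsub _ 0 _ (hD0 _) h2
        have h4 := hsub _ _ _ h1 h3
        have he : a * d - (0 - c * b) = a * d + c * b := by ring
        rwa [he] at h4
    neg_mem' := by
      rintro x ⟨a, b, hb, rfl, hba⟩
      refine ⟨-a, b, hb, by rw [map_neg, neg_div], ?_⟩
      have := hsub b 0 a (hD0 b) hba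
      rwa [zero_sub] at this
    mem_or_inv_mem' := by
      intro x
      obtain ⟨a, b, hbm, he⟩ := IsFractionRing.div_surjective (A := A) x
      have hb : b ≠ 0 := nonZeroDivisors.ne_zero hbm
      subst he
      by_cases ha : a = 0
      · left
        exact ⟨a, b, hb, rfl, by rw [ha]; exact hD0 b⟩
      · rcases htot b a with h | h
        · exact Or.inl ⟨a, b, hb, rfl, h⟩
        · right
          rw [inv_div]
          exact ⟨b, a, ha, rfl, h⟩ }

lemma mem_divValSubring {D : A → A → Prop} {h1 h2 h3 h4 h5} (x : F) :
    x ∈ divValSubring (F := F) D h1 h2 h3 h4 h5 ↔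
      ∃ a b : A, b ≠ 0 ∧ x = algebraMap A F a / algebraMap A F b ∧ D b a :=
  Iff.rfl

end divsub

theorem stmt_8 (p : ℕ) (hp : p.Prime) {A F : Type*} [CommRing A] [IsDomain A]
    [Algebra ℚ A] [Field F] [Algebra A F] [IsFractionRing A F] :
    (∀ O : ValuationSubring F, IsPValuationRing p O →
      IsPDivisibility p (ringDiv (A := A) O) ∧
      (∀ a b : A, ringDiv (A := A) O a b ∨ ringDiv (A := A) O b a) ∧
      (∀ a b c : A, ¬ ringDiv (A := A) O 0 c → ringDiv (A := A) O (a * c) (b * c) →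
        ringDiv (A := A) O a b) ∧
      (∀ a : A, ringDiv (A := A) O 0 a → a = 0)) ∧
    (∀ D : A → A → Prop, IsPDivisibility p D → (∀ a b : A, D a b ∨ D b a) →
      (∀ a b c : A, ¬ D 0 c → D (a * c) (b * c) → D a b) →
      (∀ a : A, D 0 a → a = 0) →
      ∃! O : ValuationSubring F, IsPValuationRing p O ∧
        ∀ a b : A, D a b ↔ ringDiv (A := A) O a b) := by
  have hp2 := hp.two_le
  haveI hCA : CharZero A := charZero_of_injective_algebraMap (algebraMap ℚ A).injective
  have finj : Function.Injective (algebraMap A F) := IsFractionRing.injective A F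
  haveI hCF : CharZero F := charZero_of_injective_algebraMap finj
  have hpA : (p : A) ≠ 0 := Nat.cast_ne_zero.mpr hp.ne_zero
  have hpF : (p : F) ≠ 0 := Nat.cast_ne_zero.mpr hp.ne_zero
  have hf0 : ∀ {c : A}, c ≠ 0 → algebraMap A F c ≠ 0 :=
    fun {c} hc h => hc (finj (by rw [h, map_zero]))
  constructor
  · -- Part 1
    intro O hpv
    have hK := kochen_of_pval O hp hpF hpv
    obtain ⟨hmp, hmin, hres⟩ := hpv
    refine ⟨⟨⟨?_, ?_, ?_, ?_, ?_⟩, ?_, ?_⟩, ?_, ?_, ?_⟩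
    · -- refl
      intro a
      by_cases ha : a = 0
      · exact Or.inl ⟨ha, ha⟩
      · exact Or.inr ⟨ha, by rw [div_self (hf0 ha)]; exact one_mem O⟩
    · -- trans
      rintro a b c (⟨rfl, rfl⟩ | ⟨ha, h1⟩)
      · rintro (⟨_, rfl⟩ | ⟨hb, _⟩)
        · exact Or.inl ⟨rfl, rfl⟩
        · exact absurd rfl hb
      · rintro (⟨rfl, rfl⟩ | ⟨hb, h2⟩)
        · exact Or.inr ⟨ha, by rw [map_zero, zero_div]; exact zero_mem O⟩
        · refine Or.inr ⟨ha, ?_⟩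
          have : algebraMap A F c / algebraMap A F a =
              algebraMap A F c / algebraMap A F b * (algebraMap A F b / algebraMap A F a) := by
            rw [div_mul_div_comm, mul_comm (algebraMap A F c) (algebraMap A F b),
              mul_div_mul_left _ _ (hf0 hb)]
          rw [this]
          exact mul_mem h2 h1
    · -- sub
      rintro a b c (⟨rfl, rfl⟩ | ⟨ha, h1⟩)
      · rintro (⟨_, rfl⟩ | ⟨ha, _⟩)
        · exact Or.inl ⟨rfl, by rw [sub_self]⟩
        · exact absurd rfl ha
      · rintro (⟨rfl, rfl⟩ | ⟨_, h2⟩)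
        · exact absurd rfl ha
        · refine Or.inr ⟨ha, ?_⟩
          rw [map_sub, sub_div]
          exact sub_mem h1 h2
    · -- mul
      rintro a b c (⟨rfl, rfl⟩ | ⟨ha, h1⟩)
      · exact Or.inl ⟨zero_mul c, zero_mul c⟩
      · by_cases hc : c = 0
        · exact Or.inl ⟨by rw [hc, mul_zero], by rw [hc, mul_zero]⟩
        · refine Or.inr ⟨mul_ne_zero ha hc, ?_⟩
          rw [map_mul, map_mul, mul_div_mul_right _ _ (hf0 hc)]
          exact h1
    · -- ¬ D 0 1
      rintro (⟨_, h⟩ | ⟨h, _⟩)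
      · exact one_ne_zero h
      · exact h rfl
    · -- axiom (6)
      intro a ha hcon
      have ha' : a ≠ 0 := fun h => ha (Or.inl ⟨rfl, h⟩)
      rcases hcon with ⟨_, h2⟩ | ⟨hpa, h⟩
      · exact ha' h2
      · have heq : algebraMap A F a / algebraMap A F ((p : A) * a) = ((p : ℕ) : F)⁻¹ := by
          rw [map_mul, map_natCast, mul_comm, ← div_div, div_self (hf0 ha'), one_div]
        rw [heq] at h
        obtain ⟨_, h0⟩ := hmp
        rcases h0 with h0 | h0
        · exact hpF h0
        · exact h0 h
    · -- axiom (7), Kochen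
      intro a b
      by_cases hb : b = 0
      · subst hb
        refine Or.inl ⟨?_, ?_⟩
        · simp [zero_pow hp.ne_zero, zero_pow (Nat.succ_ne_zero p)]
        · simp [zero_pow (Nat.succ_ne_zero p)]
      · obtain ⟨ht2, hγ⟩ := hK (algebraMap A F a / algebraMap A F b)
        obtain ⟨hiff, hcomp⟩ := kochen_frac (F := F) p a b hb
        have hne : (a ^ p * b - b ^ p * a) ^ 2 - (b ^ (p + 1)) ^ 2 ≠ 0 :=
          fun h => ht2 (hiff.2 h)
        refine Or.inr ⟨mul_ne_zero hpA hne, ?_⟩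
        rw [hcomp hne hpF]
        exact hγ
    · -- totality
      intro a b
      by_cases ha : a = 0
      · by_cases hb : b = 0
        · exact Or.inl (Or.inl ⟨ha, hb⟩)
        · refine Or.inr (Or.inr ⟨hb, ?_⟩)
          rw [ha, map_zero, zero_div]
          exact zero_mem O
      · by_cases hb : b = 0
        · refine Or.inl (Or.inr ⟨ha, ?_⟩)
          rw [hb, map_zero, zero_div]
          exact zero_mem O
        · rcases O.mem_or_inv_mem (algebraMap A F b / algebraMap A F a) with h | h
          · exact Or.inl (Or.inr ⟨ha, h⟩)
          · refine Or.inr (Or.inr ⟨hb, ?_⟩)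
            rwa [inv_div] at h
    · -- cancellation
      intro a b c h0c hmul
      have hc : c ≠ 0 := fun h => h0c (Or.inl ⟨rfl, h⟩)
      rcases hmul with ⟨h1, h2⟩ | ⟨hac, h⟩
      · rcases mul_eq_zero.mp h1 with h | h
        · rcases mul_eq_zero.mp h2 with h' | h'
          · exact Or.inl ⟨h, h'⟩
          · exact absurd h' hc
        · exact absurd h hc
      · have ha : a ≠ 0 := fun h => hac (by rw [h, zero_mul])
        refine Or.inr ⟨ha, ?_⟩
        rwa [map_mul, map_mul, mul_div_mul_right _ _ (hf0 hc)] at h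
    · -- support
      rintro a (⟨_, h⟩ | ⟨h, _⟩)
      · exact h
      · exact absurd rfl h
  · -- Part 2
    intro D hD htot hcanc hsupp
    obtain ⟨⟨hrefl, htrans, hsub, hmulD, h01⟩, hax6, hax7⟩ := hD
    have hD0 : ∀ a : A, D a 0 := fun a => by
      have := hsub a a a (hrefl a) (hrefl a)
      rwa [sub_self] at this
    have hnD0 : ∀ {b : A}, b ≠ 0 → ¬ D 0 b := fun {b} hb h => hb (hsupp _ h)
    have hDadd : ∀ a b c : A, D a b → D a c → D a (b + c) := by
      intro a b c h1 h2
      have h3 : D a (0 - c) := hsub a 0 c (hD0 a) h2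
      have h4 := hsub a b (0 - c) h1 h3
      have : b - (0 - c) = b + c := by ring
      rwa [this] at h4
    have hwd : ∀ {a b c d : A}, b ≠ 0 → d ≠ 0 → a * d = c * b → D b a → D d c := by
      intro a b c d hb hd he h
      have h1 := hmulD b a d h
      rw [he] at h1
      have h2 : D (d * b) (c * b) := by rwa [mul_comm b d] at h1
      exact hcanc d c b (hnD0 hb) h2
    have hrep : ∀ x : F, ∃ a b : A, b ≠ 0 ∧ x = algebraMap A F a / algebraMap A F b := by
      intro x
      obtain ⟨a, b, hb, he⟩ := IsFractionRing.div_surjective (A := A) x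
      exact ⟨a, b, nonZeroDivisors.ne_zero hb, he.symm⟩
    have hcross : ∀ {a b c d : A}, b ≠ 0 → d ≠ 0 →
        algebraMap A F a / algebraMap A F b = algebraMap A F c / algebraMap A F d →
        a * d = c * b := by
      intro a b c d hb hd h
      rw [div_eq_div_iff (hf0 hb) (hf0 hd), ← map_mul, ← map_mul] at h
      exact finj h
    set O : ValuationSubring F := divValSubring (F := F) D hrefl htrans hsub hmulD htot
      with hOdef
    have hOmem : ∀ x : F, x ∈ O ↔
        ∃ a b : A, b ≠ 0 ∧ x = algebraMap A F a / algebraMap A F b ∧ D b a :=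
      fun x => mem_divValSubring x
    have hmemD : ∀ {a b : A}, b ≠ 0 →
        (algebraMap A F a / algebraMap A F b ∈ O ↔ D b a) := by
      intro a b hb
      constructor
      · rintro ⟨c, d, hd, he, hdc⟩
        exact hwd hd hb (hcross hb hd he).symm hdc
      · intro h
        exact ⟨a, b, hb, rfl, h⟩
    have hiff : ∀ a b : A, D a b ↔ ringDiv (A := A) O a b := by
      intro a b
      constructor
      · intro h
        by_cases ha : a = 0
        · subst ha
          exact Or.inl ⟨rfl, hsupp b h⟩
        · exact Or.inr ⟨ha, (hmemD ha).2 h⟩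
      · rintro (⟨rfl, rfl⟩ | ⟨ha, h⟩)
        · exact hrefl 0
        · exact (hmemD ha).1 h
    -- D 1 p and ¬ D p 1
    have hnDp1 : ¬ D (p : A) 1 := by
      have := hax6 1 (hnD0 one_ne_zero)
      rwa [mul_one] at this
    have hD1p : D 1 (p : A) := (htot 1 (p : A)).resolve_right hnDp1
    have hpmem : ((p : ℕ) : F) ∈ O := by
      refine ⟨(p : A), 1, one_ne_zero, ?_, hD1p⟩
      rw [map_one, div_one, map_natCast]
    have hpinv : ((p : ℕ) : F)⁻¹ ∉ O := by
      intro h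
      have he : ((p : ℕ) : F)⁻¹ = algebraMap A F 1 / algebraMap A F (p : A) := by
        rw [map_one, map_natCast, one_div]
      rw [he] at h
      exact hnDp1 ((hmemD hpA).1 h)
    have hmp : MemMaxIdeal O ((p : ℕ) : F) := ⟨hpmem, Or.inr hpinv⟩
    -- Kochen operator property
    have hk : ∀ z : F, (z ^ p - z) ^ 2 ≠ 1 ∧
        (z ^ p - z) / ((p : F) * ((z ^ p - z) ^ 2 - 1)) ∈ O := by
      intro z
      obtain ⟨a, b, hb, rfl⟩ := hrep z
      obtain ⟨hiff', hcomp⟩ := kochen_frac (F := F) p a b hb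
      have hK := hax7 a b
      have hne : (a ^ p * b - b ^ p * a) ^ 2 - (b ^ (p + 1)) ^ 2 ≠ 0 := by
        intro h
        have hz : ((p : A) * ((a ^ p * b - b ^ p * a) ^ 2 - (b ^ (p + 1)) ^ 2)) = 0 := by
          rw [h, mul_zero]
        rw [hz] at hK
        have := hsupp _ hK
        rcases mul_eq_zero.mp this with h' | h'
        · rw [h', zero_pow two_ne_zero, zero_sub, neg_eq_zero] at h
          exact pow_ne_zero _ (pow_ne_zero _ hb) h
        · exact pow_ne_zero _ hb h'
      refine ⟨fun h => hne (hiff'.1 h), ?_⟩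
      rw [← hcomp hne hpF]
      have hd : (p : A) * ((a ^ p * b - b ^ p * a) ^ 2 - (b ^ (p + 1)) ^ 2) ≠ 0 :=
        mul_ne_zero hpA hne
      exact (hmemD hd).2 hK
    refine ⟨O, ⟨pval_of_kochen O hp hpF hmp hk, hiff⟩, ?_⟩
    -- uniqueness
    intro O' ⟨_, hiff'⟩
    apply SetLike.ext
    intro x
    obtain ⟨a, b, hb, rfl⟩ := hrep x
    have h1 : algebraMap A F a / algebraMap A F b ∈ O' ↔ D b a := by
      constructor
      · intro h
        have := (hiff' b a).2 (Or.inr ⟨hb, h⟩)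
        exact this
      · intro h
        rcases (hiff' b a).1 h with ⟨h', _⟩ | ⟨_, h'⟩
        · exact absurd h' hb
        · exact h'
    rw [h1, ← hmemD hb]
end

section
/- The valuation divisibilities on a commutative ring A (total divisibilities with cancellation) correspond 1-1 to Bourbaki valuations of A: every total divisibility with cancellation arises as a|b ⟺ v(a) ≤ v(b) for a unique (up to equivalence) Bourbaki valuation v. -/
universe u v

set_option maxHeartbeats 1000000 in
set_option synthInstance.maxHeartbeats 400000 in
theorem stmt_10 {A : Type u} [CommRing A] (D : A → A → Prop)
    (hD : IsDivisibility D) (htot : ∀ a b : A, D a b ∨ D b a)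
    (hcanc : ∀ a b c : A, ¬ D 0 c → D (a * c) (b * c) → D a b) :
    ∃ (Γ₀ : Type u) (_ : LinearOrderedCommGroupWithZero Γ₀) (v : Valuation A Γ₀),
      (∀ a b : A, D a b ↔ v b ≤ v a) ∧
      ∀ (Γ₀' : Type v) (_ : LinearOrderedCommGroupWithZero Γ₀') (w : Valuation A Γ₀'),
        (∀ a b : A, D a b ↔ w b ≤ w a) → v.IsEquiv w := by
  classical
  obtain ⟨hrefl, htrans, hsub, hmul, h01⟩ := hD
  have hzero : ∀ a : A, D a 0 := fun a => by
    simpa using hsub a a a (hrefl a) (hrefl a)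
  have hneg : ∀ a b : A, D a b → D a (-b) := fun a b h => by
    simpa using hsub a 0 b (hzero a) h
  have hadd : ∀ a b c : A, D a b → D a c → D a (b + c) := fun a b c h1 h2 => by
    simpa [sub_neg_eq_add] using hsub a b (-c) h1 (hneg a c h2)
  -- the ideal of "infinite valuation" elements
  let I : Ideal A :=
    { carrier := {a | D 0 a}
      zero_mem' := hzero 0
      add_mem' := fun ha hb => hadd 0 _ _ ha hb
      smul_mem' := fun c x hx => by
        simpa [mul_comm] using hmul 0 x c hx }
  have hI : ∀ a : A, a ∈ I ↔ D 0 a := fun a => Iff.rfl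
  have hIprime : I.IsPrime := by
    constructor
    · intro h
      exact h01 ((hI 1).1 (h ▸ Submodule.mem_top))
    · intro a b hab
      by_contra h
      push_neg at h
      exact h.1 ((hI a).1 (hcanc 0 a b (fun hb => h.2 ((hI b).1 hb))
        (by simpa using (hI _).1 hab)))
  haveI := hIprime
  haveI : IsDomain (A ⧸ I) := Ideal.Quotient.isDomain I
  set K := FractionRing (A ⧸ I) with hK
  let f : A →+* K := (algebraMap (A ⧸ I) K).comp (Ideal.Quotient.mk I)
  have hf0 : ∀ a : A, f a = 0 ↔ D 0 a := by
    intro a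
    rw [show f a = (algebraMap (A ⧸ I) K) (Ideal.Quotient.mk I a) from rfl,
      map_eq_zero_iff _ (IsFractionRing.injective (A ⧸ I) K),
      Ideal.Quotient.eq_zero_iff_mem]
    exact hI a
  -- congruence mod I preserves D in the second argument
  have hmod : ∀ a b b' : A, D 0 (b - b') → D a b → D a b' := by
    intro a b b' h hab
    have h2 : D a (b - b') := htrans a 0 (b - b') (hzero a) h
    simpa using hsub a b (b - b') hab h2
  have hsurj : ∀ x : K, ∃ a b : A, f b ≠ 0 ∧ x * f b = f a := by
    intro x
    obtain ⟨⟨r, s⟩, h⟩ := IsLocalization.surj (nonZeroDivisors (A ⧸ I)) x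
    obtain ⟨a, ha⟩ := Ideal.Quotient.mk_surjective (I := I) r
    obtain ⟨b, hb⟩ := Ideal.Quotient.mk_surjective (I := I) (s : A ⧸ I)
    refine ⟨a, b, ?_, ?_⟩
    · show (algebraMap (A ⧸ I) K) (Ideal.Quotient.mk I b) ≠ 0
      rw [hb, map_ne_zero_iff _ (IsFractionRing.injective (A ⧸ I) K)]
      exact nonZeroDivisors.ne_zero s.2
    · show x * (algebraMap (A ⧸ I) K) (Ideal.Quotient.mk I b) =
        (algebraMap (A ⧸ I) K) (Ideal.Quotient.mk I a)
      rw [hb, ha]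
      exact h
  -- the valuation subring
  have hVtot : ∀ x : K, (∃ a b : A, D a b ∧ f a ≠ 0 ∧ x * f a = f b) ∨
      (∃ a b : A, D a b ∧ f a ≠ 0 ∧ x⁻¹ * f a = f b) := by
    intro x
    obtain ⟨a, b, hb, hx⟩ := hsurj x
    rcases htot b a with h | h
    · exact Or.inl ⟨b, a, h, hb, hx⟩
    · by_cases ha : f a = 0
      · left
        have hx0 : x = 0 := by
          have := hx.trans ha
          rcases mul_eq_zero.1 this with h0 | h0
          · exact h0
          · exact absurd h0 hb
        exact ⟨1, 0, hzero 1, by simpa [hf0] using h01, by simp [hx0]⟩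
      · right
        have hx0 : x ≠ 0 := by
          intro h0
          rw [h0, zero_mul] at hx
          exact ha hx.symm
        refine ⟨a, b, h, ha, ?_⟩
        rw [← hx]
        rw [← mul_assoc, inv_mul_cancel₀ hx0, one_mul]
  let V : ValuationSubring K :=
    { carrier := {x | ∃ a b : A, D a b ∧ f a ≠ 0 ∧ x * f a = f b}
      one_mem' := ⟨1, 1, hrefl 1, by simpa [hf0] using h01, by simp⟩
      zero_mem' := ⟨1, 0, hzero 1, by simpa [hf0] using h01, by simp⟩
      neg_mem' := by
        rintro x ⟨a, b, hab, ha, hx⟩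
        exact ⟨a, -b, hneg a b hab, ha, by rw [map_neg, ← hx]; ring⟩
      mul_mem' := by
        rintro x y ⟨a, b, hab, ha, hx⟩ ⟨c, d, hcd, hc, hy⟩
        refine ⟨a * c, b * d, ?_, ?_, ?_⟩
        · exact htrans _ _ _ (hmul a b c hab)
            (by simpa [mul_comm] using hmul c d b hcd)
        · rw [map_mul]; exact mul_ne_zero ha hc
        · rw [map_mul, map_mul, ← hx, ← hy]; ring
      add_mem' := by
        rintro x y ⟨a, b, hab, ha, hx⟩ ⟨c, d, hcd, hc, hy⟩
        refine ⟨a * c, b * c + a * d, ?_, ?_, ?_⟩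
        · exact hadd _ _ _ (hmul a b c hab)
            (by simpa [mul_comm] using hmul c d a hcd)
        · rw [map_mul]; exact mul_ne_zero ha hc
        · rw [map_add, map_mul, map_mul, map_mul, ← hx, ← hy]; ring
      mem_or_inv_mem' := hVtot }
  -- the key equivalence
  have key : ∀ a b : A, D a b ↔ V.valuation (f b) ≤ V.valuation (f a) := by
    intro a b
    by_cases ha : f a = 0
    · have h0a : D 0 a := (hf0 a).1 ha
      rw [ha, map_zero, le_zero_iff, Valuation.zero_iff, hf0]
      constructor
      · exact fun hab => htrans 0 a b h0a hab
      · exact fun h0b => htrans a 0 b (hzero a) h0b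
    · have hva : (0 : V.ValueGroup) < V.valuation (f a) := by
        rw [zero_lt_iff, Ne, Valuation.zero_iff]
        exact ha
      rw [← div_le_one₀ hva, ← map_div₀ (V.valuation : Valuation K V.ValueGroup),
        ValuationSubring.valuation_le_one_iff]
      constructor
      · intro hab
        exact ⟨a, b, hab, ha, div_mul_cancel₀ _ ha⟩
      · rintro ⟨c, d, hcd, hc, heq⟩
        have h2 : f b * f c = f d * f a := by
          rw [div_mul_eq_mul_div, div_eq_iff ha] at heq
          exact heq
        have h3 : D 0 (b * c - d * a) := by
          apply (hf0 _).1
          rw [map_sub, map_mul, map_mul, h2, sub_self]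
        have h4 : D (a * c) (d * a) := by
          have := hmul c d a hcd
          rwa [mul_comm c a] at this
        have h5 : D (a * c) (b * c) := by
          refine hmod _ _ _ ?_ h4
          have := hneg 0 _ h3
          rwa [neg_sub] at this
        exact hcanc a b c (fun h0c => hc ((hf0 c).2 h0c)) h5
  refine ⟨V.ValueGroup, inferInstance, V.valuation.comap f, ?_, ?_⟩
  · intro a b
    exact key a b
  · intro Γ₀' _ w hw x y
    exact (key y x).symm.trans (hw y x)
end

section
/- Let |' be a p-divisibility on a commutative ring A with ℚ ⊆ A, and let | be a maximal element (under inclusion) among p-divisibilities extending |'. Then | admits cancellation: for all a, b, c ∈ A with 0∤c, ac|bc implies a|b. -/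
theorem stmt_12 (p : ℕ) (hp : p.Prime) {A : Type*} [CommRing A] [Algebra ℚ A]
    (D' D : A → A → Prop) (hD' : IsPDivisibility p D') (hD : IsPDivisibility p D)
    (hext : ∀ a b : A, D' a b → D a b)
    (hmax : ∀ E : A → A → Prop, IsPDivisibility p E → (∀ a b : A, D' a b → E a b) →
      (∀ a b : A, D a b → E a b) → ∀ a b : A, E a b → D a b) :
    ∀ a b c : A, ¬ D 0 c → D (a * c) (b * c) → D a b := by
  intro a b c hc hac
  obtain ⟨⟨hrefl, htrans, hsub, hmul, hnz⟩, h6, h7⟩ := hD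
  set E : A → A → Prop := fun x y => D (x * c) (y * c) with hEdef
  have hEp : IsPDivisibility p E := by
    refine ⟨⟨fun x => hrefl _, fun x y z h1 h2 => htrans _ _ _ h1 h2,
      fun x y z h1 h2 => ?_, fun x y z h => ?_, ?_⟩, fun x hx h => ?_, fun x y => ?_⟩
    · have := hsub _ _ _ h1 h2
      simpa [E, sub_mul] using this
    · have := hmul _ _ z h
      simpa [E, mul_right_comm] using this
    · simpa [E] using hc
    · apply h6 (x * c) (by simpa [E] using hx)
      simpa [E, mul_assoc] using h
    · have := hmul _ _ c (h7 x y)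
      simpa [E] using this
  exact hmax E hEp (fun x y h => hmul _ _ c (hext _ _ h)) (fun x y h => hmul _ _ c h) a b hac
end

section
/- A commutative ring A with ℚ ⊆ A admits a p-divisibility if and only if there exists a unital ring homomorphism δ from A into some p-valued field (a field of characteristic 0 carrying a p-valuation). -/
namespace Stmt13

variable {A : Type*} [CommRing A] {p : ℕ} {D : A → A → Prop}

section Basic

variable (h : IsPDivisibility p D)
include h

lemma drefl (a : A) : D a a := h.1.1 a
lemma dtrans {a b c : A} : D a b → D b c → D a c := h.1.2.1 a b c
lemma dsub {a b c : A} : D a b → D a c → D a (b - c) := h.1.2.2.1 a b c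
lemma dmulr {a b : A} (c : A) : D a b → D (a * c) (b * c) := h.1.2.2.2.1 a b c
lemma dnot01 : ¬ D 0 1 := h.1.2.2.2.2
lemma dax6 {a : A} : ¬ D 0 a → ¬ D ((p : A) * a) a := h.2.1 a
lemma dax7 (a b : A) : D ((p : A) * ((a ^ p * b - b ^ p * a) ^ 2 - (b ^ (p + 1)) ^ 2))
    ((a ^ p * b - b ^ p * a) * b ^ (p + 1)) := h.2.2 a b

lemma dzero (a : A) : D a 0 := by
  have := dsub h (drefl h a) (drefl h a); simpa using this

lemma dneg {a b : A} (hab : D a b) : D a (-b) := by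
  have := dsub h (dzero h a) hab; simpa using this

lemma dadd {a b c : A} (hab : D a b) (hac : D a c) : D a (b + c) := by
  have := dsub h hab (dneg h hac); simpa using this

lemma dnatmul {a b : A} (hab : D a b) (n : ℕ) : D a ((n : A) * b) := by
  induction n with
  | zero => simpa using dzero h a
  | succ k ih =>
      have := dadd h ih hab
      have e : ((k : A) * b) + b = ((k+1 : ℕ) : A) * b := by push_cast; ring
      rwa [e] at this

lemma dmul {a b c d : A} (hab : D a b) (hcd : D c d) : D (a * c) (b * d) := by
  refine dtrans h (dmulr h c hab) ?_
  have := dmulr h b hcd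
  rwa [mul_comm c b, mul_comm d b] at this

lemma dpow {a b : A} (hab : D a b) (n : ℕ) : D (a ^ n) (b ^ n) := by
  induction n with
  | zero => simpa using drefl h 1
  | succ k ih =>
      have := dmul h ih hab
      simpa [pow_succ] using this

lemma dzero_mul {a : A} (c : A) (ha : D 0 a) : D 0 (a * c) := by
  have := dmulr h c ha; simpa using this

lemma done_nat (n : ℕ) : D 1 (n : A) := by
  have := dnatmul h (drefl h 1) n; simpa using this

/-- From `D 0 a` everything divides `a`. -/
lemma dzero_all {a : A} (b : A) (ha : D 0 a) : D b a := dtrans h (dzero h b) ha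

end Basic

/-- The radical of the support of `D`. -/
def InRad (D : A → A → Prop) (x : A) : Prop := ∃ n : ℕ, D 0 (x ^ (n + 1))

section Rad

variable (h : IsPDivisibility p D)
include h

lemma inRad_zero : InRad D (0 : A) := ⟨0, by simpa using drefl h 0⟩

lemma inRad_mul {x : A} (c : A) (hx : InRad D x) : InRad D (x * c) := by
  obtain ⟨n, hn⟩ := hx
  exact ⟨n, by rw [mul_pow]; exact dzero_mul h _ hn⟩

lemma inRad_pow_le {x : A} {n m : ℕ} (hnm : n ≤ m) (hx : D 0 (x ^ (n+1))) :
    D 0 (x ^ (m+1)) := by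
  have : x ^ (m+1) = x ^ (n+1) * x ^ (m - n) := by
    rw [← pow_add]; congr 1; omega
  rw [this]; exact dzero_mul h _ hx

lemma inRad_add {x y : A} (hx : InRad D x) (hy : InRad D y) : InRad D (x + y) := by
  obtain ⟨n, hn⟩ := hx
  obtain ⟨m, hm⟩ := hy
  refine ⟨n + m + 1, ?_⟩
  rw [add_pow]
  have : ∀ k ∈ Finset.range (n + m + 2 + 1),
      D 0 (x ^ k * y ^ (n + m + 2 - k) * ((n+m+2).choose k : A)) := by
    intro k hk
    rcases le_or_gt (n+1) k with hkn | hkn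
    · have : x ^ k * y ^ (n+m+2-k) * ((n+m+2).choose k : A)
          = x ^ (n+1) * (x ^ (k - (n+1)) * y ^ (n+m+2-k) * ((n+m+2).choose k : A)) := by
        rw [← mul_assoc, ← mul_assoc, ← pow_add]
        congr 3
        omega
      rw [this]; exact dzero_mul h _ hn
    · have : x ^ k * y ^ (n+m+2-k) * ((n+m+2).choose k : A)
          = y ^ (m+1) * (y ^ (n+m+2-k-(m+1)) * x ^ k * ((n+m+2).choose k : A)) := by
        rw [← mul_assoc, ← mul_assoc]
        rw [show y ^ (m+1) * y ^ (n+m+2-k-(m+1)) = y ^ (n+m+2-k) by rw [← pow_add]; congr 1; omega]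
        ring
      rw [this]; exact dzero_mul h _ hm
  refine Finset.sum_induction _ (fun t => D 0 t) (fun a b ha hb => ?_) (dzero h 0) this
  · have := dadd h ha hb; simpa using this

lemma not_inRad_one : ¬ InRad D (1 : A) := by
  rintro ⟨n, hn⟩
  rw [one_pow] at hn
  exact dnot01 h hn

/-- The key certificate-killing lemma. -/
lemma certC {Y W : A} (hYW : D Y W) (hz : InRad D (Y - (p : A) * W)) : InRad D Y := by
  set z := Y - (p : A) * W with hzdef
  obtain ⟨n, hn⟩ := hz
  have hYpW : D Y ((p : A) * W) := dnatmul h hYW p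
  have hYz : D Y z := dsub h (drefl h Y) hYpW
  have key : ∀ k, k ≤ n + 1 → D ((p : A) * Y ^ (n+1)) (Y ^ k * z ^ (n + 1 - k)) := by
    intro k
    induction k with
    | zero => intro _; simpa using dzero_all h _ hn
    | succ j ih =>
        intro hj
        have hj' : j ≤ n + 1 := by omega
        have hjn : j ≤ n := by omega
        have e1 : Y ^ (j+1) * z ^ (n + 1 - (j+1))
            = (p : A) * (W * Y ^ j * z ^ (n - j)) + Y ^ j * z ^ (n + 1 - j) := by
          have e2 : n + 1 - (j+1) = n - j := by omega
          have e3 : n + 1 - j = (n - j) + 1 := by omega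
          rw [e2, e3]
          have : Y = (p : A) * W + z := by rw [hzdef]; ring
          calc Y ^ (j+1) * z ^ (n-j) = Y ^ j * z ^ (n-j) * Y := by ring
          _ = Y ^ j * z ^ (n-j) * ((p:A) * W + z) := by rw [← this]
          _ = (p : A) * (W * Y ^ j * z ^ (n - j)) + Y ^ j * z ^ ((n-j)+1) := by ring
        rw [e1]
        refine dadd h ?_ (ih hj')
        -- D (p * Y^(n+1)) (p * (W * Y^j * z^(n-j)))
        have hY1 : D (Y ^ (n+1)) (W * Y ^ j * z ^ (n - j)) := by
          have : D (Y * Y ^ j * Y ^ (n - j)) (W * Y ^ j * z ^ (n - j)) :=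
            dmul h (dmul h hYW (drefl h (Y ^ j))) (dpow h hYz (n - j))
          have e : Y * Y ^ j * Y ^ (n - j) = Y ^ (n+1) := by
            rw [mul_assoc, ← pow_add, ← pow_succ']
            congr 1
            omega
          rwa [e] at this
        exact dmul h (drefl h (p : A)) hY1
  have hfin := key (n+1) le_rfl
  simp only [Nat.sub_self, pow_zero, mul_one] at hfin
  by_contra hY
  have hY' : ¬ D 0 (Y ^ (n+1)) := fun hc => hY ⟨n, hc⟩
  exact dax6 h hY' hfin

end Rad


section Zorn

/-- Relation attached to a set of pairs. -/
def RelOf (M : Set (A × A)) : A → A → Prop := fun a b => (a, b) ∈ M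

lemma exists_maximal (hD : IsPDivisibility p D) :
    ∃ M : Set (A × A), IsPDivisibility p (RelOf M) ∧
      ∀ N : Set (A × A), IsPDivisibility p (RelOf N) → M ⊆ N → N ⊆ M := by
  set S : Set (Set (A × A)) := {N | IsPDivisibility p (RelOf N)} with hS
  have hx : {q : A × A | D q.1 q.2} ∈ S := hD
  have key : ∀ c ⊆ S, IsChain (· ⊆ ·) c → c.Nonempty → ∃ ub ∈ S, ∀ s ∈ c, s ⊆ ub := by
    intro c hcS hchain hcne
    obtain ⟨E0, hE0⟩ := hcne
    refine ⟨⋃₀ c, ?_, fun s hs => Set.subset_sUnion_of_mem hs⟩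
    have mem_iff : ∀ a b : A, RelOf (⋃₀ c) a b ↔ ∃ E ∈ c, (a, b) ∈ E := by
      intro a b; simp [RelOf, Set.mem_sUnion]
    constructor
    · refine ⟨?_, ?_, ?_, ?_, ?_⟩
      · intro a; exact (mem_iff a a).2 ⟨E0, hE0, drefl (hcS hE0) a⟩
      · intro a b c hab hbc
        obtain ⟨E1, hE1, h1⟩ := (mem_iff _ _).1 hab
        obtain ⟨E2, hE2, h2⟩ := (mem_iff _ _).1 hbc
        rcases hchain.total hE1 hE2 with hle | hle
        · exact (mem_iff _ _).2 ⟨E2, hE2, dtrans (hcS hE2) (hle h1) h2⟩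
        · exact (mem_iff _ _).2 ⟨E1, hE1, dtrans (hcS hE1) h1 (hle h2)⟩
      · intro a b c hab hac
        obtain ⟨E1, hE1, h1⟩ := (mem_iff _ _).1 hab
        obtain ⟨E2, hE2, h2⟩ := (mem_iff _ _).1 hac
        rcases hchain.total hE1 hE2 with hle | hle
        · exact (mem_iff _ _).2 ⟨E2, hE2, dsub (hcS hE2) (hle h1) h2⟩
        · exact (mem_iff _ _).2 ⟨E1, hE1, dsub (hcS hE1) h1 (hle h2)⟩
      · intro a b c hab
        obtain ⟨E1, hE1, h1⟩ := (mem_iff _ _).1 hab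
        exact (mem_iff _ _).2 ⟨E1, hE1, dmulr (hcS hE1) c h1⟩
      · intro hc
        obtain ⟨E1, hE1, h1⟩ := (mem_iff _ _).1 hc
        exact dnot01 (hcS hE1) h1
    · constructor
      · intro a h0a hpa
        obtain ⟨E1, hE1, h1⟩ := (mem_iff _ _).1 hpa
        refine dax6 (hcS hE1) (fun h0 => h0a ?_) h1
        exact (mem_iff _ _).2 ⟨E1, hE1, h0⟩
      · intro a b
        exact (mem_iff _ _).2 ⟨E0, hE0, dax7 (hcS hE0) a b⟩
  obtain ⟨M, -, hmax⟩ := zorn_subset_nonempty S key _ hx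
  exact ⟨M, hmax.1, fun N hN hMN => hmax.2 hN hMN⟩

end Zorn

section Maximal

variable {M : Set (A × A)}

/-- Cancellation for a maximal p-divisibility. -/
lemma dcancel (hm : IsPDivisibility p (RelOf M))
    (hmax : ∀ N : Set (A × A), IsPDivisibility p (RelOf N) → M ⊆ N → N ⊆ M)
    {b x y : A} (hb : ¬ InRad (RelOf M) b) {n : ℕ}
    (hxy : RelOf M (x * b ^ n) (y * b ^ n)) : RelOf M x y := by
  set Dm := RelOf M with hDm
  set N : Set (A × A) := {q | ∃ k : ℕ, Dm (q.1 * b ^ k) (q.2 * b ^ k)} with hN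
  have mono : ∀ {u v : A} {k m : ℕ}, k ≤ m → Dm (u * b ^ k) (v * b ^ k) →
      Dm (u * b ^ m) (v * b ^ m) := by
    intro u v k m hkm huv
    have := dmulr hm (b ^ (m - k)) huv
    have e : ∀ w : A, w * b ^ k * b ^ (m - k) = w * b ^ m := by
      intro w; rw [mul_assoc, ← pow_add]; congr 2; omega
    rwa [e u, e v] at this
  have hNdiv : IsPDivisibility p (RelOf N) := by
    constructor
    · refine ⟨?_, ?_, ?_, ?_, ?_⟩
      · intro a; exact ⟨0, drefl hm _⟩
      · rintro a b' c ⟨k1, h1⟩ ⟨k2, h2⟩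
        exact ⟨max k1 k2, dtrans hm (mono (le_max_left _ _) h1) (mono (le_max_right _ _) h2)⟩
      · rintro a b' c ⟨k1, h1⟩ ⟨k2, h2⟩
        refine ⟨max k1 k2, ?_⟩
        have := dsub hm (mono (le_max_left _ _) h1) (mono (le_max_right _ _) h2)
        have e : b' * b ^ max k1 k2 - c * b ^ max k1 k2 = (b' - c) * b ^ max k1 k2 := by ring
        rwa [e] at this
      · rintro a b' c ⟨k1, h1⟩
        refine ⟨k1, ?_⟩
        have := dmulr hm c h1
        have e : ∀ w : A, w * b ^ k1 * c = w * c * b ^ k1 := by intro w; ring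
        rwa [e a, e b'] at this
      · rintro ⟨k, hk⟩
        rcases Nat.eq_zero_or_pos k with rfl | hkpos
        · simp only [pow_zero, mul_one] at hk
          exact dnot01 hm hk
        · apply hb
          refine ⟨k - 1, ?_⟩
          have e : k - 1 + 1 = k := by omega
          rw [e]
          simpa using hk
    · constructor
      · rintro a h0a ⟨k, hk⟩
        have e : (p : A) * a * b ^ k = (p : A) * (a * b ^ k) := by ring
        rw [e] at hk
        have h0 : ¬ Dm 0 (a * b ^ k) := by
          intro hc
          exact h0a ⟨k, by simpa using hc⟩
        exact (dax6 hm h0) hk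
      · intro a b'
        exact ⟨0, by simpa using dax7 hm a b'⟩
  have hsub : M ⊆ N := by
    rintro ⟨u, v⟩ huv
    exact ⟨0, by simp only [pow_zero, mul_one]; exact huv⟩
  have : N ⊆ M := hmax N hNdiv hsub
  exact this ⟨n, hxy⟩

/-- The radical support of a maximal p-divisibility, as an ideal. -/
def radIdeal (hm : IsPDivisibility p (RelOf M)) : Ideal A where
  carrier := {x | InRad (RelOf M) x}
  add_mem' := fun hx hy => inRad_add hm hx hy
  zero_mem' := inRad_zero hm
  smul_mem' := fun c x hx => by
    simpa [smul_eq_mul, mul_comm] using inRad_mul hm c hx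

lemma mem_radIdeal_iff (hm : IsPDivisibility p (RelOf M)) {x : A} :
    x ∈ radIdeal hm ↔ InRad (RelOf M) x := Iff.rfl

lemma radIdeal_prime (hm : IsPDivisibility p (RelOf M))
    (hmax : ∀ N : Set (A × A), IsPDivisibility p (RelOf N) → M ⊆ N → N ⊆ M) :
    (radIdeal hm).IsPrime := by
  constructor
  · intro htop
    have : (1 : A) ∈ radIdeal hm := htop ▸ Submodule.mem_top
    exact not_inRad_one hm this
  · intro x y hxy
    by_cases hx : InRad (RelOf M) x
    · exact Or.inl hx
    · right
      obtain ⟨n, hn⟩ := hxy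
      have e : (x * y) ^ (n+1) = y ^ (n+1) * x ^ (n+1) := by ring
      rw [e] at hn
      have h0 : RelOf M (0 * x ^ (n+1)) (y ^ (n+1) * x ^ (n+1)) := by simpa using hn
      have := dcancel hm hmax hx h0
      exact ⟨n, by simpa using this⟩

end Maximal

section VSub

variable {F : Type*} [Field F] {O : ValuationSubring F}

lemma isUnit_subtype_iff {x : F} (hx : x ∈ O) :
    IsUnit (⟨x, hx⟩ : O) ↔ x ≠ 0 ∧ x⁻¹ ∈ O := by
  constructor
  · intro hu
    obtain ⟨y, hy⟩ := isUnit_iff_exists_inv.mp hu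
    have hy' : x * (y : F) = 1 := by
      have := congrArg (fun a : O => (a : F)) hy
      simpa using this
    have hx0 : x ≠ 0 := by
      intro h0; rw [h0, zero_mul] at hy'; exact zero_ne_one hy'
    have : x⁻¹ = (y : F) := by
      field_simp
      linear_combination -hy'
    exact ⟨hx0, this ▸ y.2⟩
  · rintro ⟨hx0, hxi⟩
    exact isUnit_iff_exists_inv.mpr ⟨⟨x⁻¹, hxi⟩, Subtype.ext (by simp [mul_inv_cancel₀ hx0])⟩

lemma memMaxIdeal_iff {x : F} :
    MemMaxIdeal O x ↔ ∃ hx : x ∈ O, (⟨x, hx⟩ : O) ∈ IsLocalRing.maximalIdeal O := by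
  constructor
  · rintro ⟨hx, h2⟩
    refine ⟨hx, ?_⟩
    rw [IsLocalRing.mem_maximalIdeal, mem_nonunits_iff, isUnit_subtype_iff hx]
    rcases h2 with h0 | hni
    · rintro ⟨h, -⟩; exact h h0
    · rintro ⟨-, h⟩; exact hni h
  · rintro ⟨hx, h⟩
    rw [IsLocalRing.mem_maximalIdeal, mem_nonunits_iff, isUnit_subtype_iff hx] at h
    refine ⟨hx, ?_⟩
    by_cases h0 : x = 0
    · exact Or.inl h0
    · exact Or.inr fun hi => h ⟨h0, hi⟩

lemma memMax_zero : MemMaxIdeal O (0 : F) :=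
  ⟨zero_mem _, Or.inl rfl⟩

lemma memMax_not_one : ¬ MemMaxIdeal O (1 : F) := by
  rintro ⟨-, h | h⟩
  · exact one_ne_zero h
  · exact h (by simpa using one_mem O)

lemma memMax_add {x y : F} (hx : MemMaxIdeal O x) (hy : MemMaxIdeal O y) :
    MemMaxIdeal O (x + y) := by
  rw [memMaxIdeal_iff] at hx hy ⊢
  obtain ⟨hx1, hx2⟩ := hx
  obtain ⟨hy1, hy2⟩ := hy
  refine ⟨add_mem hx1 hy1, ?_⟩
  have : (⟨x + y, add_mem hx1 hy1⟩ : O) = ⟨x, hx1⟩ + ⟨y, hy1⟩ := by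
    apply Subtype.ext; simp
  rw [this]
  exact Ideal.add_mem _ hx2 hy2

lemma memMax_mul {x y : F} (hx : MemMaxIdeal O x) (hy : y ∈ O) :
    MemMaxIdeal O (x * y) := by
  rw [memMaxIdeal_iff] at hx ⊢
  obtain ⟨hx1, hx2⟩ := hx
  refine ⟨mul_mem hx1 hy, ?_⟩
  have : (⟨x * y, mul_mem hx1 hy⟩ : O) = ⟨x, hx1⟩ * ⟨y, hy⟩ := by
    apply Subtype.ext; simp
  rw [this]
  exact Ideal.mul_mem_right _ _ hx2

lemma memMax_sub {x y : F} (hx : MemMaxIdeal O x) (hy : MemMaxIdeal O y) :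
    MemMaxIdeal O (x - y) := by
  have : MemMaxIdeal O (y * (-1)) := memMax_mul hy (neg_mem (one_mem O))
  have h2 := memMax_add hx this
  simpa [sub_eq_add_neg] using h2

/-- If `x` is in the maximal ideal then `1 - x` is a unit of `O`. -/
lemma one_sub_unit {x : F} (hx : MemMaxIdeal O x) :
    (1 - x) ≠ 0 ∧ (1 - x)⁻¹ ∈ O := by
  have hne : (1 : F) - x ≠ 0 := by
    intro h0
    have : x = 1 := (sub_eq_zero.mp h0).symm
    exact memMax_not_one (this ▸ hx)
  refine ⟨hne, ?_⟩
  by_contra hni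
  have hmem : (1 - x) ∈ O := by
    rcases O.mem_or_inv_mem (1 - x) with h | h
    · exact h
    · exact absurd h hni
  have hmm : MemMaxIdeal O (1 - x) := ⟨hmem, Or.inr hni⟩
  have h1 : MemMaxIdeal O (1 : F) := by
    have := memMax_add hmm hx
    simpa using this
  exact memMax_not_one h1

end VSub


section Reverse

variable {F : Type*} [Field F] {O : ValuationSubring F} {p : ℕ}

lemma fermat_int (hp : p.Prime) (n : ℕ) : ∃ k : ℤ, (n:ℤ)^p - n = p * k := by
  haveI : Fact p.Prime := ⟨hp⟩
  have hdvd : (p:ℤ) ∣ (n:ℤ)^p - n := by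
    rw [← ZMod.intCast_zmod_eq_zero_iff_dvd]
    push_cast
    rw [ZMod.pow_card]
    ring
  obtain ⟨k, hk⟩ := hdvd
  exact ⟨k, hk⟩

lemma pow_p_sub_self_mem (hp : p.Prime) (hpm : MemMaxIdeal O (p:F))
    (hres : ∀ x : F, x ∈ O → ∃ n : Fin p, MemMaxIdeal O (x - (n:ℕ)))
    {x : F} (hx : x ∈ O) : MemMaxIdeal O (x ^ p - x) := by
  obtain ⟨n, hn⟩ := hres x hx
  set X : O := ⟨x, hx⟩ with hX
  set N : O := (((n : ℕ) : ℤ) : O) with hNdef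
  have hXN : X - N ∈ IsLocalRing.maximalIdeal O := by
    rw [memMaxIdeal_iff] at hn
    obtain ⟨h1, h2⟩ := hn
    have : (⟨x - ((n:ℕ):F), h1⟩ : O) = X - N := by
      apply Subtype.ext
      push_cast [hX, hNdef]
      rfl
    rwa [this] at h2
  have hPmem : ((p : ℕ) : O) ∈ IsLocalRing.maximalIdeal O := by
    rw [memMaxIdeal_iff] at hpm
    obtain ⟨h1, h2⟩ := hpm
    have : (⟨((p:ℕ):F), h1⟩ : O) = ((p:ℕ) : O) := by
      apply Subtype.ext; push_cast; rfl
    rwa [this] at h2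
  obtain ⟨k, hk⟩ := fermat_int hp n
  have hNp : N ^ p - N ∈ IsLocalRing.maximalIdeal O := by
    have hcast : N ^ p - N = ((p:ℕ) : O) * ((k : ℤ) : O) := by
      have := congrArg (fun t : ℤ => (t : O)) hk
      push_cast at this
      simpa [hNdef] using this
    rw [hcast]
    exact Ideal.mul_mem_right _ _ hPmem
  obtain ⟨c, hc2⟩ := sub_dvd_pow_sub_pow X N p
  have hXpX : X ^ p - X ∈ IsLocalRing.maximalIdeal O := by
    have : X ^ p - X = (X - N) * c + (N ^ p - N) + (X - N) * (-1) := by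
      rw [← hc2]; ring
    rw [this]
    exact Ideal.add_mem _ (Ideal.add_mem _ (Ideal.mul_mem_right _ _ hXN) hNp)
      (Ideal.mul_mem_right _ _ hXN)
  rw [memMaxIdeal_iff]
  refine ⟨sub_mem (pow_mem hx p) hx, ?_⟩
  have : (⟨x ^ p - x, sub_mem (pow_mem hx p) hx⟩ : O) = X ^ p - X := by
    apply Subtype.ext; push_cast [hX]; rfl
  rwa [this]

lemma memMax_of_notMem {z : F} (hz : z ∉ O) : MemMaxIdeal O z⁻¹ := by
  have hz0 : z ≠ 0 := fun h => hz (h ▸ zero_mem _)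
  have hzi : z⁻¹ ∈ O := by
    rcases O.mem_or_inv_mem z with h | h
    · exact absurd h hz
    · exact h
  exact ⟨hzi, Or.inr (by rwa [inv_inv])⟩

lemma no_artin_schreier (hp : p.Prime) (hpm : MemMaxIdeal O (p:F))
    (hres : ∀ x : F, x ∈ O → ∃ n : Fin p, MemMaxIdeal O (x - (n:ℕ)))
    (z : F) : (z ^ p - z) ^ 2 ≠ 1 := by
  intro heq
  by_cases hz : z ∈ O
  · have ht := pow_p_sub_self_mem hp hpm hres hz
    have := memMax_mul ht ht.1
    rw [← sq, heq] at this
    exact memMax_not_one this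
  · have hz0 : z ≠ 0 := fun h => hz (h ▸ zero_mem _)
    have hy := memMax_of_notMem hz
    set y := z⁻¹ with hydef
    have hyO : y ∈ O := hy.1
    have hp2 : 2 ≤ p := hp.two_le
    have hyp1 : MemMaxIdeal O (y ^ (p-1)) := by
      have : y ^ (p-1) = y * y ^ (p-2) := by
        rw [← pow_succ']
        congr 1
        omega
      rw [this]
      exact memMax_mul hy (pow_mem hyO _)
    have hid : (z ^ p - z) * y ^ p = 1 - y ^ (p-1) := by
      have hzy : z * y = 1 := by rw [hydef]; exact mul_inv_cancel₀ hz0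
      have h1 : z ^ p * y ^ p = 1 := by rw [← mul_pow, hzy, one_pow]
      have h2 : z * y ^ p = y ^ (p-1) := by
        have : y ^ p = y * y ^ (p-1) := by
          rw [← pow_succ']
          congr 1
          omega
        rw [this, ← mul_assoc, hzy, one_mul]
      rw [sub_mul, h1, h2]
    set s := 1 - y ^ (p-1) with hsdef
    obtain ⟨hs0, hsi⟩ := one_sub_unit hyp1
    have hs0' : s ≠ 0 := hs0
    have hsq : y ^ (2*p) = s ^ 2 := by
      have := congrArg (fun w => w ^ 2) hid
      rw [mul_pow, heq, one_mul] at this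
      rw [← this, ← pow_mul]
      ring_nf
    have h2p : MemMaxIdeal O (y ^ (2*p)) := by
      have : y ^ (2*p) = y * y ^ (2*p - 1) := by
        rw [← pow_succ']
        congr 1
        omega
      rw [this]
      exact memMax_mul hy (pow_mem hyO _)
    have hone : MemMaxIdeal O 1 := by
      have : (1 : F) = y ^ (2*p) * (s⁻¹ * s⁻¹) := by
        rw [hsq]
        field_simp
      rw [this]
      exact memMax_mul h2p (mul_mem hsi hsi)
    exact memMax_not_one hone

lemma gamma_mem_rev (hp : p.Prime) (hO : IsPValuationRing p O) (hpF : (p:F) ≠ 0)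
    (z : F) (ht0 : z ^ p - z ≠ 0) :
    (z ^ p - z) / ((p:F) * ((z ^ p - z) ^ 2 - 1)) ∈ O := by
  obtain ⟨hpm, hmin, hres⟩ := hO
  set t := z ^ p - z with htdef
  have ht2 : t ^ 2 - 1 ≠ 0 := by
    intro h
    exact no_artin_schreier hp hpm hres z (by linear_combination h)
  by_cases hz : z ∈ O
  · have ht : MemMaxIdeal O t := pow_p_sub_self_mem hp hpm hres hz
    have h1 : t / (p:F) ∈ O := hmin t ht
    have ht2m : MemMaxIdeal O (t ^ 2) := by
      rw [sq]; exact memMax_mul ht ht.1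
    obtain ⟨hu0, hui⟩ := one_sub_unit ht2m
    have heq : t / ((p:F) * (t ^ 2 - 1)) = (t / (p:F)) * (-(1 - t^2)⁻¹) := by
      rw [div_mul_eq_div_div]
      field_simp
      ring
    rw [heq]
    exact mul_mem h1 (neg_mem hui)
  · -- z outside O
    have hz0 : z ≠ 0 := fun h => hz (h ▸ zero_mem _)
    have hy := memMax_of_notMem hz
    set y := z⁻¹ with hydef
    have hyO : y ∈ O := hy.1
    have hp2 : 2 ≤ p := hp.two_le
    -- t ∉ O
    have htO : t ∉ O := by
      intro htO
      apply hz
      have hzy : z * y = 1 := by rw [hydef]; exact mul_inv_cancel₀ hz0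
      have hzeq : z = t * y ^ (p-1) + y ^ (p-2) := by
        rw [htdef]
        have h1 : z ^ p * y ^ (p-1) = z := by
          have : z ^ p = z * z ^ (p-1) := by
            rw [← pow_succ']
            congr 1
            omega
          rw [this, mul_assoc, ← mul_pow, hzy, one_pow, mul_one]
        have h2 : z * y ^ (p-1) = y ^ (p-2) := by
          have hyy : y ^ (p-1) = y * y ^ (p-2) := by
            rw [← pow_succ']
            congr 1
            omega
          rw [hyy, ← mul_assoc, hzy, one_mul]
        rw [sub_mul, h1, h2]
        ring
      rw [hzeq]
      exact add_mem (mul_mem htO (pow_mem hyO _)) (pow_mem hyO _)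
    have hti := memMax_of_notMem htO
    have ht2i : MemMaxIdeal O (t⁻¹ * t⁻¹) := memMax_mul hti hti.1
    obtain ⟨hv0, hvi⟩ := one_sub_unit ht2i
    have h1 : t⁻¹ / (p:F) ∈ O := hmin _ hti
    have heq : t / ((p:F) * (t ^ 2 - 1)) = (t⁻¹ / (p:F)) * (1 - t⁻¹ * t⁻¹)⁻¹ := by
      have e1 : 1 - t⁻¹ * t⁻¹ = (t^2 - 1)/t^2 := by field_simp
      rw [e1, inv_div]
      field_simp
    rw [heq]
    exact mul_mem h1 hvi


lemma key_reverse (hp : p.Prime) (hO : IsPValuationRing p O) (hpF : (p:F) ≠ 0) (x y : F) :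
    ∃ c, c ∈ O ∧ (x^p*y - y^p*x) * y^(p+1)
      = ((p:F) * ((x^p*y - y^p*x)^2 - (y^(p+1))^2)) * c := by
  by_cases hy : y = 0
  · refine ⟨0, zero_mem O, ?_⟩
    subst hy
    simp
  · set z := x / y with hz
    set t := z^p - z with ht
    have hu : x^p*y - y^p*x = t * y^(p+1) := by
      rw [ht, hz]
      have h1 : (x/y)^p * y^(p+1) = x^p * y := by
        rw [div_pow, pow_succ]
        field_simp
      have h2 : (x/y) * y^(p+1) = x * y^p := by
        rw [pow_succ']
        field_simp
      rw [sub_mul, h1, h2]; ring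
    by_cases ht0 : t = 0
    · refine ⟨0, zero_mem O, ?_⟩
      rw [hu, ht0]
      simp
    · have hc := gamma_mem_rev hp hO hpF z ht0
      refine ⟨_, hc, ?_⟩
      rw [hu]
      have ht2 : t^2 - 1 ≠ 0 := by
        intro hcon
        exact no_artin_schreier hp hO.1 hO.2.2 z (by rw [← ht]; linear_combination hcon)
      rw [← ht]
      field_simp

theorem reverse_dir {A : Type*} [CommRing A] (hp : p.Prime) {F : Type*} [Field F] [CharZero F]
    (O : ValuationSubring F) (hO : IsPValuationRing p O) (δ : A →+* F) :
    IsPDivisibility p (fun a b => ∃ c, c ∈ O ∧ δ b = δ a * c) := by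
  have hpF : (p:F) ≠ 0 := Nat.cast_ne_zero.mpr hp.ne_zero
  refine ⟨⟨?_, ?_, ?_, ?_, ?_⟩, ?_, ?_⟩
  · intro a; exact ⟨1, one_mem O, (mul_one _).symm⟩
  · rintro a b c ⟨c1, hc1, h1⟩ ⟨c2, hc2, h2⟩
    exact ⟨c1 * c2, mul_mem hc1 hc2, by rw [h2, h1]; ring⟩
  · rintro a b c ⟨c1, hc1, h1⟩ ⟨c2, hc2, h2⟩
    exact ⟨c1 - c2, sub_mem hc1 hc2, by rw [map_sub, h1, h2]; ring⟩
  · rintro a b c ⟨c1, hc1, h1⟩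
    exact ⟨c1, hc1, by rw [map_mul, map_mul, h1]; ring⟩
  · rintro ⟨c, -, hc⟩
    rw [map_one, map_zero, zero_mul] at hc
    exact one_ne_zero hc
  · rintro a h0a ⟨c, hcO, hc⟩
    have hda : δ a ≠ 0 := by
      intro h
      exact h0a ⟨0, zero_mem O, by rw [h, map_zero, zero_mul]⟩
    rw [map_mul, map_natCast] at hc
    have hpc : (p : F) * c = 1 := by
      have h2 : δ a * ((p:F) * c - 1) = 0 := by linear_combination -hc
      rcases mul_eq_zero.mp h2 with h | h
      · exact absurd h hda
      · linear_combination h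
    have hcinv : c = ((p:F))⁻¹ := by
      field_simp
      linear_combination hpc
    obtain ⟨-, hp2⟩ := hO.1
    rcases hp2 with h | h
    · exact hpF h
    · exact h (hcinv ▸ hcO)
  · intro a b
    obtain ⟨c, hcO, hc⟩ := key_reverse hp hO hpF (δ a) (δ b)
    refine ⟨c, hcO, ?_⟩
    simp only [map_mul, map_sub, map_pow, map_natCast]
    exact hc


end Reverse




section ForwardVal

variable {F : Type*} [Field F] {O : ValuationSubring F} {p : ℕ}

lemma tpow_memMax (hpmm : MemMaxIdeal O (p:F)) (hpF : (p:F) ≠ 0)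
    (hγ : ∀ z : F, (z^p - z)^2 - 1 ≠ 0 ∧ (z^p - z)/((p:F)*((z^p - z)^2 - 1)) ∈ O)
    {x : F} (hxO : x ∈ O) : MemMaxIdeal O (x^p - x) := by
  obtain ⟨h1, h2⟩ := hγ x
  set t := x^p - x with htdef
  have htO : t ∈ O := sub_mem (pow_mem hxO p) hxO
  have hid : t = (p:F) * ((t^2 - 1) * (t / ((p:F)*(t^2-1)))) := by
    field_simp
  rw [hid]
  exact memMax_mul hpmm (mul_mem (sub_mem (pow_mem htO 2) (one_mem O)) h2)

lemma residue_lemma (hp : p.Prime) (hpmm : MemMaxIdeal O (p:F)) {x : F} (hxO : x ∈ O)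
    (htm : MemMaxIdeal O (x^p - x)) : ∃ n : Fin p, MemMaxIdeal O (x - (n:ℕ)) := by
  classical
  set X : O := ⟨x, hxO⟩ with hX
  have hXT : X^p - X ∈ IsLocalRing.maximalIdeal O := by
    rw [memMaxIdeal_iff] at htm
    obtain ⟨h1, h2⟩ := htm
    have e : (⟨x^p - x, h1⟩ : O) = X^p - X := by
      apply Subtype.ext; push_cast [hX]; rfl
    rwa [e] at h2
  have hPmem : ((p:ℕ) : O) ∈ IsLocalRing.maximalIdeal O := by
    rw [memMaxIdeal_iff] at hpmm
    obtain ⟨h1, h2⟩ := hpmm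
    have e : (⟨((p:ℕ):F), h1⟩ : O) = ((p:ℕ) : O) := by
      apply Subtype.ext; push_cast; rfl
    rwa [e] at h2
  set φ := IsLocalRing.residue O with hφ
  have hone : ∀ y : O, y ∈ IsLocalRing.maximalIdeal O → φ y = 0 :=
    fun y hy => (IsLocalRing.residue_eq_zero_iff y).mpr hy
  have hnroot : ∀ n : Fin p, (φ (((n:ℕ):ℤ) : O))^p - φ (((n:ℕ):ℤ):O) = 0 := by
    intro n
    obtain ⟨kk, hkk⟩ := fermat_int hp (n:ℕ)
    have hcast : ((((n:ℕ):ℤ):O))^p - (((n:ℕ):ℤ):O) = ((p:ℕ):O) * ((kk:ℤ):O) := by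
      have h0 := congrArg (fun t : ℤ => (t : O)) hkk
      push_cast at h0 ⊢
      convert h0 using 2
    have h0 := hone _ (hcast ▸ Ideal.mul_mem_right _ _ hPmem)
    simpa [map_sub, map_pow] using h0
  have hxroot : (φ X)^p - φ X = 0 := by
    simpa [map_sub, map_pow] using hone _ hXT
  have hinj : ∀ i j : Fin p, φ (((i:ℕ):ℤ):O) = φ (((j:ℕ):ℤ):O) → i = j := by
    intro i j hij
    by_contra hne
    set c : ℤ := ((i:ℕ):ℤ) - ((j:ℕ):ℤ) with hc
    have hi := i.2
    have hj := j.2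
    have hij' : (i:ℕ) ≠ (j:ℕ) := fun hh => hne (Fin.ext hh)
    have hc0 : c ≠ 0 := by omega
    have hclt : c.natAbs < p := by omega
    have hcpos : 0 < c.natAbs := by omega
    have hndvd : ¬ (p ∣ c.natAbs) := fun hdvd => by
      have := Nat.le_of_dvd hcpos hdvd
      omega
    have hgcd : Nat.gcd c.natAbs p = 1 := Nat.Coprime.gcd_eq_one
      (Nat.coprime_comm.mp ((Nat.Prime.coprime_iff_not_dvd hp).mpr hndvd))
    have hbez := Nat.gcd_eq_gcd_ab c.natAbs p
    rw [hgcd] at hbez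
    have hcmem : ((c:ℤ):O) ∈ IsLocalRing.maximalIdeal O := by
      have e : ((c:ℤ):O) = (((i:ℕ):ℤ):O) - (((j:ℕ):ℤ):O) := by
        rw [hc]; push_cast; ring
      rw [e, ← IsLocalRing.residue_eq_zero_iff]
      show φ _ = 0
      rw [map_sub, hij, sub_self]
    have habs : (((c.natAbs:ℤ)):O) ∈ IsLocalRing.maximalIdeal O := by
      rcases Int.natAbs_eq c with he | he
      · rw [← he]; exact hcmem
      · have : ((c.natAbs:ℤ):O) = -((c:ℤ):O) := by
          rw [show ((c.natAbs:ℤ)) = -c from by omega]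
          push_cast; ring
        rw [this]; exact neg_mem hcmem
    have hone_mem : (1 : O) ∈ IsLocalRing.maximalIdeal O := by
      have e := congrArg (fun t : ℤ => (t : O)) hbez
      push_cast at e
      rw [show (1:O) = ((c.natAbs:ℤ):O) * ((Nat.gcdA c.natAbs p : ℤ):O)
          + ((p:ℕ):O) * ((Nat.gcdB c.natAbs p : ℤ):O) from by push_cast; exact_mod_cast e]
      exact Ideal.add_mem _ (Ideal.mul_mem_right _ _ habs) (Ideal.mul_mem_right _ _ hPmem)
    rw [IsLocalRing.mem_maximalIdeal, mem_nonunits_iff] at hone_mem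
    exact hone_mem isUnit_one
  set k := IsLocalRing.ResidueField O
  set f : Polynomial k := Polynomial.X^p - Polynomial.X with hf
  have hp1 : 1 < p := hp.one_lt
  have hmonic : f.Monic := by
    rw [hf]
    refine Polynomial.monic_X_pow_sub ?_
    calc Polynomial.degree (Polynomial.X : Polynomial k) = 1 := Polynomial.degree_X
    _ < (p : WithBot ℕ) := by exact_mod_cast Nat.one_lt_cast.mpr hp1
  have hf0 : f ≠ 0 := hmonic.ne_zero
  have hdeg : f.natDegree ≤ p := by
    refine le_trans (Polynomial.natDegree_sub_le _ _) ?_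
    simp only [Polynomial.natDegree_X_pow, Polynomial.natDegree_X]
    omega
  have hroots : ∀ y : k, y^p - y = 0 → y ∈ f.roots := by
    intro y hy
    rw [Polynomial.mem_roots']
    refine ⟨hf0, ?_⟩
    simp [hf, Polynomial.IsRoot, hy]
  by_contra hno
  push_neg at hno
  have hfresh : φ X ∉ (Finset.univ : Finset (Fin p)).image (fun n : Fin p => φ (((n:ℕ):ℤ):O)) := by
    intro hin
    obtain ⟨n, -, hn⟩ := Finset.mem_image.mp hin
    apply hno n
    have hmem : X - (((n:ℕ):ℤ):O) ∈ IsLocalRing.maximalIdeal O := by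
      rw [← IsLocalRing.residue_eq_zero_iff]
      show φ _ = 0
      rw [map_sub, hn, sub_self]
    rw [memMaxIdeal_iff]
    have hmemF : x - ((n:ℕ):F) ∈ O := by
      refine sub_mem hxO (by exact_mod_cast natCast_mem O.toSubring (n:ℕ))
    refine ⟨hmemF, ?_⟩
    have e : (⟨x - ((n:ℕ):F), hmemF⟩ : O) = X - (((n:ℕ):ℤ):O) := by
      apply Subtype.ext; push_cast [hX]; rfl
    rw [e]; exact hmem
  set S := insert (φ X) ((Finset.univ : Finset (Fin p)).image (fun n : Fin p => φ (((n:ℕ):ℤ):O))) with hS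
  have hcard : S.card = p + 1 := by
    rw [hS, Finset.card_insert_of_notMem hfresh,
      Finset.card_image_of_injOn (fun i _ j _ hij => hinj i j hij)]
    simp
  have hsub : S ⊆ f.roots.toFinset := by
    intro y hy
    rw [Multiset.mem_toFinset]
    rcases Finset.mem_insert.mp hy with rfl | hy2
    · exact hroots _ hxroot
    · obtain ⟨n, -, rfl⟩ := Finset.mem_image.mp hy2
      exact hroots _ (hnroot n)
  have h1 := Finset.card_le_card hsub
  have h2 := Multiset.toFinset_card_le f.roots
  have h3 := Polynomial.card_roots' f
  omega

/-- Integrality of the Kochen operator plus `p` in the maximal ideal give a p-valuation. -/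
lemma forward_pval (hp : p.Prime) (hpF : (p:F) ≠ 0)
    (hpmm : MemMaxIdeal O (p:F))
    (hγ : ∀ z : F, (z^p - z)^2 - 1 ≠ 0 ∧ (z^p - z)/((p:F)*((z^p - z)^2 - 1)) ∈ O) :
    IsPValuationRing p O := by
  refine ⟨hpmm, ?_, ?_⟩
  · -- minimality
    intro x hx
    by_cases hx0 : x = 0
    · rw [hx0, zero_div]; exact zero_mem O
    obtain ⟨h1, h2⟩ := hγ x
    set t := x^p - x with htdef
    have hp2 : 2 ≤ p := hp.two_le
    have hxp1 : MemMaxIdeal O (x^(p-1)) := by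
      have e : x^(p-1) = x * x^(p-2) := by
        rw [← pow_succ']
        congr 1
        omega
      rw [e]
      exact memMax_mul hx (pow_mem hx.1 _)
    obtain ⟨hs0, hsi⟩ := one_sub_unit hxp1
    have hid : x / (p:F) = (t^2 - 1) * (t / ((p:F)*(t^2-1))) * (-(1 - x^(p-1))⁻¹) := by
      have ht : t = x^p - x := htdef
      have hxpp : x^p = x * x^(p-1) := by
        rw [← pow_succ']
        congr 1
        omega
      field_simp
      rw [htdef, hxpp]
      ring
    rw [hid]
    exact mul_mem (mul_mem (sub_mem (pow_mem (sub_mem (pow_mem hx.1 p) hx.1) 2) (one_mem O)) h2)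
      (neg_mem hsi)
  · -- residue
    intro x hxO
    exact residue_lemma hp hpmm hxO (tpow_memMax hpmm hpF hγ hxO)

end ForwardVal


section Good

variable {K : Type*} [Field K]

/-- The subring of `K` of fractions controlled by the divisibility `D`. -/
def goodSubring (hm : IsPDivisibility p D) {r : Ideal A} (hrp : r.IsPrime) (δ : A →+* K) :
    Subring K where
  carrier := {c | ∃ Y W : A, Y ∉ r ∧ D Y W ∧ c * δ Y = δ W}
  one_mem' := ⟨1, 1, fun hh => hrp.1 ((Ideal.eq_top_iff_one r).mpr hh), drefl hm 1, by simp⟩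
  mul_mem' := by
    rintro c1 c2 ⟨Y1, W1, hY1, d1, e1⟩ ⟨Y2, W2, hY2, d2, e2⟩
    refine ⟨Y1*Y2, W1*W2, ?_, dmul hm d1 d2, ?_⟩
    · intro hmem
      rcases hrp.mem_or_mem hmem with hcase | hcase
      exacts [hY1 hcase, hY2 hcase]
    · rw [map_mul, map_mul]
      linear_combination (c2 * δ Y2) * e1 + (δ W1) * e2
  zero_mem' := ⟨1, 0, fun hh => hrp.1 ((Ideal.eq_top_iff_one r).mpr hh), dzero hm 1, by simp⟩
  add_mem' := by
    rintro c1 c2 ⟨Y1, W1, hY1, d1, e1⟩ ⟨Y2, W2, hY2, d2, e2⟩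
    refine ⟨Y1*Y2, W1*Y2 + W2*Y1, ?_, ?_, ?_⟩
    · intro hmem
      rcases hrp.mem_or_mem hmem with hcase | hcase
      exacts [hY1 hcase, hY2 hcase]
    · refine dadd hm (dmulr hm Y2 d1) ?_
      have h3 := dmulr hm Y1 d2
      rwa [mul_comm Y2 Y1] at h3
    · rw [map_add, map_mul, map_mul, map_mul]
      linear_combination (δ Y2) * e1 + (δ Y1) * e2
  neg_mem' := by
    rintro c ⟨Y, W, hY, d, e⟩
    exact ⟨Y, -W, hY, dneg hm d, by rw [map_neg]; linear_combination -e⟩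

lemma mem_goodSubring {hm : IsPDivisibility p D} {r : Ideal A} {hrp : r.IsPrime} {δ : A →+* K}
    {c : K} : c ∈ goodSubring hm hrp δ ↔ ∃ Y W : A, Y ∉ r ∧ D Y W ∧ c * δ Y = δ W :=
  Iff.rfl

end Good

section ForwardMain

universe u

set_option maxHeartbeats 1000000 in
set_option synthInstance.maxHeartbeats 400000 in
theorem forward_dir {A : Type u} [CommRing A] [Algebra ℚ A] {p : ℕ} (hp : p.Prime)
    (D : A → A → Prop) (hD : IsPDivisibility p D) :
    ∃ (F : Type u) (_ : Field F) (_ : CharZero F) (O : ValuationSubring F)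
      (_ : A →+* F), IsPValuationRing p O := by
  classical
  obtain ⟨M, hm, hmax⟩ := exists_maximal hD
  set Dm := RelOf M with hDm
  have hpQ : (p : ℚ) ≠ 0 := Nat.cast_ne_zero.mpr hp.ne_zero
  have hpA : ∀ n : ℕ, ((p:A))^n * (algebraMap ℚ A (((p:ℚ))⁻¹^n)) = 1 := by
    intro n
    have e1 : ((p:A))^n = algebraMap ℚ A ((p:ℚ)^n) := by
      rw [map_pow, map_natCast]
    rw [e1, ← map_mul]
    rw [show ((p:ℚ))^n * ((p:ℚ))⁻¹^n = 1 by rw [← mul_pow, mul_inv_cancel₀ hpQ, one_pow]]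
    exact map_one _
  have hpnot : ¬ InRad Dm ((p:A)) := by
    rintro ⟨n, hn⟩
    have h2 := dzero_mul hm (algebraMap ℚ A (((p:ℚ))⁻¹^(n+1))) hn
    rw [hpA (n+1)] at h2
    exact dnot01 hm h2
  set r := radIdeal hm with hrdef
  haveI hrp : r.IsPrime := radIdeal_prime hm hmax
  set Q := A ⧸ r with hQ
  set K := FractionRing Q with hK
  set δ : A →+* K := (algebraMap Q K).comp (Ideal.Quotient.mk r) with hδ
  have hker : ∀ a : A, δ a = 0 ↔ a ∈ r := by
    intro a
    rw [hδ]
    simp only [RingHom.comp_apply]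
    constructor
    · intro h
      have h2 : (Ideal.Quotient.mk r) a = 0 := by
        apply IsFractionRing.injective Q K
        rw [h, map_zero]
      exact Ideal.Quotient.eq_zero_iff_mem.mp h2
    · intro h
      rw [Ideal.Quotient.eq_zero_iff_mem.mpr h, map_zero]
  have hCZ : CharZero K := by
    refine charZero_of_injective_ringHom (f := δ.comp (algebraMap ℚ A)) ?_
    exact RingHom.injective _
  haveI := hCZ
  set G : Subring K := goodSubring hm hrp δ with hG
  have h1r : (1:A) ∉ r := fun hh => not_inRad_one hm hh
  have hGp : ((p:ℕ) : K) ∈ G := mem_goodSubring.mpr ⟨1, (p:A), h1r, done_nat hm p, by rw [map_one, mul_one, map_natCast]⟩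
  -- the certificate argument: p is not invertible in G
  have hcert : ∀ c : K, c ∈ G → (p:K) * c ≠ 1 := by
    intro c hcG h1
    obtain ⟨Y, W, hY, hYW, he⟩ := mem_goodSubring.mp hcG
    have h2 : δ (Y - (p:A) * W) = 0 := by
      rw [map_sub, map_mul, map_natCast]
      have h3 : δ Y = (p:K) * δ W := by
        calc δ Y = ((p:K) * c) * δ Y := by rw [h1, one_mul]
        _ = (p:K) * (c * δ Y) := by ring
        _ = (p:K) * δ W := by rw [he]
      rw [h3]; ring
    have hz : Y - (p:A)*W ∈ r := (hker _).mp h2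
    exact hY (certC hm hYW hz)
  have hspan : Ideal.span {(⟨((p:ℕ):K), hGp⟩ : G)} ≠ ⊤ := by
    intro htop
    rw [Ideal.span_singleton_eq_top] at htop
    obtain ⟨v, hv⟩ := isUnit_iff_exists_inv.mp htop
    have hv2 : (p:K) * (v:K) = 1 := by
      have := congrArg (fun t : G => (t : K)) hv
      push_cast at this
      exact this
    exact hcert (v:K) v.2 hv2
  obtain ⟨mG, hmGmax, hmGle⟩ := Ideal.exists_le_maximal _ hspan
  haveI : mG.IsPrime := hmGmax.isPrime
  set R := Localization.AtPrime mG with hR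
  have hunit : ∀ s : mG.primeCompl, IsUnit ((G.subtype : G →+* K) s) := by
    rintro ⟨s, hs⟩
    refine isUnit_iff_ne_zero.mpr ?_
    intro h0
    apply hs
    have hs0 : s = 0 := by
      apply Subtype.ext
      simpa using h0
    rw [hs0]
    exact mG.zero_mem
  set f : R →+* K := IsLocalization.lift hunit with hf
  obtain ⟨O, hOsub, hOloc⟩ := IsLocalRing.exists_factor_valuationRing f
  have hfg : ∀ g : G, f (algebraMap G R g) = (g : K) := fun g => IsLocalization.lift_eq hunit g
  have hGO : ∀ c : K, c ∈ G → c ∈ O := by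
    intro c hc
    have h2 := hOsub (algebraMap G R ⟨c, hc⟩)
    rwa [hfg] at h2
  have hmmO : ∀ g : G, g ∈ mG → MemMaxIdeal O (g : K) := by
    intro g hg
    have h1 : algebraMap G R g ∈ IsLocalRing.maximalIdeal R :=
      (IsLocalization.AtPrime.to_map_mem_maximal_iff R mG g).mpr hg
    have h2 : ¬ IsUnit (algebraMap G R g) := by
      rw [IsLocalRing.mem_maximalIdeal, mem_nonunits_iff] at h1
      exact h1
    have hmem : (g:K) ∈ O := hGO _ g.2
    rw [memMaxIdeal_iff]
    refine ⟨hmem, ?_⟩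
    rw [IsLocalRing.mem_maximalIdeal, mem_nonunits_iff]
    intro hu
    apply h2
    refine hOloc.map_nonunit _ ?_
    have e : (f.codRestrict O.toSubring hOsub) (algebraMap G R g) = ⟨(g:K), hmem⟩ := by
      apply Subtype.ext
      show f (algebraMap G R g) = (g:K)
      exact hfg g
    rw [e]
    exact hu
  have hpmm : MemMaxIdeal O ((p:ℕ):K) :=
    hmmO ⟨((p:ℕ):K), hGp⟩ (hmGle (Ideal.subset_span (Set.mem_singleton _)))
  have hpK : ((p:ℕ):K) ≠ 0 := Nat.cast_ne_zero.mpr hp.ne_zero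
  -- Kochen operator is G-integral
  have hγ : ∀ z : K, (z^p - z)^2 - 1 ≠ 0 ∧ (z^p - z)/((p:K)*((z^p - z)^2 - 1)) ∈ O := by
    intro z
    obtain ⟨xq, yq, hyq, hzeq⟩ := IsFractionRing.div_surjective (A := Q) z
    obtain ⟨a, ha⟩ := Ideal.Quotient.mk_surjective xq
    obtain ⟨b, hb⟩ := Ideal.Quotient.mk_surjective yq
    have hbr : b ∉ r := by
      intro hmem
      have : yq = 0 := by rw [← hb]; exact Ideal.Quotient.eq_zero_iff_mem.mpr hmem
      rw [this] at hyq
      exact (mem_nonZeroDivisors_iff_ne_zero.mp hyq) rfl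
    set u : A := a^p*b - b^p*a with hu
    set w : A := b^(p+1) with hw
    have hδb : δ b ≠ 0 := fun h0 => hbr ((hker b).mp h0)
    have hδw : δ w ≠ 0 := by
      rw [hw, map_pow]
      exact pow_ne_zero _ hδb
    have hde : Dm ((p:A)*(u^2-w^2)) (u*w) := dax7 hm a b
    have hnd : u^2 - w^2 ∉ r := by
      intro hmem
      obtain ⟨n, hn⟩ := (mem_radIdeal_iff hm).mp hmem
      have h0d : Dm 0 (((p:A)*(u^2-w^2))^(n+1)) := by
        have h2 := dzero_mul hm (((p:A))^(n+1)) hn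
        have e : (u^2-w^2)^(n+1) * ((p:A))^(n+1) = ((p:A)*(u^2-w^2))^(n+1) := by
          rw [← mul_pow]; ring_nf
        rwa [e] at h2
      have h3 := dtrans hm h0d (dpow hm hde (n+1))
      have huw : u * w ∈ r := (mem_radIdeal_iff hm).mpr ⟨n, h3⟩
      rcases hrp.mem_or_mem huw with hucase | hwcase
      · have hw2 : w^2 ∈ r := by
          have e : w^2 = u^2 - (u^2 - w^2) := by ring
          rw [e]
          exact Ideal.sub_mem r (by rw [sq]; exact Ideal.mul_mem_right _ _ hucase) hmem
        have hw' : w ∈ r := hrp.mem_of_pow_mem 2 hw2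
        rw [hw] at hw'
        exact hbr (hrp.mem_of_pow_mem _ hw')
      · rw [hw] at hwcase
        exact hbr (hrp.mem_of_pow_mem _ hwcase)
    have hdnr : (p:A)*(u^2-w^2) ∉ r := by
      intro hmem
      rcases hrp.mem_or_mem hmem with hcase | hcase
      · exact hpnot hcase
      · exact hnd hcase
    have hδd : δ ((p:A)*(u^2-w^2)) ≠ 0 := fun h0 => hdnr ((hker _).mp h0)
    have hδu2w2 : δ (u^2 - w^2) ≠ 0 := fun h0 => hnd ((hker _).mp h0)
    have hza : z = δ a / δ b := by
      rw [← hzeq, ← ha, ← hb]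
      rfl
    have hKe : (δ a)^p * (δ b) - (δ b)^p * (δ a) = ((δ a / δ b)^p - δ a / δ b) * (δ b)^(p+1) := by
      have h1 : (δ a/δ b)^p * (δ b)^(p+1) = (δ a)^p * (δ b) := by
        rw [div_pow, pow_succ]
        rw [← mul_assoc, div_mul_cancel₀ _ (pow_ne_zero _ hδb)]
      have h2 : (δ a/δ b) * (δ b)^(p+1) = (δ a) * (δ b)^p := by
        rw [pow_succ']
        rw [← mul_assoc, div_mul_cancel₀ _ hδb]
      rw [sub_mul, h1, h2]; ring
    have ht : z^p - z = δ u / δ w := by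
      rw [hza, hu, hw]
      rw [eq_div_iff hδw]
      rw [map_sub, map_mul, map_mul, map_pow, map_pow, map_pow]
      linear_combination -hKe
    have hδwsq : δ (w^2) ≠ 0 := by
      rw [map_pow]; exact pow_ne_zero _ hδw
    have eδu : δ u = δ a^p * δ b - δ b^p * δ a := by
      rw [hu]; simp only [map_sub, map_mul, map_pow]
    have eδw : δ w = δ b^(p+1) := by rw [hw, map_pow]
    have e3 : δ (u^2 - w^2) = (δ u)^2 - (δ w)^2 := by simp only [map_sub, map_pow]
    have e4 : δ (w^2) = (δ w)^2 := map_pow _ _ _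
    have hne2 : (δ u)^2 - (δ w)^2 ≠ 0 := fun hcon => hδu2w2 (by rw [e3, hcon])
    have ht2 : (z^p - z)^2 - 1 = δ (u^2 - w^2) / δ (w^2) := by
      rw [ht, e3, e4, div_pow, div_sub' (pow_ne_zero 2 hδw)]
      congr 1
      ring
    have hne : (z^p - z)^2 - 1 ≠ 0 := by
      rw [ht2]
      exact div_ne_zero hδu2w2 hδwsq
    refine ⟨hne, ?_⟩
    have e1 : δ (u*w) = δ u * δ w := map_mul _ _ _
    have e2 : δ ((p:A)*(u^2-w^2)) = (p:K) * ((δ u)^2 - (δ w)^2) := by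
      simp only [map_mul, map_natCast, map_sub, map_pow]
    have hval : (z^p - z)/((p:K)*((z^p - z)^2 - 1)) = δ (u*w) / δ ((p:A)*(u^2-w^2)) := by
      rw [ht2, ht, e1, e2, e3, e4]
      rw [div_eq_div_iff
        (mul_ne_zero hpK (div_ne_zero hne2 (pow_ne_zero 2 hδw))) (mul_ne_zero hpK hne2)]
      have hinv : δ w * (δ w)⁻¹ = 1 := mul_inv_cancel₀ hδw
      linear_combination (-(δ u * (p:K) * ((δ u)^2 - (δ w)^2) * (δ w)⁻¹)) * hinv
    rw [hval]
    refine hGO _ (mem_goodSubring.mpr ⟨(p:A)*(u^2-w^2), u*w, hdnr, hde, ?_⟩)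
    exact div_mul_cancel₀ _ hδd
  refine ⟨K, inferInstance, hCZ, O, δ, forward_pval hp hpK hpmm hγ⟩

end ForwardMain

end Stmt13

universe u

theorem stmt_13 (p : ℕ) (hp : p.Prime) {A : Type u} [CommRing A] [Algebra ℚ A] :
    (∃ D : A → A → Prop, IsPDivisibility p D) ↔
    ∃ (F : Type u) (_ : Field F) (_ : CharZero F) (O : ValuationSubring F)
      (_ : A →+* F), IsPValuationRing p O := by
  constructor
  · rintro ⟨D, hD⟩
    exact Stmt13.forward_dir hp D hD
  · rintro ⟨F, hF, hCZ, O, δ, hO⟩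
    exact ⟨_, Stmt13.reverse_dir hp O hO δ⟩
end

section
/- The only p-archimedean divisibility | on the field ℚ with p∤1 is the one induced by the p-adic valuation: a|b ⟺ v_p(a) ≤ v_p(b). -/
section Aux
variable {p : ℕ} {D : ℚ → ℚ → Prop}
variable (hp : p.Prime)
variable (hrefl : ∀ a, D a a) (htrans : ∀ a b c : ℚ, D a b → D b c → D a c)
  (hsub : ∀ a b c : ℚ, D a b → D a c → D a (b - c))
  (hmul : ∀ a b c : ℚ, D a b → D (a * c) (b * c))
  (harch : ∀ a : ℚ, ∃ m : ℤ, D ((p : ℚ) ^ m) a)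

include hrefl hsub in
lemma auxD_zero' (a : ℚ) : D a 0 := by simpa using hsub a a a (hrefl a) (hrefl a)

include hrefl hsub in
lemma auxD_add' {x y : ℚ} (hx : D 1 x) (hy : D 1 y) : D 1 (x + y) := by
  have h1 : D 1 (0 - y) := hsub 1 0 y (auxD_zero' hrefl hsub 1) hy
  simpa using hsub 1 x (0 - y) hx (by simpa using h1)

include htrans hmul in
lemma auxD_mul' {x y : ℚ} (hx : D 1 x) (hy : D 1 y) : D 1 (x * y) := by
  have := hmul 1 y x
  simp only [one_mul] at this
  exact htrans 1 x (x * y) hx (by rw [mul_comm]; exact this hy)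

include hrefl hsub in
lemma auxD_int' (n : ℤ) : D 1 ((n : ℤ) : ℚ) := by
  induction n using Int.induction_on with
  | zero => simpa using auxD_zero' hrefl hsub 1
  | succ n ih => push_cast at ih ⊢; simpa using auxD_add' hrefl hsub ih (hrefl 1)
  | pred n ih => push_cast at ih ⊢; simpa using hsub 1 _ 1 ih (hrefl 1)

include hmul in
lemma auxD_div' {a b : ℚ} (ha : a ≠ 0) : D a b ↔ D 1 (b / a) := by
  constructor
  · intro h
    simpa [mul_inv_cancel₀ ha, div_eq_mul_inv] using hmul a b a⁻¹ h
  · intro h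
    simpa [div_mul_cancel₀ _ ha] using hmul 1 (b / a) a h

include hp hrefl htrans hsub hmul harch in
lemma auxD_den (b : ℕ) (hb : 0 < b) (hnd : ¬ p ∣ b) : D 1 (1 / (b : ℚ)) := by
  have hp0 : (p : ℚ) ≠ 0 := Nat.cast_ne_zero.mpr hp.ne_zero
  have hb0 : (b : ℚ) ≠ 0 := Nat.cast_ne_zero.mpr hb.ne'
  obtain ⟨m, hm⟩ := harch (1 / (b : ℚ))
  have h1 : D 1 ((1 / (b : ℚ)) / (p : ℚ) ^ m) :=
    (auxD_div' hmul (zpow_ne_zero m hp0)).mp hm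
  have key : ∃ k : ℕ, D 1 ((p : ℚ) ^ k / (b : ℚ)) := by
    by_cases h : 0 ≤ m
    · refine ⟨0, ?_⟩
      have hpm : D 1 ((p : ℚ) ^ m) := by
        have := auxD_int' hrefl hsub (p ^ m.toNat : ℤ)
        push_cast at this
        rwa [← zpow_natCast, Int.toNat_of_nonneg h] at this
      have := auxD_mul' htrans hmul h1 hpm
      rw [div_mul_cancel₀ _ (zpow_ne_zero m hp0)] at this
      simpa using this
    · refine ⟨(-m).toNat, ?_⟩
      have heq : (1 / (b : ℚ)) / (p : ℚ) ^ m = (p : ℚ) ^ ((-m).toNat) / (b : ℚ) := by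
        rw [← zpow_natCast, Int.toNat_of_nonneg (by omega : (0:ℤ) ≤ -m), zpow_neg]
        field_simp
      rwa [heq] at h1
  obtain ⟨k, hk⟩ := key
  have hcop : Nat.Coprime (p ^ k) b := (hp.coprime_iff_not_dvd.mpr hnd).pow_left k
  obtain ⟨u, v, huv⟩ := Nat.isCoprime_iff_coprime.mpr hcop
  have hcast : (u : ℚ) * (p : ℚ) ^ k + (v : ℚ) * (b : ℚ) = 1 := by
    exact_mod_cast congrArg (Int.cast : ℤ → ℚ) huv
  have keyq : (1 : ℚ) / (b : ℚ) = (u : ℚ) * ((p : ℚ) ^ k / (b : ℚ)) + (v : ℚ) := by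
    field_simp
    linear_combination -hcast
  rw [keyq]
  exact auxD_add' hrefl hsub
    (auxD_mul' htrans hmul (auxD_int' hrefl hsub u) hk) (auxD_int' hrefl hsub v)

include hp hrefl htrans hsub hmul in
lemma auxD_not_dvd_den (hp1 : ¬ D (p : ℚ) 1) {x : ℚ} (h : D 1 x) : ¬ p ∣ x.den := by
  intro hdvd
  have hp0 : (p : ℚ) ≠ 0 := Nat.cast_ne_zero.mpr hp.ne_zero
  set d := x.den / p with hd
  have hden_eq : x.den = p * d := (Nat.mul_div_cancel' hdvd).symm
  have hd0 : (d : ℚ) ≠ 0 := by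
    have : d ≠ 0 := by
      intro h0
      exact x.pos.ne' (by rw [hden_eq, h0, mul_zero])
    exact Nat.cast_ne_zero.mpr this
  have hnum : ¬ (p : ℤ) ∣ x.num := by
    rw [Int.natCast_dvd]
    intro hdn
    exact hp.one_lt.ne' (Nat.eq_one_of_dvd_coprimes x.reduced hdn hdvd)
  have hxd : x * (d : ℚ) = (x.num : ℚ) / (p : ℚ) := by
    have h1 : (x.den : ℚ) = (p : ℚ) * (d : ℚ) := by exact_mod_cast congrArg (Nat.cast : ℕ → ℚ) hden_eq
    have hden0 : (x.den : ℚ) ≠ 0 := by rw [h1]; exact mul_ne_zero hp0 hd0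
    have h3 : x * (x.den : ℚ) = (x.num : ℚ) := Rat.mul_den_eq_num x
    rw [eq_div_iff hp0, mul_assoc, mul_comm (d : ℚ) (p : ℚ), ← h1]
    exact h3
  have hDnp : D 1 ((x.num : ℚ) / (p : ℚ)) := by
    rw [← hxd]
    exact auxD_mul' htrans hmul h (by exact_mod_cast auxD_int' hrefl hsub (d : ℤ))
  have hcop : Nat.Coprime p x.num.natAbs :=
    hp.coprime_iff_not_dvd.mpr (fun hdn => hnum (Int.natCast_dvd.mpr hdn))
  have hicop : IsCoprime (p : ℤ) x.num :=
    Int.isCoprime_iff_gcd_eq_one.mpr (by simpa [Int.gcd] using hcop)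
  obtain ⟨u, v, huv⟩ := hicop
  have hcast : (u : ℚ) * (p : ℚ) + (v : ℚ) * (x.num : ℚ) = 1 := by
    exact_mod_cast congrArg (Int.cast : ℤ → ℚ) huv
  have keyq : (1 : ℚ) / (p : ℚ) = (u : ℚ) + (v : ℚ) * ((x.num : ℚ) / (p : ℚ)) := by
    field_simp
    linear_combination -hcast
  have hDinvp : D 1 (1 / (p : ℚ)) := by
    rw [keyq]
    exact auxD_add' hrefl hsub (auxD_int' hrefl hsub u)
      (auxD_mul' htrans hmul (auxD_int' hrefl hsub v) hDnp)
  have := hmul 1 (1 / (p : ℚ)) (p : ℚ) hDinvp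
  rw [one_mul, one_div, inv_mul_cancel₀ hp0] at this
  exact hp1 this

end Aux

lemma auxval_nonneg_iff {p : ℕ} (hp : p.Prime) {x : ℚ} :
    0 ≤ padicValRat p x ↔ ¬ p ∣ x.den := by
  haveI : Fact p.Prime := ⟨hp⟩
  rw [padicValRat]
  constructor
  · intro h hdvd
    have hnum : ¬ (p : ℤ) ∣ x.num := by
      rw [Int.natCast_dvd]
      intro hd
      exact hp.one_lt.ne' (Nat.eq_one_of_dvd_coprimes x.reduced hd hdvd)
    rw [padicValInt.eq_zero_of_not_dvd hnum] at h
    have h1 : 1 ≤ padicValNat p x.den :=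
      one_le_padicValNat_of_dvd x.pos.ne' hdvd
    omega
  · intro h
    have : padicValNat p x.den = 0 := padicValNat.eq_zero_of_not_dvd h
    simp [this]

theorem stmt_14 (p : ℕ) (hp : p.Prime) (D : ℚ → ℚ → Prop)
    (hD : IsDivisibility D)
    (harch : ∀ a : ℚ, ∃ m : ℤ, D ((p : ℚ) ^ m) a)
    (hp1 : ¬ D (p : ℚ) 1) :
    ∀ a b : ℚ, D a b ↔ (b = 0 ∨ (a ≠ 0 ∧ padicValRat p a ≤ padicValRat p b)) := by
  obtain ⟨hrefl, htrans, hsub, hmul, h01⟩ := hD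
  haveI : Fact p.Prime := ⟨hp⟩
  have hone : ∀ x : ℚ, x ≠ 0 → (D 1 x ↔ 0 ≤ padicValRat p x) := by
    intro x hx
    rw [auxval_nonneg_iff hp]
    constructor
    · exact fun h => auxD_not_dvd_den hp hrefl htrans hsub hmul hp1 h
    · intro h
      have h1 : D 1 ((x.num : ℤ) : ℚ) := auxD_int' hrefl hsub x.num
      have h2 : D 1 (1 / (x.den : ℚ)) :=
        auxD_den hp hrefl htrans hsub hmul harch x.den x.pos h
      have := auxD_mul' htrans hmul h1 h2
      rwa [mul_one_div, Rat.num_div_den] at this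
  intro a b
  by_cases ha : a = 0
  · subst ha
    constructor
    · intro h
      left
      by_contra hb
      have := hmul 0 b b⁻¹ h
      rw [zero_mul, mul_inv_cancel₀ hb] at this
      exact h01 this
    · rintro (rfl | ⟨h, _⟩)
      · exact auxD_zero' hrefl hsub 0
      · exact absurd rfl h
  · rw [auxD_div' hmul ha]
    by_cases hb : b = 0
    · subst hb
      rw [zero_div]
      constructor
      · exact fun _ => Or.inl rfl
      · exact fun _ => auxD_zero' hrefl hsub 1
    · have hba : b / a ≠ 0 := div_ne_zero hb ha
      rw [hone _ hba, padicValRat.div (p := p) hb ha, sub_nonneg]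
      constructor
      · exact fun h => Or.inr ⟨ha, h⟩
      · rintro (h | ⟨_, h⟩)
        · exact absurd h hb
        · exact h
end

section
/- Let | be a p-archimedean p-divisibility on a commutative ring A with ℚ ⊆ A, and define ord a := sup{m ∈ ℤ : p^m | a} ∈ ℤ ∪ {∞} and ‖a‖ = p^{−ord a}. Then for all a, b ∈ A and r ∈ ℚ: (a) ‖a+b‖ ≤ max(‖a‖,‖b‖); (b) ‖ab‖ ≤ ‖a‖·‖b‖; (c) ‖r‖ = |r|_p; (d) ‖ra‖ = |r|_p·‖a‖. -/
namespace Stmt15Aux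

variable {A : Type*} [CommRing A] {D : A → A → Prop}

lemma dzero (hd : IsDivisibility D) (x : A) : D x 0 := by
  simpa using hd.2.2.1 x x x (hd.1 x) (hd.1 x)

lemma dadd (hd : IsDivisibility D) {x a b : A} (h1 : D x a) (h2 : D x b) : D x (a + b) := by
  have h0 : D x (0 - b) := hd.2.2.1 x 0 b (dzero hd x) h2
  simpa [sub_neg_eq_add] using hd.2.2.1 x a (-b) h1 (by simpa using h0)

lemma dzsmul (hd : IsDivisibility D) {x a : A} (h : D x a) (n : ℤ) : D x (n • a) := by
  induction n using Int.induction_on with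
  | zero => simpa using dzero hd x
  | succ k ih => simpa [add_smul] using dadd hd ih (by simpa using h)
  | pred k ih => simpa [sub_smul] using hd.2.2.1 x _ a (by simpa using ih) h

lemma dint (hd : IsDivisibility D) {x a : A} (h : D x a) (n : ℤ) : D x ((n : A) * a) := by
  simpa [zsmul_eq_mul] using dzsmul hd h n


section

variable {A : Type*} [CommRing A] [Algebra ℚ A] {D : A → A → Prop} {p : ℕ}

/-- `p^m` as an element of `A`. -/
noncomputable def P (p : ℕ) (A : Type*) [CommRing A] [Algebra ℚ A] (m : ℤ) : A :=
  algebraMap ℚ A ((p : ℚ) ^ m)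

lemma hq0 (hp : p.Prime) : (p : ℚ) ≠ 0 := Nat.cast_ne_zero.2 hp.ne_zero

lemma Pmul (hp : p.Prime) (m n : ℤ) : P p A m * P p A n = P p A (m + n) := by
  rw [P, P, P, ← map_mul, ← zpow_add₀ (hq0 hp)]

lemma dmono (hd : IsDivisibility D) (hp : p.Prime) {m n : ℤ} (h : m ≤ n) :
    D (P p A m) (P p A n) := by
  have key : P p A n = ((((p : ℤ) ^ (n - m).toNat : ℤ)) : A) * P p A m := by
    rw [P, P]
    rw [← map_intCast (algebraMap ℚ A) ((p : ℤ) ^ (n - m).toNat), ← map_mul]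
    congr 1
    push_cast
    rw [← zpow_natCast (p : ℚ), ← zpow_add₀ (hq0 hp)]
    congr 1
    omega
  rw [key]
  exact dint hd (hd.1 _) _

lemma dmono' (hd : IsDivisibility D) (hp : p.Prime) {m n : ℤ} (h : m ≤ n) {a : A}
    (ha : D (P p A n) a) : D (P p A m) a :=
  hd.2.1 _ _ _ (dmono hd hp h) ha

lemma dshift (hd : IsDivisibility D) (hp : p.Prime) {m : ℤ} {a : A}
    (h : D (P p A m) a) (j : ℤ) :
    D (P p A (m + j)) (algebraMap ℚ A ((p : ℚ) ^ j) * a) := by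
  have h2 := hd.2.2.2.1 _ _ (P p A j) h
  rw [Pmul hp, mul_comm a (P p A j)] at h2
  exact h2

lemma dnot0 (hd : IsDivisibility D) (hp : p.Prime) (m : ℤ) : ¬ D 0 (P p A m) := by
  intro h0
  have := hd.2.2.2.1 _ _ (P p A (-m)) h0
  rw [zero_mul, Pmul hp] at this
  simp only [add_neg_cancel] at this
  apply hd.2.2.2.2
  simpa [P] using this

end

end Stmt15Aux

namespace Stmt15Aux

section
variable {p : ℕ}

lemma valZpow (hp : p.Prime) (m : ℤ) : padicValRat p ((p : ℚ) ^ m) = m := by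
  haveI : Fact p.Prime := ⟨hp⟩
  obtain ⟨n, rfl | rfl⟩ := m.eq_nat_or_neg
  · rw [zpow_natCast, padicValRat.pow _, padicValRat.self hp.one_lt]
    simp
  · rw [zpow_neg, zpow_natCast, padicValRat.inv, padicValRat.pow _,
      padicValRat.self hp.one_lt]
    simp

lemma exists_st (hp : p.Prime) {r : ℚ} (hr : r ≠ 0) :
    ∃ (s : ℤ) (t : ℕ), ¬ (p : ℤ) ∣ s ∧ ¬ p ∣ t ∧
      (t : ℚ) * r = (s : ℚ) * (p : ℚ) ^ (padicValRat p r) := by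
  haveI : Fact p.Prime := ⟨hp⟩
  set v := padicValRat p r with hv
  set u : ℚ := r * (p : ℚ) ^ (-v) with hu
  have hpq : (p : ℚ) ≠ 0 := hq0 hp
  have hz : ((p : ℚ) ^ (-v)) ≠ 0 := zpow_ne_zero _ hpq
  have hu0 : u ≠ 0 := mul_ne_zero hr hz
  have hval : padicValRat p u = 0 := by
    rw [hu, padicValRat.mul hr hz, valZpow hp, ← hv]
    ring
  have hnum0 : u.num ≠ 0 := Rat.num_ne_zero.2 hu0
  have hden0 : u.den ≠ 0 := u.den_nz
  have hcop : Nat.Coprime u.num.natAbs u.den := u.reduced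
  rw [padicValRat] at hval
  have hdennd : ¬ p ∣ u.den := by
    intro hdvd
    have hnn : ¬ p ∣ u.num.natAbs := by
      intro hn
      have h1 := Nat.dvd_gcd hn hdvd
      rw [Nat.Coprime] at hcop
      rw [hcop] at h1
      exact hp.ne_one (Nat.dvd_one.mp h1)
    have h2 : padicValInt p u.num = 0 := by
      rw [padicValInt, padicValNat.eq_zero_of_not_dvd hnn]
    have h3 : 1 ≤ padicValNat p u.den :=
      one_le_padicValNat_of_dvd hden0 hdvd
    omega
  have h4 : padicValNat p u.den = 0 := padicValNat.eq_zero_of_not_dvd hdennd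
  have hnumnd : ¬ (p : ℤ) ∣ u.num := by
    rw [Int.natCast_dvd]
    intro hn
    have h5 : 1 ≤ padicValNat p u.num.natAbs :=
      one_le_padicValNat_of_dvd (Int.natAbs_ne_zero.2 hnum0) hn
    rw [padicValInt] at hval
    omega
  refine ⟨u.num, u.den, hnumnd, hdennd, ?_⟩
  have hdenq : (u.den : ℚ) ≠ 0 := Nat.cast_ne_zero.2 hden0
  have hmul : u * u.den = u.num := by
    have := (Rat.num_div_den u).symm
    exact (eq_div_iff hdenq).mp this
  have hru : r = u * (p : ℚ) ^ v := by
    rw [hu, mul_assoc, ← zpow_add₀ hpq]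
    simp
  rw [hru]
  rw [← hmul]
  ring

end

end Stmt15Aux

namespace Stmt15Aux

section
variable {A : Type*} [CommRing A] [Algebra ℚ A] {D : A → A → Prop} {p : ℕ}

lemma bezout {a : ℤ} {b : ℕ} (ha : ¬ (p : ℤ) ∣ a) (hp : p.Prime) (N : ℕ) (hN : b = p ^ N) :
    ∃ x y : ℤ, x * a + y * (p : ℤ) ^ N = 1 := by
  have h1 : Nat.Coprime (p ^ N) a.natAbs := by
    apply Nat.Coprime.pow_left
    rw [Nat.Prime.coprime_iff_not_dvd hp]
    intro h
    exact ha (Int.natCast_dvd.2 h)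
  have h2 : IsCoprime (a : ℤ) ((p : ℤ) ^ N) := by
    rw [Int.isCoprime_iff_gcd_eq_one]
    have : Int.gcd a ((p : ℤ) ^ N) = Nat.gcd a.natAbs (p ^ N) := by
      rw [Int.gcd]
      congr 1
    rw [this, Nat.gcd_comm]
    exact h1
  obtain ⟨x, y, hxy⟩ := h2
  exact ⟨x, y, by linarith⟩

/-- Key: `p^(v_p r)` divides `r` in `A`. -/
lemma drat (hp : p.Prime) (hd : IsDivisibility D)
    (harch : ∀ a : A, ∃ m : ℤ, D (algebraMap ℚ A ((p : ℚ) ^ m)) a)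
    {r : ℚ} (hr : r ≠ 0) :
    D (P p A (padicValRat p r)) (algebraMap ℚ A r) := by
  set v := padicValRat p r with hv
  obtain ⟨s, t, hs, ht, hst⟩ := exists_st hp hr
  obtain ⟨m0, hm0⟩ := harch (algebraMap ℚ A r)
  set N : ℕ := (v - m0).toNat with hN
  have hvN : v ≤ m0 + N := by
    rw [hN]; omega
  obtain ⟨x, y, hxy⟩ := bezout (a := (t : ℤ)) (by
    intro h
    exact ht (Int.natCast_dvd_natCast.mp h)) hp N rfl
  -- the rational identity
  have key : ((x * s : ℤ) : ℚ) * (p : ℚ) ^ v + ((y : ℤ) : ℚ) * ((p : ℚ) ^ (N : ℤ) * r) = r := by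
    have hxy' : ((x : ℚ)) * t + (y : ℚ) * (p : ℚ) ^ (N : ℕ) = 1 := by
      exact_mod_cast congrArg (fun z : ℤ => (z : ℚ)) hxy
    have hNc : ((p : ℚ) ^ (N : ℤ)) = (p : ℚ) ^ (N : ℕ) := zpow_natCast _ _
    rw [← hv] at hst
    push_cast
    rw [hNc]
    linear_combination (-(x : ℚ)) * hst + r * hxy'
  -- first summand divisible
  have h1 : D (P p A v) (((x * s : ℤ) : A) * P p A v) := dint hd (hd.1 _) _
  -- second summand divisible
  have h2 : D (P p A v) (((y : ℤ) : A) * (algebraMap ℚ A ((p : ℚ) ^ (N : ℤ)) * algebraMap ℚ A r)) := by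
    have hsh := dshift hd hp (m := m0) (a := algebraMap ℚ A r) hm0 (N : ℤ)
    exact dint hd (dmono' hd hp hvN hsh) _
  have h3 := dadd hd h1 h2
  have heq : ((x * s : ℤ) : A) * P p A v +
      ((y : ℤ) : A) * (algebraMap ℚ A ((p : ℚ) ^ (N : ℤ)) * algebraMap ℚ A r) =
      algebraMap ℚ A r := by
    rw [P, ← map_intCast (algebraMap ℚ A) (x * s), ← map_intCast (algebraMap ℚ A) y,
      ← map_mul, ← map_mul, ← map_mul, ← map_add]
    exact congrArg _ key
  rwa [heq] at h3

end

end Stmt15Aux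

namespace Stmt15Aux

section
variable {A : Type*} [CommRing A] [Algebra ℚ A] {D : A → A → Prop} {p : ℕ}

/-- Converse: if `p^m` divides `r` then `m ≤ v_p r`. -/
lemma dratle (hp : p.Prime) (hD : IsPDivisibility p D)
    {r : ℚ} (hr : r ≠ 0) {m : ℤ} (h : D (P p A m) (algebraMap ℚ A r)) :
    m ≤ padicValRat p r := by
  have hd := hD.1
  by_contra hlt
  push_neg at hlt
  set v := padicValRat p r with hv
  obtain ⟨s, t, hs, ht, hst⟩ := exists_st hp hr
  rw [← hv] at hst
  have h1 : D (P p A (v + 1)) (algebraMap ℚ A r) := dmono' hd hp (by omega) h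
  have h2 : D (P p A (v + 1)) (((t : ℤ) : A) * algebraMap ℚ A r) := dint hd h1 _
  obtain ⟨x, y, hxy⟩ := bezout hs hp 1 rfl
  -- P p A v = x • (t * r) + y • P p A (v+1)
  have key : ((x : ℤ) : ℚ) * ((t : ℚ) * r) + ((y : ℤ) : ℚ) * (p : ℚ) ^ (v + 1 : ℤ) =
      (p : ℚ) ^ v := by
    have hxy' : (x : ℚ) * s + (y : ℚ) * p = 1 := by
      have := congrArg (fun z : ℤ => (z : ℚ)) hxy
      push_cast at this
      linarith [this]
    have hzp : (p : ℚ) ^ (v + 1 : ℤ) = (p : ℚ) ^ v * p := by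
      rw [zpow_add_one₀ (hq0 hp)]
    rw [hzp]
    push_cast
    linear_combination (x : ℚ) * hst + (p : ℚ) ^ v * hxy'
  have h3 : D (P p A (v + 1)) (P p A v) := by
    have ha := dint hd h2 x
    have hb := dint hd (hd.1 (P p A (v + 1))) y
    have hc := dadd hd ha hb
    have heq : ((x : ℤ) : A) * (((t : ℤ) : A) * algebraMap ℚ A r) +
        ((y : ℤ) : A) * P p A (v + 1) = P p A v := by
      rw [P, P, ← map_intCast (algebraMap ℚ A) x, ← map_intCast (algebraMap ℚ A) y,
        ← map_intCast (algebraMap ℚ A) (t : ℤ), ← map_mul, ← map_mul, ← map_mul, ← map_add]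
      apply congrArg
      push_cast
      push_cast at key
      linarith [key]
    rwa [heq] at hc
  -- contradiction with axiom (6)
  have hne : ¬ D 0 (P p A v) := dnot0 hd hp v
  have h6 := hD.2.1 (P p A v) hne
  apply h6
  have hpm : ((p : ℕ) : A) * P p A v = P p A (v + 1) := by
    rw [P, P, ← map_natCast (algebraMap ℚ A) p, ← map_mul]
    apply congrArg
    rw [zpow_add_one₀ (hq0 hp)]
    ring
  rw [hpm]
  exact h3

/-- Multiplying by a nonzero rational shifts divisibility by `v_p r`. -/
lemma dmulrat (hp : p.Prime) (hd : IsDivisibility D)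
    (harch : ∀ a : A, ∃ m : ℤ, D (algebraMap ℚ A ((p : ℚ) ^ m)) a)
    {r : ℚ} (hr : r ≠ 0) {a : A} {m : ℤ}
    (h : D (P p A (m - padicValRat p r)) a) :
    D (P p A m) (algebraMap ℚ A r * a) := by
  set v := padicValRat p r with hv
  have h4 : D (P p A (m - v) * algebraMap ℚ A r) (a * algebraMap ℚ A r) :=
    hd.2.2.2.1 _ _ _ h
  have hrv : D (P p A v) (algebraMap ℚ A r) := drat hp hd harch hr
  have h5 := dshift hd hp hrv (m - v)
  have hveq : v + (m - v) = m := by ring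
  rw [hveq] at h5
  -- h5 : D (P p A m) (algebraMap (p^(m-v)) * algebraMap r)
  have h5' : D (P p A m) (P p A (m - v) * algebraMap ℚ A r) := by
    rwa [show (algebraMap ℚ A ((p : ℚ) ^ (m - v)) : A) = P p A (m - v) from rfl] at h5
  rw [mul_comm (algebraMap ℚ A r) a]
  exact hd.2.1 _ _ _ h5' h4

lemma dmulrat_iff (hp : p.Prime) (hD : IsPDivisibility p D)
    (harch : ∀ a : A, ∃ m : ℤ, D (algebraMap ℚ A ((p : ℚ) ^ m)) a)
    {r : ℚ} (hr : r ≠ 0) {a : A} {m : ℤ} :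
    D (P p A m) (algebraMap ℚ A r * a) ↔ D (P p A (m - padicValRat p r)) a := by
  haveI : Fact p.Prime := ⟨hp⟩
  have hd := hD.1
  constructor
  · intro h
    have h2 := dmulrat hp hd harch (inv_ne_zero hr) (a := algebraMap ℚ A r * a)
      (m := m - padicValRat p r) (by
        rw [padicValRat.inv]
        have : m - padicValRat p r - -padicValRat p r = m := by ring
        rw [this]
        exact h)
    rw [← mul_assoc, ← map_mul, inv_mul_cancel₀ hr, map_one, one_mul] at h2
    exact h2
  · exact dmulrat hp hd harch hr

end

end Stmt15Aux

/-- The semi-norm `‖a‖ = p^{-ord a}` where `ord a = sup {m : ℤ | p^m | a}`,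
expressed as the infimum of the values `p^{-m}` over all `m` with `p^m | a`. -/
noncomputable def divNorm (p : ℕ) {A : Type*} [CommRing A] [Algebra ℚ A]
    (D : A → A → Prop) (a : A) : ℝ :=
  sInf {x : ℝ | ∃ m : ℤ, D (algebraMap ℚ A ((p : ℚ) ^ m)) a ∧ x = (p : ℝ) ^ (-m)}

namespace Stmt15Aux

section
variable {A : Type*} [CommRing A] [Algebra ℚ A] {D : A → A → Prop} {p : ℕ}

lemma norm_bdd (a : A) :
    BddBelow {x : ℝ | ∃ m : ℤ, D (algebraMap ℚ A ((p : ℚ) ^ m)) a ∧ x = (p : ℝ) ^ (-m)} := by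
  refine ⟨0, ?_⟩
  rintro x ⟨m, -, rfl⟩
  positivity

lemma norm_nonneg' (a : A) : 0 ≤ divNorm p D a := by
  apply Real.sInf_nonneg
  rintro x ⟨m, -, rfl⟩
  positivity

lemma norm_le {a : A} {m : ℤ} (h : D (P p A m) a) : divNorm p D a ≤ (p : ℝ) ^ (-m) :=
  csInf_le (norm_bdd a) ⟨m, h, rfl⟩

lemma exists_mem_lt (harch : ∀ a : A, ∃ m : ℤ, D (algebraMap ℚ A ((p : ℚ) ^ m)) a)
    {a : A} {c : ℝ} (h : divNorm p D a < c) :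
    ∃ m : ℤ, D (P p A m) a ∧ (p : ℝ) ^ (-m) < c := by
  unfold divNorm at h
  obtain ⟨m0, hm0⟩ := harch a
  have hne : Set.Nonempty {x : ℝ | ∃ m : ℤ, D (algebraMap ℚ A ((p : ℚ) ^ m)) a ∧
      x = (p : ℝ) ^ (-m)} := ⟨(p : ℝ) ^ (-m0), m0, hm0, rfl⟩
  obtain ⟨x, ⟨m, hm, rfl⟩, hx⟩ := exists_lt_of_csInf_lt hne h
  exact ⟨m, hm, hx⟩

lemma le_norm (harch : ∀ a : A, ∃ m : ℤ, D (algebraMap ℚ A ((p : ℚ) ^ m)) a)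
    {a : A} {c : ℝ} (h : ∀ m : ℤ, D (P p A m) a → c ≤ (p : ℝ) ^ (-m)) :
    c ≤ divNorm p D a := by
  unfold divNorm
  obtain ⟨m0, hm0⟩ := harch a
  have hne : Set.Nonempty {x : ℝ | ∃ m : ℤ, D (algebraMap ℚ A ((p : ℚ) ^ m)) a ∧
      x = (p : ℝ) ^ (-m)} := ⟨(p : ℝ) ^ (-m0), m0, hm0, rfl⟩
  apply le_csInf hne
  rintro x ⟨m, hm, rfl⟩
  exact h m hm

lemma norm_zero (hd : IsDivisibility D) (hp : p.Prime) : divNorm p D (0 : A) = 0 := by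
  refine le_antisymm ?_ (norm_nonneg' 0)
  by_contra hpos
  push_neg at hpos
  have hp1 : (1 : ℝ) < p := by exact_mod_cast hp.one_lt
  have h1 : (p : ℝ)⁻¹ < 1 := by
    rw [inv_lt_one₀ (by linarith)]
    exact hp1
  obtain ⟨n, hn⟩ := exists_pow_lt_of_lt_one hpos h1
  have h2 : divNorm p D (0 : A) ≤ (p : ℝ) ^ (-(n : ℤ)) := norm_le (dzero hd _)
  have h3 : ((p : ℝ)⁻¹) ^ n = (p : ℝ) ^ (-(n : ℤ)) := by
    rw [inv_pow, ← zpow_natCast, ← zpow_neg]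
  linarith

lemma norm_rat (hp : p.Prime) (hD : IsPDivisibility p D)
    (harch : ∀ a : A, ∃ m : ℤ, D (algebraMap ℚ A ((p : ℚ) ^ m)) a)
    {r : ℚ} (hr : r ≠ 0) :
    divNorm p D (algebraMap ℚ A r) = (p : ℝ) ^ (-(padicValRat p r)) := by
  refine le_antisymm (norm_le (drat hp hD.1 harch hr)) (le_norm harch ?_)
  intro m hm
  have h1 : m ≤ padicValRat p r := dratle hp hD hr hm
  exact zpow_le_zpow_right₀ (by exact_mod_cast hp.one_lt.le) (by omega)

end

end Stmt15Aux

open Stmt15Aux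

theorem stmt_15 (p : ℕ) (hp : p.Prime) {A : Type*} [CommRing A] [Algebra ℚ A]
    (D : A → A → Prop) (hD : IsPDivisibility p D)
    (harch : ∀ a : A, ∃ m : ℤ, D (algebraMap ℚ A ((p : ℚ) ^ m)) a) :
    (∀ a b : A, divNorm p D (a + b) ≤ max (divNorm p D a) (divNorm p D b)) ∧
    (∀ a b : A, divNorm p D (a * b) ≤ divNorm p D a * divNorm p D b) ∧
    (∀ r : ℚ, divNorm p D (algebraMap ℚ A r) = ((padicNorm p r : ℚ) : ℝ)) ∧
    (∀ (r : ℚ) (a : A),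
      divNorm p D (algebraMap ℚ A r * a) = ((padicNorm p r : ℚ) : ℝ) * divNorm p D a) := by
  have hd := hD.1
  haveI : Fact p.Prime := ⟨hp⟩
  have hpR : (0 : ℝ) < p := by exact_mod_cast hp.pos
  have hpRne : (p : ℝ) ≠ 0 := ne_of_gt hpR
  refine ⟨?_, ?_, ?_, ?_⟩
  · -- (a) ultrametric inequality
    intro a b
    by_contra hlt
    push_neg at hlt
    obtain ⟨m, hm, hx⟩ := exists_mem_lt harch (lt_of_le_of_lt (le_max_left _ _) hlt)
    obtain ⟨n, hn, hy⟩ := exists_mem_lt harch (lt_of_le_of_lt (le_max_right _ _) hlt)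
    rcases le_total m n with hmn | hmn
    · have hab : D (P p A m) (a + b) := dadd hd hm (dmono' hd hp hmn hn)
      exact absurd (norm_le hab) (not_le.2 hx)
    · have hab : D (P p A n) (a + b) := dadd hd (dmono' hd hp hmn hm) hn
      exact absurd (norm_le hab) (not_le.2 hy)
  · -- (b) submultiplicativity
    intro a b
    by_contra hlt
    push_neg at hlt
    have hNa := norm_nonneg' (D := D) (p := p) a
    have hNb := norm_nonneg' (D := D) (p := p) b
    have hprod : ∀ (m n : ℤ), D (P p A m) a → D (P p A n) b →
        divNorm p D (a * b) ≤ (p : ℝ) ^ (-m) * (p : ℝ) ^ (-n) := by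
      intro m n hm hn
      have h1 : D (P p A m * b) (a * b) := hd.2.2.2.1 _ _ b hm
      have h2 : D (P p A n * P p A m) (b * P p A m) := hd.2.2.2.1 _ _ _ hn
      rw [Pmul hp] at h2
      rw [mul_comm b] at h2
      have h4 := hd.2.1 _ _ _ h2 h1
      have h5 := norm_le h4
      have h6 : (p : ℝ) ^ (-(n + m)) = (p : ℝ) ^ (-m) * (p : ℝ) ^ (-n) := by
        rw [← zpow_add₀ hpRne]
        congr 1
        ring
      linarith
    rcases eq_or_lt_of_le hNa with hA0 | hApos
    · obtain ⟨n0, hn0⟩ := harch b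
      have hy0 : (0 : ℝ) < (p : ℝ) ^ (-n0) := by positivity
      have hNab : 0 < divNorm p D (a * b) := by
        rw [← hA0, zero_mul] at hlt
        exact hlt
      have hlt2 : divNorm p D a < divNorm p D (a * b) / (p : ℝ) ^ (-n0) := by
        rw [← hA0]
        positivity
      obtain ⟨m, hm, hxm⟩ := exists_mem_lt harch hlt2
      have h7 := (lt_div_iff₀ hy0).mp hxm
      linarith [hprod m n0 hm hn0]
    · have hlt2 : divNorm p D b < divNorm p D (a * b) / divNorm p D a := by
        rw [lt_div_iff₀ hApos]
        linarith [mul_comm (divNorm p D b) (divNorm p D a)]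
      obtain ⟨n, hn, hyn⟩ := exists_mem_lt harch hlt2
      have hy0 : (0 : ℝ) < (p : ℝ) ^ (-n) := by positivity
      have h6 : divNorm p D a * (p : ℝ) ^ (-n) < divNorm p D (a * b) := by
        have h8 := (lt_div_iff₀ hApos).mp hyn
        linarith [mul_comm (divNorm p D a) ((p : ℝ) ^ (-n))]
      have hlt3 : divNorm p D a < divNorm p D (a * b) / (p : ℝ) ^ (-n) :=
        (lt_div_iff₀ hy0).mpr h6
      obtain ⟨m, hm, hxm⟩ := exists_mem_lt harch hlt3
      have h7 := (lt_div_iff₀ hy0).mp hxm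
      linarith [hprod m n hm hn]
  · -- (c) value on rationals
    intro r
    rcases eq_or_ne r 0 with rfl | hr
    · rw [map_zero, norm_zero hd hp]
      simp [padicNorm.zero]
    · rw [norm_rat hp hD harch hr, padicNorm.eq_zpow_of_nonzero hr,
        Rat.cast_zpow, Rat.cast_natCast]
  · -- (d) homogeneity
    intro r a
    rcases eq_or_ne r 0 with rfl | hr
    · rw [map_zero, zero_mul, norm_zero hd hp]
      simp [padicNorm.zero]
    · rw [padicNorm.eq_zpow_of_nonzero hr, Rat.cast_zpow, Rat.cast_natCast]
      set v := padicValRat p r with hv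
      have hc0 : (0 : ℝ) < (p : ℝ) ^ (-v) := by positivity
      refine le_antisymm ?_ ?_
      · -- divNorm (ra) ≤ p^{-v} * divNorm a
        have h1 : divNorm p D (algebraMap ℚ A r * a) / (p : ℝ) ^ (-v) ≤ divNorm p D a := by
          apply le_norm harch
          intro n hn
          rw [div_le_iff₀ hc0]
          have hD2 : D (P p A (n + v)) (algebraMap ℚ A r * a) := by
            apply dmulrat hp hd harch hr
            rw [← hv, show n + v - v = n by ring]
            exact hn
          have h2 := norm_le hD2
          have h3 : (p : ℝ) ^ (-(n + v)) = (p : ℝ) ^ (-n) * (p : ℝ) ^ (-v) := by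
            rw [← zpow_add₀ hpRne]
            congr 1
            ring
          linarith
        have h4 := (div_le_iff₀ hc0).mp h1
        linarith [mul_comm (divNorm p D a) ((p : ℝ) ^ (-v))]
      · -- p^{-v} * divNorm a ≤ divNorm (ra)
        apply le_norm harch
        intro m hm
        have h3 : D (P p A (m - v)) a := by
          have := (dmulrat_iff hp hD harch hr (a := a) (m := m)).mp hm
          rwa [← hv] at this
        have h4 := norm_le h3
        have h5 : (p : ℝ) ^ (-v) * (p : ℝ) ^ (-(m - v)) = (p : ℝ) ^ (-m) := by
          rw [← zpow_add₀ hpRne]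
          congr 1
          ring
        calc (p : ℝ) ^ (-v) * divNorm p D a ≤ (p : ℝ) ^ (-v) * (p : ℝ) ^ (-(m - v)) :=
              mul_le_mul_of_nonneg_left h4 hc0.le
          _ = (p : ℝ) ^ (-m) := h5
end

section
/- Let |₀ be a p-archimedean p-divisibility on a commutative ring A with ℚ ⊆ A satisfying p|₀a² ⟹ p|₀a for all a. Then the semi-norm ‖a‖ = p^{−ord a} (where ord a = sup{m ∈ ℤ : p^m |₀ a}) is power multiplicative: ‖a²‖ = ‖a‖² for all a ∈ A. -/
theorem stmt_16 (p : ℕ) (hp : p.Prime) {A : Type*} [CommRing A] [Algebra ℚ A]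
    (D : A → A → Prop) (hD : IsPDivisibility p D)
    (harch : ∀ a : A, ∃ m : ℤ, D (algebraMap ℚ A ((p : ℚ) ^ m)) a)
    (hsq : ∀ a : A, D (p : A) (a ^ 2) → D (p : A) a) :
    ∀ a : A, divNorm p D (a ^ 2) = (divNorm p D a) ^ 2 := by
  obtain ⟨⟨hrefl, htrans, hsub, hmul, h01⟩, hpd, hK⟩ := hD
  set q : ℚ →+* A := (algebraMap ℚ A) with hq
  have hpQ : ((p : ℚ)) ≠ 0 := by exact_mod_cast hp.ne_zero
  have hp1 : (1 : ℝ) < p := by exact_mod_cast hp.one_lt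
  have hp0 : (0 : ℝ) < p := lt_trans one_pos hp1
  -- basic consequences
  have hD0 : ∀ x : A, D x 0 := fun x => by
    simpa using hsub x x x (hrefl x) (hrefl x)
  have hDadd : ∀ x b c : A, D x b → D x c → D x (b + c) := by
    intro x b c hb hc
    have hnc : D x (-c) := by simpa using hsub x 0 c (hD0 x) hc
    simpa [sub_neg_eq_add] using hsub x b (-c) hb hnc
  have hDn : ∀ (x : A) (n : ℕ), D x ((n : A) * x) := by
    intro x n
    induction n with
    | zero => simpa using hD0 x
    | succ n ih =>
        have := hDadd x ((n : A) * x) x ih (hrefl x)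
        convert this using 1
        push_cast; ring
  -- multiplication of q-powers
  have hqmul : ∀ m n : ℤ, q ((p : ℚ) ^ m) * q ((p : ℚ) ^ n) = q ((p : ℚ) ^ (m + n)) := by
    intro m n
    rw [← map_mul, ← zpow_add₀ hpQ]
  have hq1 : q ((p : ℚ) ^ (1 : ℤ)) = (p : A) := by
    rw [zpow_one]; exact map_natCast q p
  -- monotonicity: smaller powers of p still divide
  have hmono : ∀ (a : A) (m m' : ℤ), m' ≤ m →
      D (q ((p : ℚ) ^ m)) a → D (q ((p : ℚ) ^ m')) a := by
    intro a m m' h hDm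
    have key : D (q ((p : ℚ) ^ m')) (q ((p : ℚ) ^ m)) := by
      have hn : ((p ^ (m - m').toNat : ℕ) : A) * q ((p : ℚ) ^ m') = q ((p : ℚ) ^ m) := by
        rw [← map_natCast q (p ^ (m - m').toNat), ← map_mul]
        congr 1
        push_cast
        rw [← zpow_natCast (p : ℚ), Int.toNat_of_nonneg (sub_nonneg.2 h), ← zpow_add₀ hpQ]
        congr 1
        ring
      rw [← hn]
      exact hDn _ _
    exact htrans _ _ _ key hDm
  -- multiplicativity
  have hmul2 : ∀ (a b : A) (m n : ℤ), D (q ((p : ℚ) ^ m)) a → D (q ((p : ℚ) ^ n)) b →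
      D (q ((p : ℚ) ^ (m + n))) (a * b) := by
    intro a b m n ha hb
    have h1 : D (q ((p : ℚ) ^ m) * b) (a * b) := hmul _ _ b ha
    have h2 : D (q ((p : ℚ) ^ n) * q ((p : ℚ) ^ m)) (b * q ((p : ℚ) ^ m)) :=
      hmul _ _ (q ((p : ℚ) ^ m)) hb
    rw [hqmul, mul_comm b] at h2
    rw [add_comm n m] at h2
    exact htrans _ _ _ h2 h1
  have hsq2 : ∀ (a : A) (m : ℤ), D (q ((p : ℚ) ^ m)) a →
      D (q ((p : ℚ) ^ (2 * m))) (a ^ 2) := by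
    intro a m ha
    have := hmul2 a a m m ha ha
    rw [show m + m = 2 * m by ring] at this
    rw [sq]
    exact this
  -- halving
  have hhalf : ∀ (a : A) (j : ℤ), D (q ((p : ℚ) ^ (2 * j + 1))) (a ^ 2) →
      D (q ((p : ℚ) ^ (j + 1))) a := by
    intro a j h
    set b : A := q ((p : ℚ) ^ (-j)) * a with hb
    have hb2 : D ((p : A)) (b ^ 2) := by
      have h1 : D (q ((p : ℚ) ^ (2 * j + 1)) * q ((p : ℚ) ^ (-(2 * j))))
          (a ^ 2 * q ((p : ℚ) ^ (-(2 * j)))) := hmul _ _ _ h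
      rw [hqmul] at h1
      rw [show (2 * j + 1 + -(2 * j)) = (1 : ℤ) by ring, hq1] at h1
      have heq : a ^ 2 * q ((p : ℚ) ^ (-(2 * j))) = b ^ 2 := by
        rw [hb, mul_pow, ← map_pow, ← zpow_natCast ((p : ℚ) ^ (-j)), ← zpow_mul]
        push_cast
        ring_nf
      rwa [heq] at h1
    have hbd : D ((p : A)) b := hsq b hb2
    have h2 : D ((p : A) * q ((p : ℚ) ^ j)) (b * q ((p : ℚ) ^ j)) := hmul _ _ _ hbd
    rw [← hq1, hqmul] at h2
    have heq2 : b * q ((p : ℚ) ^ j) = a := by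
      rw [hb, mul_comm, ← mul_assoc, ← map_mul, ← zpow_add₀ hpQ]
      simp
    rw [heq2, show (1 + j : ℤ) = j + 1 by ring] at h2
    exact h2
  -- norm of an element whose divisibility set is all of ℤ
  have hzero : ∀ b : A, (∀ m : ℤ, D (q ((p : ℚ) ^ m)) b) → divNorm p D b = 0 := by
    intro b hall
    have hbdd : BddBelow {x : ℝ | ∃ m : ℤ, D (q ((p : ℚ) ^ m)) b ∧ x = (p : ℝ) ^ (-m)} := by
      refine ⟨0, ?_⟩
      rintro x ⟨m, -, rfl⟩
      positivity
    have hle : ∀ n : ℕ, divNorm p D b ≤ (p : ℝ) ^ (-(n : ℤ)) := by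
      intro n
      exact csInf_le hbdd ⟨(n : ℤ), hall _, rfl⟩
    have htend : Filter.Tendsto (fun n : ℕ => (p : ℝ) ^ (-(n : ℤ))) Filter.atTop (nhds 0) := by
      have : Filter.Tendsto (fun n : ℕ => ((p : ℝ)⁻¹) ^ n) Filter.atTop (nhds 0) := by
        apply tendsto_pow_atTop_nhds_zero_of_lt_one
        · positivity
        · rw [inv_lt_one_iff₀]; right; exact hp1
      convert this using 2 with n
      rw [zpow_neg, zpow_natCast, inv_pow]
    have h1 : divNorm p D b ≤ 0 := ge_of_tendsto' htend hle
    have h2 : (0 : ℝ) ≤ divNorm p D b := by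
      have hne : Set.Nonempty {x : ℝ | ∃ m : ℤ, D (q ((p : ℚ) ^ m)) b ∧ x = (p : ℝ) ^ (-m)} :=
        ⟨(p : ℝ) ^ (-(0 : ℤ)), 0, hall 0, rfl⟩
      apply le_csInf hne
      rintro x ⟨m, -, rfl⟩
      positivity
    linarith
  -- norm of an element with maximal divisibility exponent M
  have hval : ∀ (b : A) (M : ℤ), D (q ((p : ℚ) ^ M)) b →
      (∀ m : ℤ, D (q ((p : ℚ) ^ m)) b → m ≤ M) → divNorm p D b = (p : ℝ) ^ (-M) := by
    intro b M hM hmax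
    apply IsLeast.csInf_eq
    constructor
    · exact ⟨M, hM, rfl⟩
    · rintro x ⟨m, hm, rfl⟩
      exact zpow_le_zpow_right₀ hp1.le (neg_le_neg (hmax m hm))
  intro a
  by_cases hub : ∀ m : ℤ, D (q ((p : ℚ) ^ m)) a
  · -- unbounded case: both norms are zero
    have hub2 : ∀ k : ℤ, D (q ((p : ℚ) ^ k)) (a ^ 2) := by
      intro k
      have hk : k ≤ 2 * max k 0 := by
        rcases le_or_gt k 0 with h | h
        · simpa [max_eq_right h] using h
        · have : k ≤ 2 * k := by linarith
          simpa [max_eq_left h.le] using this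
      exact hmono _ _ _ hk (hsq2 a (max k 0) (hub _))
    rw [hzero _ hub2, hzero _ hub]
    ring
  · push_neg at hub
    obtain ⟨k, hk⟩ := hub
    -- the set of exponents dividing a is nonempty and bounded above
    obtain ⟨M, hM, hMmax⟩ := Int.exists_greatest_of_bdd (P := fun m => D (q ((p : ℚ) ^ m)) a)
      (by
        refine ⟨k, fun z hz => ?_⟩
        by_contra h
        push_neg at h
        exact hk (hmono a z k h.le hz))
      (harch a)
    have hM2 : D (q ((p : ℚ) ^ (2 * M))) (a ^ 2) := hsq2 a M hM
    have hM2max : ∀ m : ℤ, D (q ((p : ℚ) ^ m)) (a ^ 2) → m ≤ 2 * M := by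
      intro m hm
      by_contra h
      push_neg at h
      have h1 : (2 * M + 1 : ℤ) ≤ m := h
      have h2 : D (q ((p : ℚ) ^ (2 * M + 1))) (a ^ 2) := hmono _ _ _ h1 hm
      have h3 := hhalf a M h2
      have := hMmax (M + 1) h3
      omega
    rw [hval _ _ hM2 hM2max, hval _ _ hM hMmax]
    rw [← zpow_natCast ((p : ℝ) ^ (-M)), ← zpow_mul]
    congr 1
    push_cast
    ring
end

section
/- Let X be a compact topological space, C(X, ℚ_p) the ring of continuous ℚ_p-valued functions, and q a prime different from p. Then for all f, g ∈ C(X, ℚ_p): v_p(g(x)) ≤ v_p(f(x)) for all x ∈ X if and only if there exists h ∈ C(X, ℚ_p) with h^q = g^q + p·f^q. -/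
section Helpers

variable {p : ℕ} [Fact p.Prime]

private lemma norm_q_eq_one {q : ℕ} (hq : q.Prime) (hpq : p ≠ q) : ‖(q : ℚ_[p])‖ = 1 := by
  have h1 : ‖((q : ℤ) : ℚ_[p])‖ ≤ 1 := Padic.norm_int_le_one _
  have h2 : ¬ ‖((q : ℤ) : ℚ_[p])‖ < 1 := by
    rw [Padic.norm_intCast_lt_one_iff]
    intro hd
    exact hpq ((Nat.prime_dvd_prime_iff_eq (Fact.out) hq).mp (Int.natCast_dvd_natCast.mp hd))
  push_cast at h1 h2
  linarith

/-- Key norm computation: if `‖a - b‖ < ‖b‖` and `q` is prime to `p`, then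
`‖a^q - b^q‖ = ‖a - b‖ * ‖b‖^(q-1)`. -/
private lemma norm_pow_sub_pow {q : ℕ} (hq : q.Prime) (hqn : ‖(q : ℚ_[p])‖ = 1)
    {a b : ℚ_[p]} (hab : ‖a - b‖ < ‖b‖) :
    ‖a ^ q - b ^ q‖ = ‖a - b‖ * ‖b‖ ^ (q - 1) := by
  rcases eq_or_ne a b with rfl | hne
  · simp
  obtain ⟨n, rfl⟩ : ∃ n, q = n + 2 := ⟨q - 2, by have := hq.two_le; omega⟩
  have hd : a - b ≠ 0 := sub_ne_zero.mpr hne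
  have hdpos : 0 < ‖a - b‖ := norm_pos_iff.mpr hd
  have hbpos : (0:ℝ) < ‖b‖ := lt_of_le_of_lt (norm_nonneg _) hab
  set d := a - b with hd_def
  have ha_eq : a = b + d := by rw [hd_def]; ring
  have hexp : a ^ (n+2) = ∑ k ∈ Finset.range (n+3),
      b ^ k * d ^ (n+2-k) * ((n+2).choose k : ℚ_[p]) := by
    rw [ha_eq, add_pow]
  have hsplit : a ^ (n+2) - b ^ (n+2) =
      ((n+2 : ℕ) : ℚ_[p]) * d * b ^ (n+1) +
        ∑ k ∈ Finset.range (n+1), b ^ k * d ^ (n+2-k) * ((n+2).choose k : ℚ_[p]) := by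
    rw [hexp, show n + 3 = (n+1) + 1 + 1 from rfl, Finset.sum_range_succ, Finset.sum_range_succ]
    simp [Nat.choose_succ_self_right]
    ring
  have hmain : ‖((n+2 : ℕ) : ℚ_[p]) * d * b ^ (n+1)‖ = ‖d‖ * ‖b‖ ^ (n+1) := by
    rw [norm_mul, norm_mul, norm_pow, hqn, one_mul]
  have hEle : ‖∑ k ∈ Finset.range (n+1), b ^ k * d ^ (n+2-k) * ((n+2).choose k : ℚ_[p])‖
      ≤ ‖d‖ ^ 2 * ‖b‖ ^ n := by
    apply IsUltrametricDist.norm_sum_le_of_forall_le_of_nonneg (by positivity)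
    intro k hk
    rw [Finset.mem_range, Nat.lt_succ_iff] at hk
    have hch : ‖(((n+2).choose k : ℕ) : ℚ_[p])‖ ≤ 1 := by
      simpa using Padic.norm_int_le_one (p := p) ((n+2).choose k : ℤ)
    rw [norm_mul, norm_mul, norm_pow, norm_pow]
    have h1 : n + 2 - k = (n - k) + 2 := by omega
    have h2 : ‖d‖ ^ (n - k) ≤ ‖b‖ ^ (n - k) := pow_le_pow_left₀ (norm_nonneg _) hab.le _
    have h3 : ‖b‖ ^ k * ‖b‖ ^ (n - k) = ‖b‖ ^ n := by rw [← pow_add]; congr 1; omega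
    calc ‖b‖ ^ k * ‖d‖ ^ (n+2-k) * ‖(((n+2).choose k : ℕ) : ℚ_[p])‖
        ≤ ‖b‖ ^ k * ‖d‖ ^ (n+2-k) * 1 := by
          apply mul_le_mul_of_nonneg_left hch (by positivity)
      _ = ‖d‖ ^ 2 * (‖b‖ ^ k * ‖d‖ ^ (n-k)) := by rw [h1, pow_add]; ring
      _ ≤ ‖d‖ ^ 2 * (‖b‖ ^ k * ‖b‖ ^ (n-k)) := by
          apply mul_le_mul_of_nonneg_left _ (by positivity)
          exact mul_le_mul_of_nonneg_left h2 (by positivity)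
      _ = ‖d‖ ^ 2 * ‖b‖ ^ n := by rw [h3]
  have hstrict : ‖d‖ ^ 2 * ‖b‖ ^ n < ‖d‖ * ‖b‖ ^ (n+1) := by
    have hbn : (0:ℝ) < ‖b‖ ^ n := pow_pos hbpos n
    calc ‖d‖ ^ 2 * ‖b‖ ^ n = (‖d‖ * ‖b‖ ^ n) * ‖d‖ := by ring
      _ < (‖d‖ * ‖b‖ ^ n) * ‖b‖ := mul_lt_mul_of_pos_left hab (mul_pos hdpos hbn)
      _ = ‖d‖ * ‖b‖ ^ (n+1) := by ring
  have hElt : ‖∑ k ∈ Finset.range (n+1), b ^ k * d ^ (n+2-k) * ((n+2).choose k : ℚ_[p])‖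
      < ‖((n+2 : ℕ) : ℚ_[p]) * d * b ^ (n+1)‖ := by
    rw [hmain]; exact lt_of_le_of_lt hEle hstrict
  rw [hsplit, Padic.add_eq_max_of_ne (ne_of_gt hElt), max_eq_left hElt.le, hmain]
  norm_num

/-- Existence of `q`-th roots of `1 + t` for small `t`, via Hensel's lemma. -/
private lemma exists_qth_root {q : ℕ} (hq : q.Prime) (hqn : ‖(q : ℚ_[p])‖ = 1)
    {t : ℚ_[p]} (ht : ‖t‖ ≤ (p : ℝ)⁻¹) :
    ∃ w : ℚ_[p], w ^ q = 1 + t ∧ ‖w - 1‖ ≤ (p : ℝ)⁻¹ := by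
  have hp1 : (1:ℝ) < p := by exact_mod_cast (Fact.out : p.Prime).one_lt
  have hpinv : (p : ℝ)⁻¹ < 1 := by
    rw [inv_lt_one_iff₀]; right; exact hp1
  have ht1 : ‖t‖ ≤ 1 := le_trans ht hpinv.le
  set t' : ℤ_[p] := ⟨t, ht1⟩ with ht'def
  set F : Polynomial ℤ_[p] := Polynomial.X ^ q - Polynomial.C (1 + t') with hF
  have heval : F.eval 1 = -t' := by simp [hF]
  have hqnorm : ‖(q : ℤ_[p])‖ = 1 := by
    rw [PadicInt.norm_def]; push_cast; exact hqn
  have hderiv : F.derivative.eval 1 = (q : ℤ_[p]) := by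
    simp [hF, Polynomial.derivative_X_pow]
  have hnorm : ‖F.eval 1‖ < ‖F.derivative.eval 1‖ ^ 2 := by
    rw [heval, hderiv, hqnorm, norm_neg, one_pow]
    calc ‖t'‖ = ‖t‖ := rfl
      _ ≤ (p:ℝ)⁻¹ := ht
      _ < 1 := hpinv
  obtain ⟨z, hz, hz1, -, -⟩ := hensels_lemma hnorm
  have hzq : (z : ℚ_[p]) ^ q = 1 + t := by
    have h0 : z ^ q - (1 + t') = 0 := by simpa [hF] using hz
    have h1 : z ^ q = 1 + t' := by linear_combination h0
    have := congrArg (fun y : ℤ_[p] => (y : ℚ_[p])) h1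
    push_cast at this
    simpa [ht'def] using this
  refine ⟨(z : ℚ_[p]), hzq, ?_⟩
  rw [Polynomial.coe_aeval_eq_eval, hderiv, hqnorm] at hz1
  have hle : ‖z - 1‖ ≤ (p:ℝ) ^ (-1 : ℤ) := by
    rw [PadicInt.norm_le_pow_iff_norm_lt_pow_add_one]
    simpa using hz1
  have : ‖(z : ℚ_[p]) - 1‖ = ‖z - 1‖ := by
    rw [PadicInt.norm_def]; push_cast; ring_nf
  rw [this]
  simpa [zpow_neg_one] using hle

/-- Pointwise root with location estimate. -/
private lemma exists_root_pt {q : ℕ} (hq : q.Prime) (hqn : ‖(q : ℚ_[p])‖ = 1)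
    (a b : ℚ_[p]) (hab : a = 0 ∨ (b ≠ 0 ∧ ‖a‖ ≤ ‖b‖)) :
    ∃ z : ℚ_[p], z ^ q = b ^ q + p * a ^ q ∧ ‖z - b‖ ≤ (p : ℝ)⁻¹ * ‖b‖ := by
  rcases hab with rfl | ⟨hb, hle⟩
  · refine ⟨b, by simp [zero_pow hq.ne_zero], by simp; positivity⟩
  · have hbq : b ^ q ≠ 0 := pow_ne_zero _ hb
    set t : ℚ_[p] := (p : ℚ_[p]) * (a / b) ^ q with htdef
    have ht : ‖t‖ ≤ (p : ℝ)⁻¹ := by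
      rw [htdef, norm_mul, Padic.norm_p, norm_pow, norm_div]
      have hd1 : ‖a‖ / ‖b‖ ≤ 1 := div_le_one_of_le₀ hle (norm_nonneg _)
      have hd0 : (0:ℝ) ≤ ‖a‖ / ‖b‖ := by positivity
      calc (p:ℝ)⁻¹ * (‖a‖ / ‖b‖) ^ q ≤ (p:ℝ)⁻¹ * 1 := by
            apply mul_le_mul_of_nonneg_left _ (by positivity)
            exact pow_le_one₀ hd0 hd1
        _ = (p:ℝ)⁻¹ := mul_one _
    obtain ⟨w, hw, hw1⟩ := exists_qth_root hq hqn ht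
    refine ⟨b * w, ?_, ?_⟩
    · rw [mul_pow, hw, mul_add, mul_one, htdef, div_pow]
      congr 1
      field_simp
    · have hbw : b * w - b = b * (w - 1) := by ring
      rw [hbw, norm_mul]
      calc ‖b‖ * ‖w - 1‖ ≤ ‖b‖ * (p:ℝ)⁻¹ :=
            mul_le_mul_of_nonneg_left hw1 (norm_nonneg _)
        _ = (p:ℝ)⁻¹ * ‖b‖ := mul_comm _ _

end Helpers

theorem stmt_17 (p q : ℕ) [Fact p.Prime] (hq : q.Prime) (hpq : p ≠ q)
    {X : Type*} [TopologicalSpace X] [CompactSpace X] [T2Space X]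
    (f g : C(X, ℚ_[p])) :
    (∀ x : X, f x = 0 ∨ (g x ≠ 0 ∧ (g x).valuation ≤ (f x).valuation)) ↔
    ∃ h : C(X, ℚ_[p]), h ^ q = g ^ q + (p : C(X, ℚ_[p])) * f ^ q := by
  have hp : p.Prime := Fact.out
  have hp1 : (1:ℝ) < p := by exact_mod_cast hp.one_lt
  have hppos : (0:ℝ) < p := lt_trans one_pos hp1
  have hpinv1 : (p : ℝ)⁻¹ < 1 := by rw [inv_lt_one_iff₀]; right; exact hp1
  have hpinv0 : (0:ℝ) < (p : ℝ)⁻¹ := by positivity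
  have hqn : ‖(q : ℚ_[p])‖ = 1 := norm_q_eq_one hq hpq
  constructor
  · intro H
    have H' : ∀ x, f x = 0 ∨ (g x ≠ 0 ∧ ‖f x‖ ≤ ‖g x‖) := by
      intro x
      rcases H x with h | ⟨hg, hv⟩
      · exact Or.inl h
      rcases eq_or_ne (f x) 0 with hf | hf
      · exact Or.inl hf
      refine Or.inr ⟨hg, ?_⟩
      rw [Padic.norm_eq_zpow_neg_valuation hf, Padic.norm_eq_zpow_neg_valuation hg]
      exact zpow_le_zpow_right₀ hp1.le (neg_le_neg hv)
    choose h0 hroot hclose using fun x => exists_root_pt hq hqn (f x) (g x) (H' x)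
    have hcont : Continuous h0 := by
      rw [continuous_iff_continuousAt]
      intro x0
      rw [ContinuousAt, Metric.tendsto_nhds]
      intro ε hε
      by_cases hg0 : g x0 = 0
      · have hx0 : h0 x0 = 0 := by
          have hc := hclose x0
          rw [hg0] at hc
          simp only [norm_zero, mul_zero, sub_zero] at hc
          exact norm_le_zero_iff.mp hc
        have hev : ∀ᶠ x in nhds x0, ‖g x‖ < ε := by
          have hg := g.continuous.tendsto x0
          rw [hg0, Metric.tendsto_nhds] at hg
          filter_upwards [hg ε hε] with x hx
          rwa [dist_eq_norm, sub_zero] at hx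
        filter_upwards [hev] with x hx
        rw [dist_eq_norm, hx0, sub_zero]
        have hb1 : ‖h0 x‖ ≤ max ‖h0 x - g x‖ ‖g x‖ := by
          simpa using Padic.nonarchimedean (h0 x - g x) (g x)
        have hb2 : ‖h0 x - g x‖ ≤ ‖g x‖ := by
          calc ‖h0 x - g x‖ ≤ (p:ℝ)⁻¹ * ‖g x‖ := hclose x
            _ ≤ 1 * ‖g x‖ := mul_le_mul_of_nonneg_right hpinv1.le (norm_nonneg (g x))
            _ = ‖g x‖ := one_mul _
        calc ‖h0 x‖ ≤ max ‖h0 x - g x‖ ‖g x‖ := hb1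
          _ ≤ ‖g x‖ := max_le hb2 le_rfl
          _ < ε := hx
      · set u : X → ℚ_[p] := fun x => (g x) ^ q + (p : ℚ_[p]) * (f x) ^ q with hu_def
        have hucont : Continuous u := by
          apply Continuous.add (g.continuous.pow q)
          exact Continuous.mul continuous_const (f.continuous.pow q)
        set B := ‖g x0‖ with hB_def
        have hB : (0:ℝ) < B := norm_pos_iff.mpr hg0
        have hBq : (0:ℝ) < B ^ (q - 1) := pow_pos hB _
        have hev1 : ∀ᶠ x in nhds x0, ‖g x - g x0‖ < B := by
          have hg := g.continuous.tendsto x0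
          rw [Metric.tendsto_nhds] at hg
          filter_upwards [hg B hB] with x hx
          rwa [dist_eq_norm] at hx
        have hev2 : ∀ᶠ x in nhds x0, ‖u x - u x0‖ < ε * B ^ (q - 1) := by
          have hu := hucont.tendsto x0
          rw [Metric.tendsto_nhds] at hu
          filter_upwards [hu (ε * B ^ (q-1)) (mul_pos hε hBq)] with x hx
          rwa [dist_eq_norm] at hx
        filter_upwards [hev1, hev2] with x h1 h2
        rw [dist_eq_norm]
        have hgx : ‖g x‖ = B := by
          have hgx_eq : g x = (g x - g x0) + g x0 := by ring
          rw [hgx_eq, Padic.add_eq_max_of_ne (ne_of_lt h1), max_eq_right h1.le]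
        have hclose_x : ‖h0 x - g x‖ < B := by
          calc ‖h0 x - g x‖ ≤ (p:ℝ)⁻¹ * ‖g x‖ := hclose x
            _ < 1 * ‖g x‖ := by
                apply mul_lt_mul_of_pos_right hpinv1
                rw [hgx]; exact hB
            _ = B := by rw [one_mul, hgx]
        have hclose_x0 : ‖h0 x0 - g x0‖ < B := by
          calc ‖h0 x0 - g x0‖ ≤ (p:ℝ)⁻¹ * ‖g x0‖ := hclose x0
            _ < 1 * ‖g x0‖ := mul_lt_mul_of_pos_right hpinv1 hB
            _ = B := one_mul _
        have hnx0 : ‖h0 x0‖ = B := by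
          have heq : h0 x0 = (h0 x0 - g x0) + g x0 := by ring
          rw [heq, Padic.add_eq_max_of_ne (ne_of_lt hclose_x0), max_eq_right hclose_x0.le]
        have hd : ‖h0 x - h0 x0‖ < B := by
          have heq : h0 x - h0 x0 = ((h0 x - g x) + (g x - g x0)) + (g x0 - h0 x0) := by ring
          rw [heq]
          calc ‖((h0 x - g x) + (g x - g x0)) + (g x0 - h0 x0)‖
              ≤ max ‖(h0 x - g x) + (g x - g x0)‖ ‖g x0 - h0 x0‖ :=
                Padic.nonarchimedean _ _
            _ < B := by
                apply max_lt _ (by rwa [norm_sub_rev])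
                calc ‖(h0 x - g x) + (g x - g x0)‖ ≤ max ‖h0 x - g x‖ ‖g x - g x0‖ :=
                      Padic.nonarchimedean _ _
                  _ < B := max_lt hclose_x h1
        have hkey : ‖(h0 x) ^ q - (h0 x0) ^ q‖ = ‖h0 x - h0 x0‖ * ‖h0 x0‖ ^ (q - 1) := by
          apply norm_pow_sub_pow hq hqn
          rwa [hnx0]
        have hueq : (h0 x) ^ q - (h0 x0) ^ q = u x - u x0 := by
          rw [hroot x, hroot x0]
        rw [hueq, hnx0] at hkey
        have : ‖h0 x - h0 x0‖ * B ^ (q - 1) < ε * B ^ (q - 1) := by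
          rw [← hkey]; exact h2
        exact lt_of_mul_lt_mul_right this hBq.le
    refine ⟨⟨h0, hcont⟩, ?_⟩
    ext x
    simp only [ContinuousMap.pow_apply, ContinuousMap.add_apply, ContinuousMap.mul_apply,
      ContinuousMap.natCast_apply, ContinuousMap.coe_mk]
    exact hroot x
  · rintro ⟨h, hh⟩ x
    by_contra hcon
    push_neg at hcon
    obtain ⟨hf, hgv⟩ := hcon
    have hx : (h x) ^ q = (g x) ^ q + (p : ℚ_[p]) * (f x) ^ q := by
      have := congrArg (fun F : C(X, ℚ_[p]) => F x) hh
      simpa using this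
    have hfA : (0:ℝ) < ‖f x‖ := norm_pos_iff.mpr hf
    have hfAq : (0:ℝ) < ‖f x‖ ^ q := pow_pos hfA q
    have hRnorm : ‖(p : ℚ_[p]) * (f x) ^ q‖ = (p:ℝ)⁻¹ * ‖f x‖ ^ q := by
      rw [norm_mul, Padic.norm_p, norm_pow]
    have hglt : ‖(g x) ^ q‖ < (p:ℝ)⁻¹ * ‖f x‖ ^ q := by
      rcases eq_or_ne (g x) 0 with hg0 | hg0
      · rw [hg0, zero_pow hq.ne_zero, norm_zero]
        positivity
      · have hv : (f x).valuation < (g x).valuation := hgv hg0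
        have hv1 : (f x).valuation + 1 ≤ (g x).valuation := hv
        have hng : ‖g x‖ ≤ (p:ℝ)⁻¹ * ‖f x‖ := by
          rw [Padic.norm_eq_zpow_neg_valuation hg0, Padic.norm_eq_zpow_neg_valuation hf]
          have : (p:ℝ) ^ (-(g x).valuation) ≤ (p:ℝ) ^ (-((f x).valuation + 1)) :=
            zpow_le_zpow_right₀ hp1.le (by omega)
          calc (p:ℝ) ^ (-(g x).valuation) ≤ (p:ℝ) ^ (-((f x).valuation + 1)) := this
            _ = (p:ℝ)⁻¹ * (p:ℝ) ^ (-(f x).valuation) := by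
                rw [neg_add, zpow_add₀ (ne_of_gt hppos), zpow_neg_one, mul_comm]
        have hq2 : 2 ≤ q := hq.two_le
        have hpq_lt : ((p:ℝ)⁻¹) ^ q < (p:ℝ)⁻¹ := by
          calc ((p:ℝ)⁻¹) ^ q < ((p:ℝ)⁻¹) ^ 1 :=
                pow_lt_pow_right_of_lt_one₀ hpinv0 hpinv1 (by omega)
            _ = (p:ℝ)⁻¹ := pow_one _
        calc ‖(g x) ^ q‖ = ‖g x‖ ^ q := norm_pow _ _
          _ ≤ ((p:ℝ)⁻¹ * ‖f x‖) ^ q := pow_le_pow_left₀ (norm_nonneg _) hng q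
          _ = ((p:ℝ)⁻¹) ^ q * ‖f x‖ ^ q := mul_pow _ _ _
          _ < (p:ℝ)⁻¹ * ‖f x‖ ^ q := by
              exact mul_lt_mul_of_pos_right hpq_lt hfAq
    have hne : ‖(g x) ^ q‖ ≠ ‖(p : ℚ_[p]) * (f x) ^ q‖ := by
      rw [hRnorm]; exact ne_of_lt hglt
    have hlt' : ‖(g x) ^ q‖ < ‖(p : ℚ_[p]) * (f x) ^ q‖ := by
      rw [hRnorm]; exact hglt
    have hhq : ‖(h x) ^ q‖ = (p:ℝ)⁻¹ * ‖f x‖ ^ q := by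
      rw [hx, Padic.add_eq_max_of_ne hne, max_eq_right hlt'.le, hRnorm]
    have hh0 : h x ≠ 0 := by
      intro h0
      rw [h0, zero_pow hq.ne_zero, norm_zero] at hhq
      exact absurd hhq.symm (ne_of_gt (by positivity))
    set m := (h x).valuation with hm
    set n := (f x).valuation with hn
    have hL : ‖(h x) ^ q‖ = (p:ℝ) ^ (-m * (q:ℤ)) := by
      rw [norm_pow, Padic.norm_eq_zpow_neg_valuation hh0, ← hm, ← zpow_natCast ((p:ℝ) ^ (-m)) q,
        ← zpow_mul]
    have hR : (p:ℝ)⁻¹ * ‖f x‖ ^ q = (p:ℝ) ^ (-1 + -n * (q:ℤ)) := by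
      rw [Padic.norm_eq_zpow_neg_valuation hf, ← hn, ← zpow_natCast ((p:ℝ) ^ (-n)) q, ← zpow_mul,
        zpow_add₀ (ne_of_gt hppos), zpow_neg_one]
    have hexp : -m * (q:ℤ) = -1 + -n * (q:ℤ) := by
      apply zpow_right_injective₀ hppos (ne_of_gt hp1)
      show (p:ℝ) ^ (-m * (q:ℤ)) = (p:ℝ) ^ (-1 + -n * (q:ℤ))
      rw [← hL, hhq, hR]
    have hdvd : (q:ℤ) ∣ 1 := ⟨m - n, by linarith⟩
    have hle1 : (q:ℤ) ≤ 1 := Int.le_of_dvd one_pos hdvd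
    have hge2 : (2:ℤ) ≤ (q:ℤ) := by exact_mod_cast hq.two_le
    linarith
end

section
/- Let F be a field of characteristic 0 with a p-valuation v. Then for every x ∈ F, (x^p − x)² − 1 ≠ 0 is guaranteed where needed, the Kochen operator value γ(x) = (1/p)·(x^p − x)/((x^p − x)² − 1) is defined, and v(γ(x)) ≥ 0. -/
section Helpers

variable {F : Type*} [Field F] (O : ValuationSubring F)

lemma memMax_not_isUnit {x : F} (hx : MemMaxIdeal O x) : ¬ IsUnit (⟨x, hx.1⟩ : O) := by
  rintro ⟨u, hu⟩
  have h0 : ((u : O) * ((u⁻¹ : Oˣ) : O)) = (1 : O) := by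
    rw [← Units.val_mul, mul_inv_cancel, Units.val_one]
  have h1 : ((u : O) : F) * (((u⁻¹ : Oˣ) : O) : F) = 1 := by
    exact_mod_cast congrArg (fun t : O => (t : F)) h0
  rw [hu] at h1
  rcases hx.2 with h0 | hinv
  · simp [h0] at h1
  · exact hinv (by rw [inv_eq_of_mul_eq_one_right h1]; exact ((u⁻¹ : Oˣ) : O).2)

lemma memMax_mem_maximalIdeal {x : F} (hx : MemMaxIdeal O x) :
    (⟨x, hx.1⟩ : O) ∈ IsLocalRing.maximalIdeal O :=
  memMax_not_isUnit O hx

lemma memMax_mul {a b : F} (ha : MemMaxIdeal O a) (hb : b ∈ O) : MemMaxIdeal O (a * b) := by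
  have hmem : a * b ∈ O := mul_mem ha.1 hb
  have : (⟨a * b, hmem⟩ : O) ∈ IsLocalRing.maximalIdeal O := by
    exact Ideal.mul_mem_right ⟨b, hb⟩ _ (memMax_mem_maximalIdeal O ha)
  refine ⟨hmem, ?_⟩
  by_contra hc
  push_neg at hc
  exact this (IsUnit.of_mul_eq_one ⟨(a*b)⁻¹, hc.2⟩ (Subtype.ext (mul_inv_cancel₀ hc.1)))

lemma memMax_add {a b : F} (ha : MemMaxIdeal O a) (hb : MemMaxIdeal O b) :
    MemMaxIdeal O (a + b) := by
  have hmem : a + b ∈ O := add_mem ha.1 hb.1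
  have : (⟨a + b, hmem⟩ : O) ∈ IsLocalRing.maximalIdeal O :=
    Ideal.add_mem _ (memMax_mem_maximalIdeal O ha) (memMax_mem_maximalIdeal O hb)
  refine ⟨hmem, ?_⟩
  by_contra hc
  push_neg at hc
  exact this (IsUnit.of_mul_eq_one ⟨(a+b)⁻¹, hc.2⟩ (Subtype.ext (mul_inv_cancel₀ hc.1)))

lemma memMax_neg {a : F} (ha : MemMaxIdeal O a) : MemMaxIdeal O (-a) := by
  have := memMax_mul O ha (neg_mem (one_mem O))
  simpa using this

lemma one_sub_memMax_unit {a : F} (ha : MemMaxIdeal O a) :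
    (1 - a) ≠ 0 ∧ (1 - a)⁻¹ ∈ O := by
  have h := IsLocalRing.isUnit_one_sub_self_of_mem_nonunits (⟨a, ha.1⟩ : O) (memMax_not_isUnit O ha)
  obtain ⟨u, hu⟩ := h
  have h0 : ((u : O) * ((u⁻¹ : Oˣ) : O)) = (1 : O) := by
    rw [← Units.val_mul, mul_inv_cancel, Units.val_one]
  have h1 : ((u : O) : F) * (((u⁻¹ : Oˣ) : O) : F) = 1 := by
    exact_mod_cast congrArg (fun t : O => (t : F)) h0
  rw [hu] at h1
  have hcoe : (((1 - ⟨a, ha.1⟩ : O)) : F) = 1 - a := rfl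
  rw [hcoe] at h1
  have hne : (1 - a) ≠ 0 := by
    intro h0; rw [h0, zero_mul] at h1; exact zero_ne_one h1
  exact ⟨hne, by rw [inv_eq_of_mul_eq_one_right h1]; exact ((u⁻¹ : Oˣ) : O).2⟩

end Helpers

lemma memMax_pow {F : Type*} [Field F] (O : ValuationSubring F) {a : F}
    (ha : MemMaxIdeal O a) {k : ℕ} (hk : k ≠ 0) : MemMaxIdeal O (a ^ k) := by
  obtain ⟨j, rfl⟩ := Nat.exists_eq_succ_of_ne_zero hk
  rw [pow_succ']
  exact memMax_mul O ha (pow_mem ha.1 j)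

theorem stmt_19 (p : ℕ) (hp : p.Prime) {F : Type*} [Field F] [CharZero F]
    (O : ValuationSubring F) (hO : IsPValuationRing p O) :
    ∀ x : F, ((x ^ p - x) ^ 2 - 1 ≠ 0) ∧
      (1 / (p : F)) * (x ^ p - x) / ((x ^ p - x) ^ 2 - 1) ∈ O := by
  haveI : Fact p.Prime := ⟨hp⟩
  obtain ⟨hpmax, hdiv, hres⟩ := hO
  have hp0 : (p : F) ≠ 0 := Nat.cast_ne_zero.mpr hp.ne_zero
  intro x
  by_cases hxO : x ∈ O
  · -- x ∈ O : then x^p - x is in the maximal ideal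
    obtain ⟨n, hn⟩ := hres x hxO
    -- p ∣ n^p - n
    have hfermat : ∃ k : ℤ, ((n : ℕ) : ℤ) ^ p - ((n : ℕ) : ℤ) = p * k := by
      have h1 : ((((n : ℕ) : ℤ) ^ p - ((n : ℕ) : ℤ) : ℤ) : ZMod p) = 0 := by
        push_cast
        rw [ZMod.pow_card]
        ring
      obtain ⟨k, hk⟩ := (ZMod.intCast_zmod_eq_zero_iff_dvd _ _).mp h1
      exact ⟨k, by exact_mod_cast hk⟩
    obtain ⟨k, hk⟩ := hfermat
    have hnp : MemMaxIdeal O (((n : ℕ) : F) ^ p - ((n : ℕ) : F)) := by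
      have : (((n : ℕ) : F) ^ p - ((n : ℕ) : F)) = (p : F) * (k : F) := by
        have := congrArg (fun t : ℤ => (t : F)) hk
        push_cast at this
        exact this
      rw [this]
      exact memMax_mul O hpmax (intCast_mem O k)
    -- geometric sum factorization
    set S : F := ∑ i ∈ Finset.range p, x ^ i * ((n : ℕ) : F) ^ (p - 1 - i) with hS
    have hSmem : S ∈ O := by
      refine sum_mem fun i _ => ?_
      exact mul_mem (pow_mem hxO i) (pow_mem (natCast_mem O (n : ℕ)) _)
    have hgeom : S * (x - ((n : ℕ) : F)) = x ^ p - ((n : ℕ) : F) ^ p :=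
      geom_sum₂_mul x ((n : ℕ) : F) p
    have hy : MemMaxIdeal O (x ^ p - x) := by
      have key : x ^ p - x =
          (x - ((n : ℕ) : F)) * S + (-(x - ((n : ℕ) : F))) +
            (((n : ℕ) : F) ^ p - ((n : ℕ) : F)) := by
        linear_combination -hgeom
      rw [key]
      exact memMax_add O (memMax_add O (memMax_mul O hn hSmem) (memMax_neg O hn)) hnp
    have hyd : (x ^ p - x) / (p : F) ∈ O := hdiv _ hy
    have hy2 : MemMaxIdeal O ((x ^ p - x) ^ 2) := memMax_pow O hy two_ne_zero
    obtain ⟨hne, hinv⟩ := one_sub_memMax_unit O hy2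
    have hden : (x ^ p - x) ^ 2 - 1 ≠ 0 := fun h => hne (by linear_combination -h)
    refine ⟨hden, ?_⟩
    have heq : (1 / (p : F)) * (x ^ p - x) / ((x ^ p - x) ^ 2 - 1) =
        ((x ^ p - x) / (p : F)) * (-(1 - (x ^ p - x) ^ 2)⁻¹) := by
      rw [show (1 - (x ^ p - x) ^ 2)⁻¹ = -((x ^ p - x) ^ 2 - 1)⁻¹ by
        rw [show (1 - (x ^ p - x) ^ 2) = -((x ^ p - x) ^ 2 - 1) by ring, inv_neg]]
      field_simp
    rw [heq]
    exact mul_mem hyd (neg_mem hinv)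
  · -- x ∉ O : then u = x⁻¹ is in the maximal ideal
    have hu : x⁻¹ ∈ O := (O.mem_or_inv_mem x).resolve_left hxO
    have hx0 : x ≠ 0 := fun h => hxO (h ▸ zero_mem O)
    have huM : MemMaxIdeal O x⁻¹ := ⟨hu, Or.inr (by rwa [inv_inv])⟩
    have hup : x⁻¹ / (p : F) ∈ O := hdiv _ huM
    obtain ⟨q, rfl⟩ : ∃ q, p = q + 1 := ⟨p - 1, (Nat.succ_pred_eq_of_pos hp.pos).symm⟩
    have hq0 : q ≠ 0 := by
      rintro rfl
      exact Nat.Prime.one_lt hp |>.ne' rfl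
    set u : F := x⁻¹ with hudef
    set s : F := u ^ q + u ^ q + (-(u ^ (2 * q))) + u ^ (2 * q + 2) with hsdef
    have hsM : MemMaxIdeal O s := by
      refine memMax_add O (memMax_add O (memMax_add O ?_ ?_) ?_) ?_
      · exact memMax_pow O huM hq0
      · exact memMax_pow O huM hq0
      · exact memMax_neg O (memMax_pow O huM (by positivity))
      · exact memMax_pow O huM (by positivity)
    obtain ⟨w, hwdef, hwne, hwinv⟩ : ∃ w : F, w = 1 - s ∧ w ≠ 0 ∧ w⁻¹ ∈ O :=
      ⟨1 - s, rfl, (one_sub_memMax_unit O hsM).1, (one_sub_memMax_unit O hsM).2⟩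
    have hden : (x ^ (q + 1) - x) ^ 2 - 1 = x ^ (2 * q + 2) * w := by
      rw [hwdef, hsdef, hudef]
      simp only [inv_pow]
      field_simp
      ring
    have hdne : (x ^ (q + 1) - x) ^ 2 - 1 ≠ 0 := by
      rw [hden]
      exact mul_ne_zero (pow_ne_zero _ hx0) hwne
    refine ⟨hdne, ?_⟩
    have heq : (1 / ((q + 1 : ℕ) : F)) * (x ^ (q + 1) - x) / ((x ^ (q + 1) - x) ^ 2 - 1) =
        (u ^ q * (u / ((q + 1 : ℕ) : F))) * ((1 - u ^ q) * w⁻¹) := by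
      have hq1 : ((q : F) + 1) ≠ 0 := by exact_mod_cast hp0
      rw [hden, hudef, div_eq_iff (mul_ne_zero (pow_ne_zero _ hx0) hwne)]
      rw [inv_pow, mul_comm ((x ^ q)⁻¹) _, mul_assoc, ← mul_assoc]
      field_simp
      ring
    rw [heq]
    exact mul_mem (mul_mem (pow_mem hu q) hup)
      (mul_mem (sub_mem (one_mem O) (pow_mem hu q)) hwinv)
end
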